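/- arXiv:2411.09142 — 12 statements merged into one kernel-verified Lean document; each statement's English description precedes it below -/
import Mathlib

section
/- For all probability measures P and Q on a measurable space Ω and every ε ∈ ℝ, the privacy profiles satisfy the reversal identity δ_{Q|P}(ε) = 1 − e^ε + e^ε · δ_{P|Q}(−ε). -/
open MeasureTheory

/-- The privacy profile `δ_{P|Q}(ε) := sup { P(S) − e^ε · Q(S) : S measurable }`. -/
noncomputable def privProfile {Ω : Type*} [MeasurableSpace Ω]
    (P Q : Measure Ω) (ε : ℝ) : ℝ :=
  ⨆ S : {S : Set Ω // MeasurableSet S}, ((P S.1).toReal - Real.exp ε * (Q S.1).toReal)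

theorem privProfile_reversal {Ω : Type*} [MeasurableSpace Ω]
    (P Q : Measure Ω) [IsProbabilityMeasure P] [IsProbabilityMeasure Q] (ε : ℝ) :
    privProfile Q P ε = 1 - Real.exp ε + Real.exp ε * privProfile P Q (-ε) := by
  haveI : Nonempty {S : Set Ω // MeasurableSet S} := ⟨⟨∅, MeasurableSet.empty⟩⟩
  set a := Real.exp ε with ha
  set f : {S : Set Ω // MeasurableSet S} → ℝ :=
    fun S => (P S.1).toReal - Real.exp (-ε) * (Q S.1).toReal with hf
  have hle1 : ∀ (μ : Measure Ω) [IsProbabilityMeasure μ] (s : Set Ω), (μ s).toReal ≤ 1 := by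
    intro μ _ s
    have := ENNReal.toReal_mono (by simp) (prob_le_one (μ := μ) (s := s))
    simpa using this
  have hbdd : BddAbove (Set.range f) := by
    refine ⟨1, ?_⟩
    rintro _ ⟨S, rfl⟩
    have h1 := hle1 P S.1
    have h2 : 0 ≤ Real.exp (-ε) * (Q S.1).toReal :=
      mul_nonneg (Real.exp_pos _).le ENNReal.toReal_nonneg
    simp only [hf]; linarith
  have hcompl : ∀ (μ : Measure Ω) [IsProbabilityMeasure μ] (S : {S : Set Ω // MeasurableSet S}),
      (μ S.1ᶜ).toReal = 1 - (μ S.1).toReal := by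
    intro μ _ S
    rw [prob_compl_eq_one_sub S.2, ENNReal.toReal_sub_of_le (prob_le_one) (by simp)]
    simp
  have hexp : Real.exp ε * Real.exp (-ε) = 1 := by
    rw [← Real.exp_add]; simp
  have key : ∀ S : {S : Set Ω // MeasurableSet S},
      (Q S.1).toReal - Real.exp ε * (P S.1).toReal
        = 1 - a + a * f ⟨S.1ᶜ, S.2.compl⟩ := by
    intro S
    have hP := hcompl P S
    have hQ := hcompl Q S
    simp only [hf, ha]
    rw [show ((P (⟨S.1ᶜ, S.2.compl⟩ : {S : Set Ω // MeasurableSet S}).1).toReal) = (P S.1ᶜ).toReal from rfl,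
      hP, hQ]
    linear_combination (1 - (Q S.1).toReal) * hexp
  have hre : ∀ g : {S : Set Ω // MeasurableSet S} → ℝ, BddAbove (Set.range g) →
      (⨆ S : {S : Set Ω // MeasurableSet S}, g ⟨S.1ᶜ, S.2.compl⟩) = ⨆ S, g S := by
    intro g hg
    have hg2 : BddAbove (Set.range fun S : {S : Set Ω // MeasurableSet S} =>
        g ⟨S.1ᶜ, S.2.compl⟩) := by
      obtain ⟨c, hc⟩ := hg
      exact ⟨c, by rintro _ ⟨S, rfl⟩; exact hc ⟨_, rfl⟩⟩
    apply le_antisymm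
    · exact ciSup_le fun S => le_ciSup hg ⟨S.1ᶜ, S.2.compl⟩
    · refine ciSup_le fun S => ?_
      have hS : g S = g ⟨S.1ᶜᶜ, S.2.compl.compl⟩ := by
        congr 1; exact Subtype.ext (compl_compl _).symm
      rw [hS]
      exact le_ciSup hg2 ⟨S.1ᶜ, S.2.compl⟩
  have hgbdd : BddAbove (Set.range fun S : {S : Set Ω // MeasurableSet S} =>
      1 - a + a * f S) := by
    obtain ⟨c, hc⟩ := hbdd
    refine ⟨1 - a + a * c, ?_⟩
    rintro _ ⟨S, rfl⟩
    have := mul_le_mul_of_nonneg_left (hc ⟨S, rfl⟩) (Real.exp_pos ε).le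
    simp only [ha] at this ⊢
    linarith
  calc privProfile Q P ε
      = ⨆ S : {S : Set Ω // MeasurableSet S}, (1 - a + a * f ⟨S.1ᶜ, S.2.compl⟩) := by
        unfold privProfile; exact iSup_congr key
    _ = ⨆ S, (1 - a + a * f S) := hre (fun S => 1 - a + a * f S) hgbdd
    _ = 1 - a + a * ⨆ S, f S := by
        rw [Real.mul_iSup_of_nonneg (Real.exp_pos ε).le]
        have hbdd' : BddAbove (Set.range fun S => a * f S) := by
          obtain ⟨c, hc⟩ := hbdd
          refine ⟨a * c, ?_⟩
          rintro _ ⟨S, rfl⟩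
          exact mul_le_mul_of_nonneg_left (hc ⟨S, rfl⟩) (Real.exp_pos ε).le
        exact (add_ciSup hbdd' (1 - a)).symm
    _ = 1 - Real.exp ε + Real.exp ε * privProfile P Q (-ε) := rfl
end

section
/- For all probability measures P and Q on a measurable space Ω and every β ∈ [0,1], the left-continuous inverse of the trade-off function satisfies f_{P|Q}^{−1}(β) := inf { α ∈ [0,1] : f_{P|Q}(α) ≤ β } = f_{Q|P}(β); that is, inverting the trade-off curve exchanges the roles of P and Q. -/
open MeasureTheory

/-- The trade-off function `f_{P|Q}(α) := inf { 1 − ∫ φ dQ : φ measurable, 0 ≤ φ ≤ 1, ∫ φ dP ≤ α }`. -/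
noncomputable def tradeOff {Ω : Type*} [MeasurableSpace Ω]
    (P Q : Measure Ω) (α : ℝ) : ℝ :=
  sInf {β : ℝ | ∃ φ : Ω → ℝ, Measurable φ ∧ (∀ x, φ x ∈ Set.Icc (0 : ℝ) 1) ∧
    (∫ x, φ x ∂P) ≤ α ∧ β = 1 - ∫ x, φ x ∂Q}

section Aux

variable {Ω : Type*} [MeasurableSpace Ω]

lemma integrable_of_Icc (P : Measure Ω) [IsProbabilityMeasure P] {φ : Ω → ℝ}
    (hm : Measurable φ) (hb : ∀ x, φ x ∈ Set.Icc (0 : ℝ) 1) : Integrable φ P :=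
  (integrable_const (1 : ℝ)).mono' hm.aestronglyMeasurable
    (Filter.Eventually.of_forall fun x => by
      rw [Real.norm_eq_abs, abs_le]
      exact ⟨by linarith [(hb x).1], (hb x).2⟩)

lemma integral_mem_Icc (P : Measure Ω) [IsProbabilityMeasure P] {φ : Ω → ℝ}
    (hm : Measurable φ) (hb : ∀ x, φ x ∈ Set.Icc (0 : ℝ) 1) :
    ∫ x, φ x ∂P ∈ Set.Icc (0 : ℝ) 1 := by
  constructor
  · exact integral_nonneg fun x => (hb x).1
  · calc ∫ x, φ x ∂P ≤ ∫ _, (1 : ℝ) ∂P :=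
          integral_mono (integrable_of_Icc P hm hb) (integrable_const 1) fun x => (hb x).2
    _ = 1 := by simp

lemma integral_one_sub (P : Measure Ω) [IsProbabilityMeasure P] {φ : Ω → ℝ}
    (hm : Measurable φ) (hb : ∀ x, φ x ∈ Set.Icc (0 : ℝ) 1) :
    ∫ x, (1 - φ x) ∂P = 1 - ∫ x, φ x ∂P := by
  rw [integral_sub (integrable_const 1) (integrable_of_Icc P hm hb)]
  simp

lemma tradeOff_bddBelow (P Q : Measure Ω) [IsProbabilityMeasure Q] (α : ℝ) :
    BddBelow {β : ℝ | ∃ φ : Ω → ℝ, Measurable φ ∧ (∀ x, φ x ∈ Set.Icc (0 : ℝ) 1) ∧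
      (∫ x, φ x ∂P) ≤ α ∧ β = 1 - ∫ x, φ x ∂Q} := by
  refine ⟨0, fun b hb => ?_⟩
  obtain ⟨φ, hm, hbnd, _, rfl⟩ := hb
  linarith [(integral_mem_Icc Q hm hbnd).2]

lemma tradeOff_le (P Q : Measure Ω) [IsProbabilityMeasure Q] {α : ℝ} {φ : Ω → ℝ}
    (hm : Measurable φ) (hb : ∀ x, φ x ∈ Set.Icc (0 : ℝ) 1) (hP : (∫ x, φ x ∂P) ≤ α) :
    tradeOff P Q α ≤ 1 - ∫ x, φ x ∂Q :=
  csInf_le (tradeOff_bddBelow P Q α) ⟨φ, hm, hb, hP, rfl⟩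

lemma tradeOff_set_nonempty (P Q : Measure Ω) [IsProbabilityMeasure P] {α : ℝ} (hα : 0 ≤ α) :
    {β : ℝ | ∃ φ : Ω → ℝ, Measurable φ ∧ (∀ x, φ x ∈ Set.Icc (0 : ℝ) 1) ∧
      (∫ x, φ x ∂P) ≤ α ∧ β = 1 - ∫ x, φ x ∂Q}.Nonempty :=
  ⟨1 - ∫ x, (0:ℝ) ∂Q, fun _ => 0, measurable_const, fun _ => ⟨le_refl 0, zero_le_one⟩,
    by simpa using hα, rfl⟩

end Aux

theorem tradeOff_inverse {Ω : Type*} [MeasurableSpace Ω]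
    (P Q : Measure Ω) [IsProbabilityMeasure P] [IsProbabilityMeasure Q]
    (β : ℝ) (hβ : β ∈ Set.Icc (0 : ℝ) 1) :
    sInf {α : ℝ | α ∈ Set.Icc (0 : ℝ) 1 ∧ tradeOff P Q α ≤ β} = tradeOff Q P β := by
  obtain ⟨hβ0, hβ1⟩ := hβ
  have hSbdd : BddBelow {α : ℝ | α ∈ Set.Icc (0 : ℝ) 1 ∧ tradeOff P Q α ≤ β} :=
    ⟨0, fun x hx => hx.1.1⟩
  apply le_antisymm
  · -- sInf S ≤ tradeOff Q P β
    refine le_csInf (tradeOff_set_nonempty Q P hβ0) ?_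
    rintro b ⟨ψ, hψm, hψb, hψQ, rfl⟩
    have hmem := integral_mem_Icc P hψm hψb
    refine csInf_le hSbdd ⟨⟨by linarith [hmem.2], by linarith [hmem.1]⟩, ?_⟩
    have hφm : Measurable (fun x => 1 - ψ x) := measurable_const.sub hψm
    have hφb : ∀ x, (1 : ℝ) - ψ x ∈ Set.Icc (0:ℝ) 1 := fun x =>
      ⟨by linarith [(hψb x).2], by linarith [(hψb x).1]⟩
    have h := tradeOff_le P Q hφm hφb (le_of_eq (integral_one_sub P hψm hψb))
    rw [integral_one_sub Q hψm hψb] at h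
    linarith
  · -- tradeOff Q P β ≤ sInf S
    have hSne : {α : ℝ | α ∈ Set.Icc (0 : ℝ) 1 ∧ tradeOff P Q α ≤ β}.Nonempty := by
      refine ⟨1, ⟨zero_le_one, le_refl 1⟩, ?_⟩
      have h := tradeOff_le P Q (α := (1:ℝ)) (φ := fun _ => (1:ℝ)) measurable_const
        (fun _ => ⟨zero_le_one, le_refl 1⟩) (by simp)
      simp at h
      linarith
    refine le_csInf hSne ?_
    rintro α ⟨⟨hα0, hα1⟩, hTO⟩
    rcases eq_or_lt_of_le hβ0 with hβz | hβpos
    · -- case β = 0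
      have hβz : β = 0 := hβz.symm
      have hex : ∀ k : ℕ, ∃ φ : Ω → ℝ, Measurable φ ∧ (∀ x, φ x ∈ Set.Icc (0 : ℝ) 1) ∧
          (∫ x, φ x ∂P) ≤ α ∧ 1 - ∫ x, φ x ∂Q < (1/4 : ℝ)^k := by
        intro k
        have hlt : tradeOff P Q α < (1/4 : ℝ)^k := by
          have : (0:ℝ) < (1/4 : ℝ)^k := by positivity
          rw [hβz] at hTO; linarith
        obtain ⟨b, ⟨φ, hm, hb, hP, rfl⟩, hblt⟩ :=
          exists_lt_of_csInf_lt (tradeOff_set_nonempty P Q hα0) hlt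
        exact ⟨φ, hm, hb, hP, hblt⟩
      choose φ hm hb hP hQ using hex
      set A : ℕ → Set Ω := fun N => {x | (1/2 : ℝ)^N ≤ 1 - φ N x} with hA
      have hAmeas : ∀ N, MeasurableSet (A N) :=
        fun N => measurableSet_le measurable_const (measurable_const.sub (hm N))
      have hχm : ∀ N, Measurable (fun x => 1 - φ N x) :=
        fun N => measurable_const.sub (hm N)
      have hχb : ∀ N x, (1:ℝ) - φ N x ∈ Set.Icc (0:ℝ) 1 := fun N x =>
        ⟨by linarith [(hb N x).2], by linarith [(hb N x).1]⟩
      have hQA : ∀ k, (Q (A k)).toReal ≤ (1/2 : ℝ)^k := by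
        intro k
        have hmar := mul_meas_ge_le_integral_of_nonneg (μ := Q)
          (f := fun x => 1 - φ k x)
          (Filter.Eventually.of_forall fun x => (hχb k x).1)
          (integrable_of_Icc Q (hχm k) (hχb k)) ((1/2 : ℝ)^k)
        have hQint : ∫ x, (1 - φ k x) ∂Q = 1 - ∫ x, φ k x ∂Q := integral_one_sub Q (hm k) (hb k)
        rw [hQint] at hmar
        have hk4 : (1/4 : ℝ)^k = (1/2:ℝ)^k * (1/2:ℝ)^k := by
          rw [← mul_pow]; norm_num
        have hpos : (0:ℝ) < (1/2:ℝ)^k := by positivity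
        nlinarith [hQ k, (show (1/2:ℝ)^k * (Q (A k)).toReal ≤ 1 - ∫ x, φ k x ∂Q from hmar)]
      have hPA : ∀ k, 1 - α - (1/2 : ℝ)^k ≤ (P (A k)).toReal := by
        intro k
        have hpt : ∀ x, (1:ℝ) - φ k x ≤ (1/2:ℝ)^k + (A k).indicator (fun _ => (1:ℝ)) x := by
          intro x
          by_cases hx : x ∈ A k
          · rw [Set.indicator_of_mem hx]
            have := (hχb k x).2
            have hpos : (0:ℝ) < (1/2:ℝ)^k := by positivity
            linarith
          · rw [Set.indicator_of_notMem hx]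
            have hlt : ¬ ((1/2:ℝ)^k ≤ 1 - φ k x) := hx
            push_neg at hlt
            linarith
        have hintind : Integrable ((A k).indicator (fun _ => (1:ℝ))) P :=
          (integrable_const (1:ℝ)).indicator (hAmeas k)
        have hmono : ∫ x, (1 - φ k x) ∂P ≤
            ∫ x, ((1/2:ℝ)^k + (A k).indicator (fun _ => (1:ℝ)) x) ∂P :=
          integral_mono (integrable_of_Icc P (hχm k) (hχb k))
            ((integrable_const _).add hintind) hpt
        rw [integral_one_sub P (hm k) (hb k), integral_add (integrable_const _) hintind,
          integral_const, integral_indicator_const (1:ℝ) (hAmeas k)] at hmono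
        simp only [measureReal_def, measure_univ, ENNReal.toReal_one, smul_eq_mul, one_smul, mul_one] at hmono
        linarith [hP k]
      set U : ℕ → Set Ω := fun N => ⋃ k, A (N + k) with hU
      have hUmeas : ∀ N, MeasurableSet (U N) := fun N => MeasurableSet.iUnion fun k => hAmeas _
      have hUanti : Antitone U := by
        intro m n hmn
        refine Set.iUnion_subset fun k => ?_
        have he : n + k = m + (n - m + k) := by omega
        rw [he]
        exact Set.subset_iUnion (fun j => A (m + j)) (n - m + k)
      set B : Set Ω := ⋂ N, U N with hB
      have hBmeas : MeasurableSet B := MeasurableSet.iInter fun N => hUmeas N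
      have hQB : (Q B).toReal ≤ 0 := by
        have hbound : ∀ N : ℕ, (Q B).toReal ≤ 2 * (1/2:ℝ)^N := by
          intro N
          have h1 : Q B ≤ Q (U N) := measure_mono (Set.iInter_subset U N)
          have h2 : Q (U N) ≤ ∑' k, Q (A (N + k)) := measure_iUnion_le _
          have h3 : ∀ k : ℕ, Q (A (N + k)) ≤ ENNReal.ofReal ((1/2:ℝ)^(N + k)) := by
            intro k
            rw [ENNReal.le_ofReal_iff_toReal_le (measure_ne_top Q _) (by positivity)]
            exact hQA (N + k)
          have hsummable : Summable (fun k : ℕ => (1/2:ℝ)^(N + k)) := by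
            simp_rw [pow_add]
            exact (summable_geometric_of_lt_one (by norm_num) (by norm_num)).mul_left _
          have h4 : ∑' k, Q (A (N + k)) ≤ ∑' k, ENNReal.ofReal ((1/2:ℝ)^(N + k)) :=
            ENNReal.tsum_le_tsum h3
          have h5 : ∑' k : ℕ, ENNReal.ofReal ((1/2:ℝ)^(N + k)) =
              ENNReal.ofReal (∑' k : ℕ, (1/2:ℝ)^(N + k)) :=
            (ENNReal.ofReal_tsum_of_nonneg (fun k => by positivity) hsummable).symm
          have h6 : ∑' k : ℕ, (1/2:ℝ)^(N + k) = 2 * (1/2:ℝ)^N := by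
            simp_rw [pow_add]
            rw [tsum_mul_left, tsum_geometric_two]
            ring
          have hfin : Q B ≤ ENNReal.ofReal (2 * (1/2:ℝ)^N) := by
            calc Q B ≤ Q (U N) := h1
              _ ≤ ∑' k, Q (A (N + k)) := h2
              _ ≤ ∑' k, ENNReal.ofReal ((1/2:ℝ)^(N + k)) := h4
              _ = ENNReal.ofReal (2 * (1/2:ℝ)^N) := by rw [h5, h6]
          calc (Q B).toReal ≤ (ENNReal.ofReal (2 * (1/2:ℝ)^N)).toReal :=
                ENNReal.toReal_mono ENNReal.ofReal_ne_top hfin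
            _ = 2 * (1/2:ℝ)^N := ENNReal.toReal_ofReal (by positivity)
        have htend : Filter.Tendsto (fun N : ℕ => 2 * (1/2:ℝ)^N) Filter.atTop (nhds 0) := by
          have := (tendsto_pow_atTop_nhds_zero_of_lt_one (by norm_num : (0:ℝ) ≤ 1/2)
            (by norm_num : (1/2:ℝ) < 1)).const_mul (2:ℝ)
          simpa using this
        exact ge_of_tendsto' htend hbound
      have hPB : 1 - α ≤ (P B).toReal := by
        have htendP : Filter.Tendsto (fun N => (P (U N)).toReal) Filter.atTop
            (nhds (P B).toReal) := by
          have h := tendsto_measure_iInter_atTop (μ := P)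
            (fun N => (hUmeas N).nullMeasurableSet) hUanti ⟨0, measure_ne_top P _⟩
          exact (ENNReal.tendsto_toReal (measure_ne_top P B)).comp h
        have hge : ∀ N : ℕ, 1 - α - (1/2:ℝ)^N ≤ (P (U N)).toReal := by
          intro N
          refine le_trans (hPA N) ?_
          refine ENNReal.toReal_mono (measure_ne_top P _) (measure_mono ?_)
          have he : A N = A (N + 0) := by norm_num
          rw [he]
          exact Set.subset_iUnion (fun k => A (N + k)) 0
        have htend2 : Filter.Tendsto (fun N : ℕ => 1 - α - (1/2:ℝ)^N) Filter.atTop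
            (nhds (1 - α)) := by
          have := tendsto_const_nhds (α := ℕ) (x := (1 - α : ℝ)) |>.sub
            (tendsto_pow_atTop_nhds_zero_of_lt_one (by norm_num : (0:ℝ) ≤ 1/2)
              (by norm_num : (1/2:ℝ) < 1))
          simpa using this
        exact le_of_tendsto_of_tendsto' htend2 htendP hge
      have hψm : Measurable (B.indicator (fun _ => (1:ℝ))) := measurable_const.indicator hBmeas
      have hψb : ∀ x, B.indicator (fun _ => (1:ℝ)) x ∈ Set.Icc (0:ℝ) 1 := by
        intro x
        by_cases hx : x ∈ B
        · rw [Set.indicator_of_mem hx]; exact ⟨zero_le_one, le_refl 1⟩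
        · rw [Set.indicator_of_notMem hx]; exact ⟨le_refl 0, zero_le_one⟩
      have hintQ : ∫ x, B.indicator (fun _ => (1:ℝ)) x ∂Q = (Q B).toReal := by
        rw [integral_indicator_const (1:ℝ) hBmeas]; simp [measureReal_def]
      have hintP : ∫ x, B.indicator (fun _ => (1:ℝ)) x ∂P = (P B).toReal := by
        rw [integral_indicator_const (1:ℝ) hBmeas]; simp [measureReal_def]
      have h := tradeOff_le Q P (α := β) hψm hψb (by rw [hintQ, hβz]; exact hQB)
      rw [hintP] at h
      linarith
    · -- case β > 0
      refine le_of_forall_pos_le_add ?_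
      intro ε hε
      set δ : ℝ := ε * β with hδdef
      have hδ : 0 < δ := mul_pos hε hβpos
      set t : ℝ := δ / (β + δ) with htdef
      have hβδ : 0 < β + δ := by linarith
      have ht0 : 0 ≤ t := div_nonneg hδ.le hβδ.le
      have ht1 : t ≤ 1 := by
        rw [htdef, div_le_one hβδ]; linarith
      have htε : t ≤ ε := by
        rw [htdef, div_le_iff₀ hβδ, hδdef]
        nlinarith
      have hlt : tradeOff P Q α < β + δ := lt_of_le_of_lt hTO (by linarith)
      obtain ⟨b, ⟨φ₀, hm, hbnd, hPint, rfl⟩, hblt⟩ :=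
        exists_lt_of_csInf_lt (tradeOff_set_nonempty P Q hα0) hlt
      set ψ : Ω → ℝ := fun x => (1 - t) * (1 - φ₀ x) with hψ
      have hψm : Measurable ψ := measurable_const.mul (measurable_const.sub hm)
      have hψb : ∀ x, ψ x ∈ Set.Icc (0:ℝ) 1 := by
        intro x
        have h1 := (hbnd x).1
        have h2 := (hbnd x).2
        constructor
        · exact mul_nonneg (by linarith) (by linarith)
        · exact mul_le_one₀ (by linarith) (by linarith) (by linarith)
      have hψQ : ∫ x, ψ x ∂Q = (1 - t) * (1 - ∫ x, φ₀ x ∂Q) := by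
        simp_rw [hψ]
        rw [integral_const_mul, integral_one_sub Q hm hbnd]
      have hψP : ∫ x, ψ x ∂P = (1 - t) * (1 - ∫ x, φ₀ x ∂P) := by
        simp_rw [hψ]
        rw [integral_const_mul, integral_one_sub P hm hbnd]
      have hQ1 : ∫ x, φ₀ x ∂Q ≤ 1 := (integral_mem_Icc Q hm hbnd).2
      have hcon : ∫ x, ψ x ∂Q ≤ β := by
        rw [hψQ]
        have h1t : (1 - t) * (β + δ) = β := by
          rw [htdef]; field_simp; ring
        nlinarith
      have h := tradeOff_le Q P hψm hψb hcon
      rw [hψP] at h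
      nlinarith
end

section
/- Let ν_{P|Q} be the pushforward of P under θ ↦ log(p(θ)/q(θ)) and ν_{Q|P} the pushforward of Q under θ ↦ log(q(θ)/p(θ)). Then for every measurable set A ⊆ ℝ, ν_{P|Q}(A) = ∫_A e^z d ν̃(z), where ν̃ is the reflection of ν_{Q|P} defined by ν̃(A) := ν_{Q|P}(−A); equivalently, in terms of generalized densities, f_Z(z) = e^z · f_{Z′}(−z). -/
open MeasureTheory

theorem pld_reversal {Ω : Type*} [MeasurableSpace Ω]
    (μ : Measure Ω) [SigmaFinite μ]
    (P Q : Measure Ω) [IsProbabilityMeasure P] [IsProbabilityMeasure Q]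
    (f g : Ω → ℝ) (hf : Measurable f) (hg : Measurable g)
    (hf0 : 0 ≤ f) (hg0 : 0 ≤ g)
    (hP : P = μ.withDensity (fun θ => ENNReal.ofReal (f θ)))
    (hQ : Q = μ.withDensity (fun θ => ENNReal.ofReal (g θ)))
    (hac : ∀ᵐ θ ∂μ, (0 < f θ ↔ 0 < g θ))
    (A : Set ℝ) (hA : MeasurableSet A) :
    (P.map (fun θ => Real.log (f θ / g θ))) A
      = ∫⁻ z in A, ENNReal.ofReal (Real.exp z)
          ∂((Q.map (fun θ => Real.log (g θ / f θ))).map (fun z : ℝ => -z)) := by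
  have hL : Measurable (fun θ => Real.log (f θ / g θ)) := (hf.div hg).log
  have hL' : Measurable (fun θ => Real.log (g θ / f θ)) := (hg.div hf).log
  have hmapmap : (Q.map (fun θ => Real.log (g θ / f θ))).map (fun z : ℝ => -z)
      = Q.map (fun θ => Real.log (f θ / g θ)) := by
    rw [Measure.map_map measurable_neg hL']
    congr 1
    funext θ
    simp only [Function.comp_apply]
    rw [← Real.log_inv, inv_div]
  rw [hmapmap, setLIntegral_map hA (by measurability) hL,
    Measure.map_apply hL hA, hP, hQ]
  rw [withDensity_apply _ (hL hA), restrict_withDensity (hL hA),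
    lintegral_withDensity_eq_lintegral_mul _ hg.ennreal_ofReal
      ((by measurability :
        Measurable fun θ => ENNReal.ofReal (Real.exp (Real.log (f θ / g θ)))))]
  refine (lintegral_congr_ae (ae_restrict_of_ae ?_)).symm
  filter_upwards [hac] with θ hθ
  by_cases hgθ : 0 < g θ
  · have hfθ : 0 < f θ := hθ.mpr hgθ
    simp only [Pi.mul_apply]
    rw [Real.exp_log (div_pos hfθ hgθ), ← ENNReal.ofReal_mul (hg0 θ)]
    congr 1
    field_simp
  · have hg0' : g θ = 0 := le_antisymm (not_lt.mp hgθ) (hg0 θ)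
    have hf0' : f θ = 0 := by
      by_contra h
      exact hgθ (hθ.mp (lt_of_le_of_ne (hf0 θ) (Ne.symm h)))
    simp [hg0', hf0']
end

section
/- For every ε ∈ ℝ, the privacy profile satisfies δ_{P|Q}(ε) = ν_{P|Q}((ε, ∞)) − e^ε · ν_{Q|P}((−∞, −ε)); that is, δ_{P|Q}(ε) = Pr[Z > ε] − e^ε · Pr[Z′ < −ε]. -/
open MeasureTheory

theorem privProfile_eq_tail_probs {Ω : Type*} [MeasurableSpace Ω]
    (μ : Measure Ω) [SigmaFinite μ]
    (P Q : Measure Ω) [IsProbabilityMeasure P] [IsProbabilityMeasure Q]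
    (f g : Ω → ℝ) (hf : Measurable f) (hg : Measurable g)
    (hf0 : 0 ≤ f) (hg0 : 0 ≤ g)
    (hP : P = μ.withDensity (fun θ => ENNReal.ofReal (f θ)))
    (hQ : Q = μ.withDensity (fun θ => ENNReal.ofReal (g θ)))
    (hac : ∀ᵐ θ ∂μ, (0 < f θ ↔ 0 < g θ))
    (ε : ℝ) :
    privProfile P Q ε
      = ((P.map (fun θ => Real.log (f θ / g θ))) (Set.Ioi ε)).toReal
        - Real.exp ε * ((Q.map (fun θ => Real.log (g θ / f θ))) (Set.Iio (-ε))).toReal := by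
  have hφm : Measurable fun θ => Real.log (f θ / g θ) := (hf.div hg).log
  have hψm : Measurable fun θ => Real.log (g θ / f θ) := (hg.div hf).log
  set A : Set Ω := (fun θ => Real.log (f θ / g θ)) ⁻¹' Set.Ioi ε with hAdef
  set B : Set Ω := (fun θ => Real.log (g θ / f θ)) ⁻¹' Set.Iio (-ε) with hBdef
  have mA : MeasurableSet A := hφm measurableSet_Ioi
  have mB : MeasurableSet B := hψm measurableSet_Iio
  set A' : Set Ω := {θ | Real.exp ε * g θ < f θ} with hA'def
  have mA' : MeasurableSet A' := measurableSet_lt (measurable_const.mul hg) hf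
  -- integrability of f and g
  have hPuniv : ∫⁻ θ, ENNReal.ofReal (f θ) ∂μ = 1 := by
    have h1 := measure_univ (μ := P)
    rwa [hP, withDensity_apply _ MeasurableSet.univ, Measure.restrict_univ] at h1
  have hQuniv : ∫⁻ θ, ENNReal.ofReal (g θ) ∂μ = 1 := by
    have h1 := measure_univ (μ := Q)
    rwa [hQ, withDensity_apply _ MeasurableSet.univ, Measure.restrict_univ] at h1
  have hfint : Integrable f μ := by
    refine ⟨hf.aestronglyMeasurable, ?_⟩
    rw [hasFiniteIntegral_iff_ofReal (ae_of_all _ fun θ => hf0 θ)]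
    simp [hPuniv]
  have hgint : Integrable g μ := by
    refine ⟨hg.aestronglyMeasurable, ?_⟩
    rw [hasFiniteIntegral_iff_ofReal (ae_of_all _ fun θ => hg0 θ)]
    simp [hQuniv]
  -- toReal of measures as real integrals
  have hPS : ∀ S : Set Ω, MeasurableSet S → (P S).toReal = ∫ θ in S, f θ ∂μ := by
    intro S hS
    rw [hP, withDensity_apply _ hS,
      integral_eq_lintegral_of_nonneg_ae (ae_of_all _ fun θ => hf0 θ)
        hf.aestronglyMeasurable]
  have hQS : ∀ S : Set Ω, MeasurableSet S → (Q S).toReal = ∫ θ in S, g θ ∂μ := by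
    intro S hS
    rw [hQ, withDensity_apply _ hS,
      integral_eq_lintegral_of_nonneg_ae (ae_of_all _ fun θ => hg0 θ)
        hg.aestronglyMeasurable]
  set h : Ω → ℝ := fun θ => f θ - Real.exp ε * g θ with hhdef
  have hhint : Integrable h μ := hfint.sub (hgint.const_mul _)
  have hval : ∀ S : Set Ω, MeasurableSet S →
      (P S).toReal - Real.exp ε * (Q S).toReal = ∫ θ in S, h θ ∂μ := by
    intro S hS
    rw [hPS S hS, hQS S hS, integral_sub hfint.integrableOn
      ((hgint.const_mul _).integrableOn), integral_const_mul]
  -- upper bound: any set's value ≤ value on A'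
  have hub : ∀ S : Set Ω, MeasurableSet S →
      ∫ θ in S, h θ ∂μ ≤ ∫ θ in A', h θ ∂μ := by
    intro S hS
    have hsplit : ∫ θ in S, h θ ∂μ
        = ∫ θ in S ∩ A', h θ ∂μ + ∫ θ in S \ A', h θ ∂μ := by
      have hu : S ∩ A' ∪ S \ A' = S := Set.inter_union_diff S A'
      have hdisj : Disjoint (S ∩ A') (S \ A') := Set.disjoint_left.mpr fun x hx hx' => hx'.2 hx.2
      conv_lhs => rw [← hu]
      exact setIntegral_union hdisj (hS.diff mA') hhint.integrableOn hhint.integrableOn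
    rw [hsplit]
    have h1 : ∫ θ in S \ A', h θ ∂μ ≤ 0 := by
      refine setIntegral_nonpos (hS.diff mA') fun θ hθ => ?_
      have h3 : ¬ Real.exp ε * g θ < f θ := hθ.2
      simp only [hhdef]
      linarith [not_lt.1 h3]
    have h2 : ∫ θ in S ∩ A', h θ ∂μ ≤ ∫ θ in A', h θ ∂μ := by
      refine setIntegral_mono_set hhint.integrableOn ?_
        (ae_of_all _ fun θ hθ => hθ.2)
      refine (ae_restrict_iff' mA').2 (ae_of_all _ fun θ hθ => ?_)
      have h3 : Real.exp ε * g θ < f θ := hθ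
      simp only [hhdef, Pi.zero_apply]
      linarith
    linarith
  -- the supremum equals the value on A'
  have hrange_bdd : BddAbove (Set.range fun S : {S : Set Ω // MeasurableSet S} =>
      (P S.1).toReal - Real.exp ε * (Q S.1).toReal) := by
    refine ⟨∫ θ in A', h θ ∂μ, ?_⟩
    rintro x ⟨S, rfl⟩
    dsimp only
    rw [hval S.1 S.2]
    exact hub S.1 S.2
  have hsup : privProfile P Q ε = ∫ θ in A', h θ ∂μ := by
    refine le_antisymm (ciSup_le fun S => ?_) ?_
    · rw [hval S.1 S.2]; exact hub S.1 S.2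
    · have := le_ciSup hrange_bdd (⟨A', mA'⟩ : {S : Set Ω // MeasurableSet S})
      rwa [hval A' mA'] at this
  -- a.e. equality of indicator integrals
  have eA : ∫ θ in A', f θ ∂μ = ∫ θ in A, f θ ∂μ := by
    rw [← integral_indicator mA', ← integral_indicator mA]
    refine integral_congr_ae ?_
    filter_upwards [hac] with θ hθ
    by_cases hfθ : 0 < f θ
    · have hgθ : 0 < g θ := hθ.mp hfθ
      have hmem : θ ∈ A' ↔ θ ∈ A := by
        simp only [hA'def, hAdef, Set.mem_setOf_eq, Set.mem_preimage, Set.mem_Ioi]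
        rw [Real.lt_log_iff_exp_lt (div_pos hfθ hgθ), lt_div_iff₀ hgθ]
      by_cases hA'θ : θ ∈ A'
      · rw [Set.indicator_of_mem hA'θ, Set.indicator_of_mem (hmem.1 hA'θ)]
      · rw [Set.indicator_of_notMem hA'θ,
          Set.indicator_of_notMem (fun hx => hA'θ (hmem.2 hx))]
    · have hf0' : f θ = 0 := le_antisymm (not_lt.1 hfθ) (hf0 θ)
      have hz1 : A'.indicator f θ = 0 := by
        by_cases hA : θ ∈ A'
        · rw [Set.indicator_of_mem hA, hf0']
        · exact Set.indicator_of_notMem hA f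
      have hz2 : A.indicator f θ = 0 := by
        by_cases hA : θ ∈ A
        · rw [Set.indicator_of_mem hA, hf0']
        · exact Set.indicator_of_notMem hA f
      rw [hz1, hz2]
  have eB : ∫ θ in A', g θ ∂μ = ∫ θ in B, g θ ∂μ := by
    rw [← integral_indicator mA', ← integral_indicator mB]
    refine integral_congr_ae ?_
    filter_upwards [hac] with θ hθ
    by_cases hgθ : 0 < g θ
    · have hfθ : 0 < f θ := hθ.mpr hgθ
      have hmem : θ ∈ A' ↔ θ ∈ B := by
        simp only [hA'def, hBdef, Set.mem_setOf_eq, Set.mem_preimage, Set.mem_Iio]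
        rw [Real.log_div hgθ.ne' hfθ.ne']
        constructor
        · intro hlt
          have : ε < Real.log (f θ / g θ) := by
            rw [Real.lt_log_iff_exp_lt (div_pos hfθ hgθ), lt_div_iff₀ hgθ]
            exact hlt
          rw [Real.log_div hfθ.ne' hgθ.ne'] at this
          linarith
        · intro hlt
          have h2 : ε < Real.log (f θ / g θ) := by
            rw [Real.log_div hfθ.ne' hgθ.ne']
            linarith
          rw [Real.lt_log_iff_exp_lt (div_pos hfθ hgθ), lt_div_iff₀ hgθ] at h2
          exact h2
      by_cases hA'θ : θ ∈ A'
      · rw [Set.indicator_of_mem hA'θ, Set.indicator_of_mem (hmem.1 hA'θ)]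
      · rw [Set.indicator_of_notMem hA'θ,
          Set.indicator_of_notMem (fun hx => hA'θ (hmem.2 hx))]
    · have hg0' : g θ = 0 := le_antisymm (not_lt.1 hgθ) (hg0 θ)
      have hz1 : A'.indicator g θ = 0 := by
        by_cases hA : θ ∈ A'
        · rw [Set.indicator_of_mem hA, hg0']
        · exact Set.indicator_of_notMem hA g
      have hz2 : B.indicator g θ = 0 := by
        by_cases hB : θ ∈ B
        · rw [Set.indicator_of_mem hB, hg0']
        · exact Set.indicator_of_notMem hB g
      rw [hz1, hz2]
  -- put everything together
  rw [Measure.map_apply hφm measurableSet_Ioi, Measure.map_apply hψm measurableSet_Iio,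
    hPS _ mA, hQS _ mB, hsup,
    integral_sub hfint.integrableOn ((hgint.const_mul _).integrableOn),
    integral_const_mul, eA, eB]
end

section
/- Fix ε > 0 and δ ∈ [0,1], and let P = M_RR^{ε,δ}(0) and Q = M_RR^{ε,δ}(1). Then for every t ∈ ℝ, δ_{P|Q}(t) = δ_{Q|P}(t), and this common value equals δ if t > ε; equals 1 − (1−δ)(e^t + 1)/(e^ε + 1) if −ε < t ≤ ε; and equals 1 − e^t(1−δ) if t ≤ −ε. -/
open MeasureTheory

open scoped Classical

/-- Output distribution of the randomized response mechanism `M_RR^{ε,δ}` on input `0`.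
The output space is `Bool × Bool` where the first component encodes the bit `0`/`1`
and the second component encodes `⊥`/`⊤` (as `false`/`true`). -/
noncomputable def MRR0 (ε δ : ℝ) : Measure (Bool × Bool) :=
  ENNReal.ofReal δ • Measure.dirac (false, false)
    + ENNReal.ofReal ((1 - δ) * Real.exp ε / (Real.exp ε + 1)) • Measure.dirac (false, true)
    + ENNReal.ofReal ((1 - δ) / (Real.exp ε + 1)) • Measure.dirac (true, true)

/-- Output distribution of the randomized response mechanism `M_RR^{ε,δ}` on input `1`. -/
noncomputable def MRR1 (ε δ : ℝ) : Measure (Bool × Bool) :=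
  ENNReal.ofReal ((1 - δ) / (Real.exp ε + 1)) • Measure.dirac (false, true)
    + ENNReal.ofReal ((1 - δ) * Real.exp ε / (Real.exp ε + 1)) • Measure.dirac (true, true)
    + ENNReal.ofReal δ • Measure.dirac (true, false)

lemma measSet (S : Set (Bool × Bool)) : MeasurableSet S :=
  S.to_countable.measurableSet

lemma mrr0_apply (ε δ : ℝ) (hδ0 : 0 ≤ δ) (hδ1 : δ ≤ 1) (S : Set (Bool × Bool)) :
    (MRR0 ε δ S).toReal =
      (if (false,false) ∈ S then δ else 0)
      + (if (false,true) ∈ S then (1-δ)*Real.exp ε/(Real.exp ε+1) else 0)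
      + (if (true,true) ∈ S then (1-δ)/(Real.exp ε+1) else 0) := by
  have hS := measSet S
  have hE := (Real.exp_pos ε).le
  have hd : 0 ≤ 1 - δ := by linarith
  have hden : (0:ℝ) ≤ Real.exp ε + 1 := by linarith
  have h1 : 0 ≤ (1-δ)*Real.exp ε/(Real.exp ε+1) := div_nonneg (mul_nonneg hd hE) hden
  have h2 : 0 ≤ (1-δ)/(Real.exp ε+1) := div_nonneg hd hden
  simp only [MRR0, Measure.coe_add, Measure.coe_smul, Pi.add_apply, Pi.smul_apply,
    Measure.dirac_apply' _ hS, Set.indicator_apply, smul_eq_mul]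
  split_ifs <;>
    simp [ENNReal.toReal_add, ENNReal.toReal_ofReal, hδ0, h1, h2]

lemma mrr1_apply (ε δ : ℝ) (hδ0 : 0 ≤ δ) (hδ1 : δ ≤ 1) (S : Set (Bool × Bool)) :
    (MRR1 ε δ S).toReal =
      (if (true,false) ∈ S then δ else 0)
      + (if (true,true) ∈ S then (1-δ)*Real.exp ε/(Real.exp ε+1) else 0)
      + (if (false,true) ∈ S then (1-δ)/(Real.exp ε+1) else 0) := by
  have hS := measSet S
  have hE := (Real.exp_pos ε).le
  have hd : 0 ≤ 1 - δ := by linarith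
  have hden : (0:ℝ) ≤ Real.exp ε + 1 := by linarith
  have h1 : 0 ≤ (1-δ)*Real.exp ε/(Real.exp ε+1) := div_nonneg (mul_nonneg hd hE) hden
  have h2 : 0 ≤ (1-δ)/(Real.exp ε+1) := div_nonneg hd hden
  simp only [MRR1, Measure.coe_add, Measure.coe_smul, Pi.add_apply, Pi.smul_apply,
    Measure.dirac_apply' _ hS, Set.indicator_apply, smul_eq_mul]
  split_ifs <;>
    simp [ENNReal.toReal_add, ENNReal.toReal_ofReal, hδ0, h1, h2] <;> ring

/-- The involution on measurable subsets of `Bool × Bool` given by flipping the first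
coordinate. -/
def flipEquiv : {S : Set (Bool × Bool) // MeasurableSet S} ≃
    {S : Set (Bool × Bool) // MeasurableSet S} where
  toFun S := ⟨(fun p : Bool × Bool => (!p.1, p.2)) ⁻¹' S.1, measSet _⟩
  invFun S := ⟨(fun p : Bool × Bool => (!p.1, p.2)) ⁻¹' S.1, measSet _⟩
  left_inv S := by
    ext ⟨x, y⟩
    simp
  right_inv S := by
    ext ⟨x, y⟩
    simp

theorem rr_privacy_profile (ε δ : ℝ) (hε : 0 < ε) (hδ : δ ∈ Set.Icc (0 : ℝ) 1) (t : ℝ) :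
    privProfile (MRR0 ε δ) (MRR1 ε δ) t = privProfile (MRR1 ε δ) (MRR0 ε δ) t ∧
    privProfile (MRR0 ε δ) (MRR1 ε δ) t =
      (if ε < t then δ
       else if -ε < t then 1 - (1 - δ) * (Real.exp t + 1) / (Real.exp ε + 1)
       else 1 - Real.exp t * (1 - δ)) := by
  obtain ⟨hδ0, hδ1⟩ := hδ
  obtain ⟨E, hEdef⟩ : ∃ E, Real.exp ε = E := ⟨_, rfl⟩
  obtain ⟨T, hTdef⟩ : ∃ T, Real.exp t = T := ⟨_, rfl⟩
  have hE1 : 1 < E := hEdef ▸ Real.one_lt_exp_iff.mpr hε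
  have hEp : (0:ℝ) < E + 1 := by linarith
  have hTp : (0:ℝ) < T := hTdef ▸ Real.exp_pos t
  obtain ⟨u, hu⟩ : ∃ u, (1-δ)/(E+1) = u := ⟨_, rfl⟩
  have hu0 : 0 ≤ u := hu ▸ div_nonneg (by linarith) hEp.le
  have hδu : δ = 1 - u*(E+1) := by rw [← hu]; field_simp; ring
  have hA : (1-δ)*E/(E+1) = u*E := by rw [← hu]; ring
  have hTδ : 0 ≤ T * δ := mul_nonneg hTp.le hδ0
  obtain ⟨R, hR⟩ : ∃ R, R = (if ε < t then δ
       else if -ε < t then 1 - (1 - δ) * (T + 1) / (E + 1)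
       else 1 - T * (1 - δ)) := ⟨_, rfl⟩
  -- the pointwise upper bound
  have hub : ∀ S : {S : Set (Bool × Bool) // MeasurableSet S},
      ((MRR0 ε δ S.1).toReal - T * (MRR1 ε δ S.1).toReal) ≤ R := by
    intro S
    rw [mrr0_apply ε δ hδ0 hδ1, mrr1_apply ε δ hδ0 hδ1, hEdef, hA, hu, hR]
    by_cases h1 : ε < t
    · have hTE : E < T := by rw [← hEdef, ← hTdef]; exact Real.exp_lt_exp.mpr h1
      have hTE1 : 1 < T * E := by nlinarith
      have f1 : 0 ≤ u * (T - E) := mul_nonneg hu0 (by linarith)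
      have f2 : 0 ≤ u * (T * E - 1) := mul_nonneg hu0 (by linarith)
      rw [if_pos h1]
      split_ifs <;> linarith [f1, f2, hTδ, hu0, hδ0]
    · have hTE : T ≤ E := by rw [← hEdef, ← hTdef]; exact Real.exp_le_exp.mpr (not_lt.mp h1)
      by_cases h2 : -ε < t
      · have hTE1 : 1 < T * E := by
          rw [← hTdef, ← hEdef, ← Real.exp_add]
          exact Real.one_lt_exp_iff.mpr (by linarith)
        have f1 : 0 ≤ u * (E - T) := mul_nonneg hu0 (by linarith)
        have f2 : 0 ≤ u * (T * E - 1) := mul_nonneg hu0 (by linarith)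
        have hval : 1 - (1-δ)*(T+1)/(E+1) = 1 - u*(T+1) := by rw [← hu]; ring
        rw [if_neg h1, if_pos h2, hval]
        split_ifs <;> linarith [f1, f2, hTδ, hu0, hδ0, hδu]
      · have hTE1 : T * E ≤ 1 := by
          rw [← hTdef, ← hEdef, ← Real.exp_add]
          exact Real.exp_le_one_iff.mpr (by linarith [not_lt.mp h2])
        have hT1 : T < 1 := by nlinarith [mul_lt_mul_of_pos_left hE1 hTp]
        have f1 : 0 ≤ u * (E - T) := mul_nonneg hu0 (by linarith)
        have f2 : 0 ≤ u * (1 - T * E) := mul_nonneg hu0 (by linarith)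
        have f3 : 0 ≤ u * (1 - T) := mul_nonneg hu0 (by linarith)
        have hTδu : T * (1 - δ) = T * (u * (E + 1)) := by rw [hδu]; ring
        rw [if_neg h1, if_neg h2]
        split_ifs <;> linarith [f1, f2, f3, hTδ, hu0, hδ0, hδu, hTδu]
  -- the bound is attained
  have hex : ∃ S : {S : Set (Bool × Bool) // MeasurableSet S},
      ((MRR0 ε δ S.1).toReal - T * (MRR1 ε δ S.1).toReal) = R := by
    by_cases h1 : ε < t
    · refine ⟨⟨{(false,false)}, measSet _⟩, ?_⟩
      rw [mrr0_apply ε δ hδ0 hδ1, mrr1_apply ε δ hδ0 hδ1, hEdef, hA, hu, hR, if_pos h1]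
      simp only [Set.mem_singleton_iff, Prod.mk.injEq]
      norm_num
    · by_cases h2 : -ε < t
      · refine ⟨⟨{(false,false),(false,true)}, measSet _⟩, ?_⟩
        rw [mrr0_apply ε δ hδ0 hδ1, mrr1_apply ε δ hδ0 hδ1, hEdef, hA, hu, hR,
          if_neg h1, if_pos h2]
        have hval : 1 - (1-δ)*(T+1)/(E+1) = 1 - u*(T+1) := by rw [← hu]; ring
        rw [hval]
        simp only [Set.mem_insert_iff, Set.mem_singleton_iff, Prod.mk.injEq]
        norm_num
        linear_combination hδu
      · refine ⟨⟨{(false,false),(false,true),(true,true)}, measSet _⟩, ?_⟩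
        rw [mrr0_apply ε δ hδ0 hδ1, mrr1_apply ε δ hδ0 hδ1, hEdef, hA, hu, hR,
          if_neg h1, if_neg h2]
        simp only [Set.mem_insert_iff, Set.mem_singleton_iff, Prod.mk.injEq]
        norm_num
        linear_combination (1 - T) * hδu
  obtain ⟨S0, hS0⟩ := hex
  have hbdd : BddAbove (Set.range fun S : {S : Set (Bool × Bool) // MeasurableSet S} =>
      ((MRR0 ε δ S.1).toReal - T * (MRR1 ε δ S.1).toReal)) := by
    refine ⟨R, ?_⟩
    rintro x ⟨S, rfl⟩
    exact hub S
  have hP : privProfile (MRR0 ε δ) (MRR1 ε δ) t = R := by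
    rw [privProfile]
    simp only [hTdef]
    refine le_antisymm (ciSup_le hub) ?_
    calc R = (MRR0 ε δ S0.1).toReal - T * (MRR1 ε δ S0.1).toReal := hS0.symm
      _ ≤ _ := le_ciSup hbdd S0
  -- the symmetric profile
  have hpt : ∀ S : {S : Set (Bool × Bool) // MeasurableSet S},
      ((MRR1 ε δ (flipEquiv S).1).toReal - T * (MRR0 ε δ (flipEquiv S).1).toReal)
        = (MRR0 ε δ S.1).toReal - T * (MRR1 ε δ S.1).toReal := by
    intro S
    rw [mrr0_apply ε δ hδ0 hδ1, mrr1_apply ε δ hδ0 hδ1,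
      mrr0_apply ε δ hδ0 hδ1, mrr1_apply ε δ hδ0 hδ1]
    simp only [flipEquiv, Equiv.coe_fn_mk, Set.mem_preimage, Bool.not_true, Bool.not_false]
    try ring
  have hubQ : ∀ S : {S : Set (Bool × Bool) // MeasurableSet S},
      ((MRR1 ε δ S.1).toReal - T * (MRR0 ε δ S.1).toReal) ≤ R := by
    intro S
    have h := hpt (flipEquiv.symm S)
    rw [Equiv.apply_symm_apply] at h
    rw [h]
    exact hub _
  have hbddQ : BddAbove (Set.range fun S : {S : Set (Bool × Bool) // MeasurableSet S} =>
      ((MRR1 ε δ S.1).toReal - T * (MRR0 ε δ S.1).toReal)) := by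
    refine ⟨R, ?_⟩
    rintro x ⟨S, rfl⟩
    exact hubQ S
  have hQ : privProfile (MRR1 ε δ) (MRR0 ε δ) t = R := by
    rw [privProfile]
    simp only [hTdef]
    refine le_antisymm (ciSup_le hubQ) ?_
    calc R = (MRR0 ε δ S0.1).toReal - T * (MRR1 ε δ S0.1).toReal := hS0.symm
      _ = (MRR1 ε δ (flipEquiv S0).1).toReal - T * (MRR0 ε δ (flipEquiv S0).1).toReal :=
          (hpt S0).symm
      _ ≤ _ := le_ciSup hbddQ (flipEquiv S0)
  refine ⟨hP.trans hQ.symm, hP.trans ?_⟩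
  rw [hR, hEdef, hTdef]
end

section
/- Let (P₁, Q₁) and (P₂, Q₂) be two pairs of probability measures, each pair mutually absolutely continuous. If δ_{P₁|Q₁}(ε) ≤ δ_{P₂|Q₂}(ε) for all ε ∈ ℝ, then for every real q > 1 such that both functions t ↦ e^{(q−1)t} δ_{P₁|Q₁}(t) and t ↦ e^{(q−1)t} δ_{P₂|Q₂}(t) are integrable on ℝ, one has R_q(P₁‖Q₁) ≤ R_q(P₂‖Q₂). -/
open MeasureTheory Real Set

lemma integrable_of_density {Ω : Type*} [MeasurableSpace Ω] {μ : Measure Ω}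
    {f : Ω → ℝ} (hf : Measurable f) (hf0 : 0 ≤ f)
    (hf1 : ∫⁻ θ, ENNReal.ofReal (f θ) ∂μ = 1) : Integrable f μ := by
  refine ⟨hf.aestronglyMeasurable, ?_⟩
  have : ∫⁻ θ, (‖f θ‖₊ : ENNReal) ∂μ = 1 := by
    rw [← hf1]; congr 1; ext θ
    rw [← Real.enorm_eq_ofReal (hf0 θ)]
    exact (enorm_eq_nnnorm _).symm
  show (∫⁻ θ, (‖f θ‖₊ : ENNReal) ∂μ) < ⊤
  rw [this]; exact ENNReal.one_lt_top

lemma privProfile_eq {Ω : Type*} [MeasurableSpace Ω] (μ : Measure Ω)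
    (f g : Ω → ℝ) (hf : Measurable f) (hg : Measurable g)
    (hf0 : 0 ≤ f) (hg0 : 0 ≤ g)
    (hf1 : ∫⁻ θ, ENNReal.ofReal (f θ) ∂μ = 1)
    (hg1 : ∫⁻ θ, ENNReal.ofReal (g θ) ∂μ = 1)
    (ε : ℝ) :
    privProfile (μ.withDensity (fun θ => ENNReal.ofReal (f θ)))
        (μ.withDensity (fun θ => ENNReal.ofReal (g θ))) ε
      = ∫ θ, max (f θ - Real.exp ε * g θ) 0 ∂μ := by
  have hfi : Integrable f μ := integrable_of_density hf hf0 hf1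
  have hgi : Integrable g μ := integrable_of_density hg hg0 hg1
  have happ : ∀ (h : Ω → ℝ), Measurable h → 0 ≤ h → Integrable h μ →
      ∀ S : Set Ω, MeasurableSet S →
      ((μ.withDensity (fun θ => ENNReal.ofReal (h θ))) S).toReal = ∫ θ in S, h θ ∂μ := by
    intro h hm h0 hi S hS
    rw [withDensity_apply _ hS,
      ← ofReal_integral_eq_lintegral_ofReal hi.restrict (Filter.Eventually.of_forall h0),
      ENNReal.toReal_ofReal (integral_nonneg h0)]
  set h : Ω → ℝ := fun θ => max (f θ - Real.exp ε * g θ) 0 with hh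
  have hhm : Measurable h := (hf.sub (hg.const_mul _)).max measurable_const
  have hh0 : 0 ≤ h := fun θ => le_max_right _ _
  have hhi : Integrable h μ := by
    refine hfi.mono hhm.aestronglyMeasurable (Filter.Eventually.of_forall fun θ => ?_)
    rw [Real.norm_eq_abs, Real.norm_eq_abs, abs_of_nonneg (hh0 θ), abs_of_nonneg (hf0 θ)]
    have : f θ - Real.exp ε * g θ ≤ f θ := by
      have := mul_nonneg (Real.exp_pos ε).le (hg0 θ); linarith
    exact max_le this (hf0 θ)
  have upper : ∀ S : {S : Set Ω // MeasurableSet S},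
      ((μ.withDensity (fun θ => ENNReal.ofReal (f θ))) S.1).toReal
        - Real.exp ε * ((μ.withDensity (fun θ => ENNReal.ofReal (g θ))) S.1).toReal
      ≤ ∫ θ, h θ ∂μ := by
    rintro ⟨S, hS⟩
    rw [happ f hf hf0 hfi S hS, happ g hg hg0 hgi S hS, ← integral_const_mul,
      ← integral_sub hfi.restrict (hgi.restrict.const_mul _)]
    calc ∫ θ in S, (f θ - Real.exp ε * g θ) ∂μ
        ≤ ∫ θ in S, h θ ∂μ := by
          refine integral_mono (hfi.restrict.sub (hgi.restrict.const_mul _)) hhi.restrict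
            (fun θ => le_max_left _ _)
      _ ≤ ∫ θ, h θ ∂μ := setIntegral_le_integral hhi (Filter.Eventually.of_forall hh0)
  apply le_antisymm (ciSup_le upper)
  set S : Set Ω := {θ | Real.exp ε * g θ < f θ} with hSdef
  have hS : MeasurableSet S := measurableSet_lt (hg.const_mul _) hf
  have hval : ((μ.withDensity (fun θ => ENNReal.ofReal (f θ))) S).toReal
      - Real.exp ε * ((μ.withDensity (fun θ => ENNReal.ofReal (g θ))) S).toReal
      = ∫ θ, h θ ∂μ := by
    rw [happ f hf hf0 hfi S hS, happ g hg hg0 hgi S hS, ← integral_const_mul,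
      ← integral_sub hfi.restrict (hgi.restrict.const_mul _)]
    rw [← integral_add_compl hS hhi]
    have h2 : ∫ θ in Sᶜ, h θ ∂μ = 0 := by
      apply setIntegral_eq_zero_of_forall_eq_zero
      intro θ hθ
      have : ¬ Real.exp ε * g θ < f θ := hθ
      exact max_eq_right (by linarith [not_lt.mp this]) 
    have h1 : ∫ θ in S, h θ ∂μ = ∫ θ in S, (f θ - Real.exp ε * g θ) ∂μ := by
      apply setIntegral_congr_fun hS
      intro θ hθ
      exact max_eq_left (by simp only [hSdef, mem_setOf_eq] at hθ; linarith)
    rw [h2, h1, add_zero]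
  calc ∫ θ, h θ ∂μ = _ := hval.symm
    _ ≤ _ := le_ciSup ⟨∫ θ, h θ ∂μ, by rintro x ⟨S', rfl⟩; exact upper S'⟩ (⟨S, hS⟩ : {S : Set Ω // MeasurableSet S})


lemma intOn_exp_mul_Iio {k : ℝ} (hk : 0 < k) (c : ℝ) :
    IntegrableOn (fun t => Real.exp (k * t)) (Iio c) := by
  have h1 : IntegrableOn (fun u : ℝ => Real.exp (-u)) (Ioi (k * -c)) := by
    simpa using exp_neg_integrableOn_Ioi (k * -c) one_pos
  have h2 : IntegrableOn (fun x : ℝ => Real.exp (-(k * x))) (Ioi (-c)) :=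
    (integrableOn_Ioi_comp_mul_left_iff (fun u : ℝ => Real.exp (-u)) (-c) hk).2 h1
  have h3 : Integrable ((Ioi (-c)).indicator fun x : ℝ => Real.exp (-(k * x))) := by
    rwa [integrable_indicator_iff measurableSet_Ioi]
  have h4 := h3.comp_neg
  have h5 : (fun t : ℝ => ((Ioi (-c)).indicator fun x : ℝ => Real.exp (-(k * x))) (-t))
      = (Iio c).indicator fun t : ℝ => Real.exp (k * t) := by
    ext t
    by_cases ht : t < c
    · simp only [Set.indicator, mem_Ioi, mem_Iio, ht, if_true, neg_lt_neg_iff,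
        show -c < -t from by linarith, if_pos trivial]
      ring_nf
    · simp [Set.indicator, mem_Ioi, mem_Iio, ht, show ¬ -c < -t from by simp; linarith]
  rw [h5] at h4
  rwa [← integrable_indicator_iff measurableSet_Iio]

lemma int_exp_mul_Iio {k : ℝ} (hk : 0 < k) (c : ℝ) :
    ∫ t in Iio c, Real.exp (k * t) = Real.exp (k * c) / k := by
  have h0 : ∫ t in Iio c, Real.exp (k * t) = ∫ t in Iic c, Real.exp (k * t) :=
    setIntegral_congr_set Iio_ae_eq_Iic
  have h1 : ∫ x in Iic c, (fun x : ℝ => Real.exp (-(k * x))) (-x)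
      = ∫ x in Ioi (-c), Real.exp (-(k * x)) :=
    integral_comp_neg_Iic c (fun x => Real.exp (-(k * x)))
  have h2 : ∫ x in Ioi (-c), Real.exp (-(k * x)) = k⁻¹ • ∫ u in Ioi (k * -c), Real.exp (-u) :=
    integral_comp_mul_left_Ioi (fun u : ℝ => Real.exp (-u)) (-c) hk
  rw [integral_exp_neg_Ioi] at h2
  simp only [neg_neg, mul_neg] at h1 h2
  rw [h0]
  rw [show (fun x : ℝ => Real.exp (k * x)) = fun x : ℝ => Real.exp (-(k * -x)) by ext x; ring_nf]
  simp only [neg_neg, mul_neg] at *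
  rw [h1, h2, smul_eq_mul]
  ring

lemma calcB {r a b : ℝ} (hr : 1 < r) (ha : 0 ≤ a) (hb : 0 ≤ b) (hab : 0 < a ↔ 0 < b) :
    Integrable (fun t => Real.exp ((r-1)*t) * max (a - Real.exp t * b) 0) ∧
    ∫ t, Real.exp ((r-1)*t) * max (a - Real.exp t * b) 0
      = a ^ r * b ^ (1-r) / (r * (r-1)) := by
  have hr0 : (0:ℝ) < r := by linarith
  have hr1 : (0:ℝ) < r - 1 := by linarith
  rcases eq_or_lt_of_le ha with h0 | hapos
  · have hfun : (fun t => Real.exp ((r-1)*t) * max (a - Real.exp t * b) 0)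
        = fun _ : ℝ => (0:ℝ) := by
      ext t
      have hle : a - Real.exp t * b ≤ 0 := by nlinarith [Real.exp_pos t]
      rw [max_eq_right hle, mul_zero]
    rw [hfun]
    refine ⟨integrable_zero _ _ _, ?_⟩
    rw [integral_zero, ← h0, Real.zero_rpow (ne_of_gt hr0), zero_mul, zero_div]
  · have hbpos : 0 < b := hab.mp hapos
    set c := Real.log (a / b) with hc
    have habd : 0 < a / b := div_pos hapos hbpos
    have hexpc : Real.exp c = a / b := Real.exp_log habd
    have hkey : ∀ t, 0 < a - Real.exp t * b ↔ t < c := by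
      intro t
      rw [sub_pos, hc, Real.lt_log_iff_exp_lt habd, lt_div_iff₀ hbpos]
    have hfun : (fun t => Real.exp ((r-1)*t) * max (a - Real.exp t * b) 0)
        = (Iio c).indicator (fun t => a * Real.exp ((r-1)*t) - b * Real.exp (r*t)) := by
      ext t
      by_cases ht : t < c
      · rw [Set.indicator_of_mem (mem_Iio.mpr ht),
          max_eq_left (le_of_lt ((hkey t).mpr ht))]
        rw [show r * t = (r-1)*t + t by ring, Real.exp_add]
        ring
      · rw [Set.indicator_of_notMem (by simpa using ht)]
        have : a - Real.exp t * b ≤ 0 := by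
          by_contra h
          exact ht ((hkey t).mp (by linarith))
        rw [max_eq_right this, mul_zero]
    have hint1 : IntegrableOn (fun t => a * Real.exp ((r-1)*t)) (Iio c) :=
      (intOn_exp_mul_Iio hr1 c).const_mul a
    have hint2 : IntegrableOn (fun t => b * Real.exp (r*t)) (Iio c) :=
      (intOn_exp_mul_Iio hr0 c).const_mul b
    have hintOn : IntegrableOn (fun t => a * Real.exp ((r-1)*t) - b * Real.exp (r*t)) (Iio c) :=
      hint1.sub hint2
    constructor
    · rw [hfun]
      exact (integrable_indicator_iff measurableSet_Iio).2 hintOn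
    · rw [hfun, integral_indicator measurableSet_Iio,
        integral_sub hint1 hint2, integral_const_mul, integral_const_mul,
        int_exp_mul_Iio hr1 c, int_exp_mul_Iio hr0 c]
      have e1 : Real.exp ((r-1) * c) = (a/b) ^ (r-1) := by
        rw [mul_comm, Real.exp_mul, hexpc]
      have e2 : Real.exp (r * c) = (a/b) ^ r := by
        rw [mul_comm, Real.exp_mul, hexpc]
      rw [e1, e2, Real.div_rpow ha hb, Real.div_rpow ha hb]
      have hb1 : b ^ (1-r) = b ^ (1:ℝ) / b ^ r := Real.rpow_sub hbpos 1 r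
      have ha1 : a ^ r = a ^ (1:ℝ) * a ^ (r-1) := by
        rw [← Real.rpow_add hapos]; norm_num
      have hbr : b ^ (r-1) = b ^ r / b ^ (1:ℝ) := Real.rpow_sub hbpos r 1
      have hbne : b ^ r ≠ 0 := ne_of_gt (Real.rpow_pos_of_pos hbpos r)
      have hbne1 : b ^ ((1:ℝ)) ≠ 0 := ne_of_gt (Real.rpow_pos_of_pos hbpos 1)
      rw [hb1, ha1, hbr]
      field_simp
      simp only [Real.rpow_one]
      ring

lemma ofReal_max_zero (x : ℝ) : ENNReal.ofReal (max x 0) = ENNReal.ofReal x := by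
  rcases le_total x 0 with h | h
  · rw [max_eq_right h, ENNReal.ofReal_zero, ENNReal.ofReal_eq_zero.2 h]
  · rw [max_eq_left h]

lemma integrable_posPart {Ω : Type*} [MeasurableSpace Ω] {μ : Measure Ω}
    {f g : Ω → ℝ} (hf : Measurable f) (hg : Measurable g)
    (hf0 : 0 ≤ f) (hg0 : 0 ≤ g) (hfi : Integrable f μ) {c : ℝ} (hc : 0 ≤ c) :
    Integrable (fun θ => max (f θ - c * g θ) 0) μ := by
  have hhm : Measurable fun θ => max (f θ - c * g θ) 0 :=
    (hf.sub (hg.const_mul _)).max measurable_const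
  refine hfi.mono hhm.aestronglyMeasurable (Filter.Eventually.of_forall fun θ => ?_)
  rw [Real.norm_eq_abs, Real.norm_eq_abs, abs_of_nonneg (le_max_right _ _),
    abs_of_nonneg (hf0 θ)]
  have : f θ - c * g θ ≤ f θ := by have := mul_nonneg hc (hg0 θ); linarith
  exact max_le this (hf0 θ)

lemma key_formula {Ω : Type*} [MeasurableSpace Ω] (μ : Measure Ω) [SigmaFinite μ]
    (f g : Ω → ℝ) (hf : Measurable f) (hg : Measurable g)
    (hf0 : 0 ≤ f) (hg0 : 0 ≤ g)
    (hf1 : ∫⁻ θ, ENNReal.ofReal (f θ) ∂μ = 1)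
    (hg1 : ∫⁻ θ, ENNReal.ofReal (g θ) ∂μ = 1)
    (hac : ∀ᵐ θ ∂μ, (0 < f θ ↔ 0 < g θ))
    {r : ℝ} (hr : 1 < r)
    (hint : Integrable (fun t => Real.exp ((r-1)*t) *
      privProfile (μ.withDensity (fun θ => ENNReal.ofReal (f θ)))
        (μ.withDensity (fun θ => ENNReal.ofReal (g θ))) t)) :
    ∫ θ, f θ ^ r * g θ ^ (1-r) ∂μ
      = (r*(r-1)) * ∫ t, Real.exp ((r-1)*t) *
          privProfile (μ.withDensity (fun θ => ENNReal.ofReal (f θ)))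
            (μ.withDensity (fun θ => ENNReal.ofReal (g θ))) t := by
  set δ : ℝ → ℝ := fun t => privProfile (μ.withDensity (fun θ => ENNReal.ofReal (f θ)))
      (μ.withDensity (fun θ => ENNReal.ofReal (g θ))) t with hδdef
  have hfi : Integrable f μ := integrable_of_density hf hf0 hf1
  have hδ : ∀ t, δ t = ∫ θ, max (f θ - Real.exp t * g θ) 0 ∂μ := fun t =>
    privProfile_eq μ f g hf hg hf0 hg0 hf1 hg1 t
  have hδ0 : ∀ t, 0 ≤ δ t := fun t => by
    rw [hδ t]; exact integral_nonneg fun θ => le_max_right _ _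
  set C : ℝ := r * (r - 1) with hC
  have hCpos : 0 < C := by
    have : (0:ℝ) < r - 1 := by linarith
    positivity
  set Φ : ℝ → Ω → ENNReal := fun t θ =>
    ENNReal.ofReal (Real.exp ((r-1)*t)) * ENNReal.ofReal (f θ - Real.exp t * g θ) with hΦ
  have hmeas : Measurable (Function.uncurry Φ) := by
    change Measurable (fun p : ℝ × Ω => ENNReal.ofReal (Real.exp ((r-1)*p.1)) * ENNReal.ofReal (f p.2 - Real.exp p.1 * g p.2))
    refine Measurable.mul (f := fun p : ℝ × Ω => ENNReal.ofReal (Real.exp ((r-1)*p.1))) (g := fun p : ℝ × Ω => ENNReal.ofReal (f p.2 - Real.exp p.1 * g p.2)) ?_ ?_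
    · exact (Real.measurable_exp.comp (measurable_fst.const_mul _)).ennreal_ofReal
    · exact ((hf.comp measurable_snd).sub
        ((Real.measurable_exp.comp measurable_fst).mul (hg.comp measurable_snd))).ennreal_ofReal
  -- inner θ-integral
  have hinner : ∀ t, ∫⁻ θ, Φ t θ ∂μ = ENNReal.ofReal (Real.exp ((r-1)*t) * δ t) := by
    intro t
    have hmax : Integrable (fun θ => max (f θ - Real.exp t * g θ) 0) μ :=
      integrable_posPart hf hg hf0 hg0 hfi (Real.exp_pos t).le
    have : ∫⁻ θ, ENNReal.ofReal (f θ - Real.exp t * g θ) ∂μ = ENNReal.ofReal (δ t) := by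
      rw [hδ t, ofReal_integral_eq_lintegral_ofReal hmax
        (Filter.Eventually.of_forall fun θ => le_max_right _ _)]
      exact lintegral_congr fun θ => (ofReal_max_zero (f θ - Real.exp t * g θ)).symm
    rw [hΦ]
    simp only
    rw [lintegral_const_mul _ (f := fun θ => ENNReal.ofReal (f θ - Real.exp t * g θ)) ((hf.sub ((hg.const_mul _))).ennreal_ofReal), this]
    · rw [ENNReal.ofReal_mul (Real.exp_pos _).le]
  -- the t-then-θ iterated integral
  have hLHS : ∫⁻ t, ∫⁻ θ, Φ t θ ∂μ = ENNReal.ofReal (∫ t, Real.exp ((r-1)*t) * δ t) := by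
    rw [lintegral_congr hinner]
    exact (ofReal_integral_eq_lintegral_ofReal hint (Filter.Eventually.of_forall
      fun t => mul_nonneg (Real.exp_pos _).le (hδ0 t))).symm
  -- the θ-then-t iterated integral
  set L : ENNReal := ∫⁻ θ, ENNReal.ofReal (f θ ^ r * g θ ^ (1-r)) ∂μ with hL
  have hRHS : ∫⁻ θ, (∫⁻ t, Φ t θ) ∂μ = ENNReal.ofReal C⁻¹ * L := by
    have hae : ∀ᵐ θ ∂μ, (∫⁻ t, Φ t θ)
        = ENNReal.ofReal C⁻¹ * ENNReal.ofReal (f θ ^ r * g θ ^ (1-r)) := by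
      filter_upwards [hac] with θ hθ
      obtain ⟨hI, hV⟩ := calcB hr (hf0 θ) (hg0 θ) hθ
      have : (∫⁻ t, Φ t θ) = ENNReal.ofReal (∫ t, Real.exp ((r-1)*t)
          * max (f θ - Real.exp t * g θ) 0) := by
        rw [ofReal_integral_eq_lintegral_ofReal hI (Filter.Eventually.of_forall
          fun t => mul_nonneg (Real.exp_pos _).le (le_max_right _ _))]
        refine lintegral_congr fun t => ?_
        rw [ENNReal.ofReal_mul (Real.exp_pos _).le, ofReal_max_zero]
      rw [this, hV, div_eq_inv_mul, ENNReal.ofReal_mul (by positivity)]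
    rw [lintegral_congr_ae hae, lintegral_const_mul _ (f := fun θ => ENNReal.ofReal (f θ ^ r * g θ ^ (1-r))) (((hf.pow measurable_const).mul (hg.pow measurable_const)).ennreal_ofReal)]
  have hswap : ∫⁻ t, ∫⁻ θ, Φ t θ ∂μ = ∫⁻ θ, (∫⁻ t, Φ t θ) ∂μ :=
    lintegral_lintegral_swap hmeas.aemeasurable
  have hEq : ENNReal.ofReal (∫ t, Real.exp ((r-1)*t) * δ t) = ENNReal.ofReal C⁻¹ * L := by
    rw [← hLHS, hswap, hRHS]
  have hLval : L = ENNReal.ofReal (C * ∫ t, Real.exp ((r-1)*t) * δ t) := by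
    have h2 : ENNReal.ofReal C * ENNReal.ofReal C⁻¹ = 1 := by
      rw [← ENNReal.ofReal_mul hCpos.le, mul_inv_cancel₀ (ne_of_gt hCpos), ENNReal.ofReal_one]
    calc L = ENNReal.ofReal C * ENNReal.ofReal C⁻¹ * L := by rw [h2, one_mul]
      _ = ENNReal.ofReal C * (ENNReal.ofReal C⁻¹ * L) := by rw [mul_assoc]
      _ = ENNReal.ofReal C * ENNReal.ofReal (∫ t, Real.exp ((r-1)*t) * δ t) := by rw [hEq]
      _ = ENNReal.ofReal (C * ∫ t, Real.exp ((r-1)*t) * δ t) := by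
          rw [ENNReal.ofReal_mul hCpos.le]
  have hfinal : ∫ θ, f θ ^ r * g θ ^ (1-r) ∂μ = L.toReal := by
    rw [hL, integral_eq_lintegral_of_nonneg_ae (Filter.Eventually.of_forall fun θ =>
      mul_nonneg (Real.rpow_nonneg (hf0 θ) r) (Real.rpow_nonneg (hg0 θ) _))
      ((hf.pow measurable_const).mul (hg.pow measurable_const)).aestronglyMeasurable]
  rw [hfinal, hLval, ENNReal.toReal_ofReal]
  exact mul_nonneg hCpos.le (integral_nonneg fun t => mul_nonneg (Real.exp_pos _).le (hδ0 t))


theorem renyi_dominance_of_profile_dominance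
    {Ω₁ Ω₂ : Type*} [MeasurableSpace Ω₁] [MeasurableSpace Ω₂]
    (μ₁ : Measure Ω₁) [SigmaFinite μ₁] (μ₂ : Measure Ω₂) [SigmaFinite μ₂]
    (P₁ Q₁ : Measure Ω₁) [IsProbabilityMeasure P₁] [IsProbabilityMeasure Q₁]
    (P₂ Q₂ : Measure Ω₂) [IsProbabilityMeasure P₂] [IsProbabilityMeasure Q₂]
    (f₁ g₁ : Ω₁ → ℝ) (f₂ g₂ : Ω₂ → ℝ)
    (hf₁ : Measurable f₁) (hg₁ : Measurable g₁)
    (hf₂ : Measurable f₂) (hg₂ : Measurable g₂)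
    (hf₁0 : 0 ≤ f₁) (hg₁0 : 0 ≤ g₁) (hf₂0 : 0 ≤ f₂) (hg₂0 : 0 ≤ g₂)
    (hP₁ : P₁ = μ₁.withDensity (fun θ => ENNReal.ofReal (f₁ θ)))
    (hQ₁ : Q₁ = μ₁.withDensity (fun θ => ENNReal.ofReal (g₁ θ)))
    (hP₂ : P₂ = μ₂.withDensity (fun θ => ENNReal.ofReal (f₂ θ)))
    (hQ₂ : Q₂ = μ₂.withDensity (fun θ => ENNReal.ofReal (g₂ θ)))
    (hac₁ : ∀ᵐ θ ∂μ₁, (0 < f₁ θ ↔ 0 < g₁ θ))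
    (hac₂ : ∀ᵐ θ ∂μ₂, (0 < f₂ θ ↔ 0 < g₂ θ))
    (hdom : ∀ ε : ℝ, privProfile P₁ Q₁ ε ≤ privProfile P₂ Q₂ ε)
    (r : ℝ) (hr : 1 < r)
    (hint₁ : Integrable (fun t => Real.exp ((r - 1) * t) * privProfile P₁ Q₁ t))
    (hint₂ : Integrable (fun t => Real.exp ((r - 1) * t) * privProfile P₂ Q₂ t)) :
    (1 / (r - 1)) * Real.log (∫ θ, f₁ θ ^ r * g₁ θ ^ (1 - r) ∂μ₁)
      ≤ (1 / (r - 1)) * Real.log (∫ θ, f₂ θ ^ r * g₂ θ ^ (1 - r) ∂μ₂) := by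
  have hf₁1 : ∫⁻ θ, ENNReal.ofReal (f₁ θ) ∂μ₁ = 1 := by
    have h := (inferInstance : IsProbabilityMeasure P₁).measure_univ
    rwa [hP₁, withDensity_apply _ MeasurableSet.univ, Measure.restrict_univ] at h
  have hg₁1 : ∫⁻ θ, ENNReal.ofReal (g₁ θ) ∂μ₁ = 1 := by
    have h := (inferInstance : IsProbabilityMeasure Q₁).measure_univ
    rwa [hQ₁, withDensity_apply _ MeasurableSet.univ, Measure.restrict_univ] at h
  have hf₂1 : ∫⁻ θ, ENNReal.ofReal (f₂ θ) ∂μ₂ = 1 := by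
    have h := (inferInstance : IsProbabilityMeasure P₂).measure_univ
    rwa [hP₂, withDensity_apply _ MeasurableSet.univ, Measure.restrict_univ] at h
  have hg₂1 : ∫⁻ θ, ENNReal.ofReal (g₂ θ) ∂μ₂ = 1 := by
    have h := (inferInstance : IsProbabilityMeasure Q₂).measure_univ
    rwa [hQ₂, withDensity_apply _ MeasurableSet.univ, Measure.restrict_univ] at h
  subst hP₁ hQ₁ hP₂ hQ₂
  set C : ℝ := r * (r - 1) with hC
  have hr1 : (0:ℝ) < r - 1 := by linarith
  have hCpos : 0 < C := by positivity
  have hA₁ := key_formula μ₁ f₁ g₁ hf₁ hg₁ hf₁0 hg₁0 hf₁1 hg₁1 hac₁ hr hint₁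
  have hA₂ := key_formula μ₂ f₂ g₂ hf₂ hg₂ hf₂0 hg₂0 hf₂1 hg₂1 hac₂ hr hint₂
  -- monotonicity of the profile integrals
  have hδ₁0 : ∀ t, 0 ≤ privProfile (μ₁.withDensity (fun θ => ENNReal.ofReal (f₁ θ)))
      (μ₁.withDensity (fun θ => ENNReal.ofReal (g₁ θ))) t := by
    intro t
    rw [privProfile_eq μ₁ f₁ g₁ hf₁ hg₁ hf₁0 hg₁0 hf₁1 hg₁1 t]
    exact integral_nonneg fun θ => le_max_right _ _
  have hII : (∫ t, Real.exp ((r - 1) * t) * privProfile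
        (μ₁.withDensity (fun θ => ENNReal.ofReal (f₁ θ)))
        (μ₁.withDensity (fun θ => ENNReal.ofReal (g₁ θ))) t)
      ≤ ∫ t, Real.exp ((r - 1) * t) * privProfile
        (μ₂.withDensity (fun θ => ENNReal.ofReal (f₂ θ)))
        (μ₂.withDensity (fun θ => ENNReal.ofReal (g₂ θ))) t :=
    integral_mono hint₁ hint₂ fun t =>
      mul_le_mul_of_nonneg_left (hdom t) (Real.exp_pos _).le
  -- lower bound : the first integral is at least 1/C
  obtain ⟨hIone, hVone⟩ := calcB (a := 1) (b := 1) hr zero_le_one zero_le_one Iff.rfl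
  have hlow : ∀ t : ℝ, Real.exp ((r-1)*t) * max (1 - Real.exp t * 1) 0
      ≤ Real.exp ((r - 1) * t) * privProfile
        (μ₁.withDensity (fun θ => ENNReal.ofReal (f₁ θ)))
        (μ₁.withDensity (fun θ => ENNReal.ofReal (g₁ θ))) t := by
    intro t
    refine mul_le_mul_of_nonneg_left ?_ (Real.exp_pos _).le
    rw [privProfile_eq μ₁ f₁ g₁ hf₁ hg₁ hf₁0 hg₁0 hf₁1 hg₁1 t, mul_one]
    rcases le_total (1 - Real.exp t) 0 with h | h
    · rw [max_eq_right h]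
      exact integral_nonneg fun θ => le_max_right _ _
    · rw [max_eq_left h]
      have hfi : Integrable f₁ μ₁ := integrable_of_density hf₁ hf₁0 hf₁1
      have hgi : Integrable g₁ μ₁ := integrable_of_density hg₁ hg₁0 hg₁1
      have hint_f : ∫ θ, f₁ θ ∂μ₁ = 1 := by
        have h1 : ENNReal.ofReal (∫ θ, f₁ θ ∂μ₁) = 1 :=
          (ofReal_integral_eq_lintegral_ofReal hfi
            (Filter.Eventually.of_forall hf₁0)).trans hf₁1
        have h2 := congrArg ENNReal.toReal h1
        rwa [ENNReal.toReal_ofReal (integral_nonneg hf₁0), ENNReal.toReal_one] at h2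
      have hint_g : ∫ θ, g₁ θ ∂μ₁ = 1 := by
        have h1 : ENNReal.ofReal (∫ θ, g₁ θ ∂μ₁) = 1 :=
          (ofReal_integral_eq_lintegral_ofReal hgi
            (Filter.Eventually.of_forall hg₁0)).trans hg₁1
        have h2 := congrArg ENNReal.toReal h1
        rwa [ENNReal.toReal_ofReal (integral_nonneg hg₁0), ENNReal.toReal_one] at h2
      calc 1 - Real.exp t = ∫ θ, (f₁ θ - Real.exp t * g₁ θ) ∂μ₁ := by
            rw [integral_sub hfi (hgi.const_mul _), integral_const_mul, hint_f, hint_g, mul_one]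
        _ ≤ ∫ θ, max (f₁ θ - Real.exp t * g₁ θ) 0 ∂μ₁ :=
            integral_mono (hfi.sub (hgi.const_mul _))
              (integrable_posPart hf₁ hg₁ hf₁0 hg₁0 hfi (Real.exp_pos t).le)
              fun θ => le_max_left _ _
  have hIlow : C⁻¹ ≤ ∫ t, Real.exp ((r - 1) * t) * privProfile
      (μ₁.withDensity (fun θ => ENNReal.ofReal (f₁ θ)))
      (μ₁.withDensity (fun θ => ENNReal.ofReal (g₁ θ))) t := by
    have := integral_mono hIone hint₁ hlow
    rw [hVone, Real.one_rpow, Real.one_rpow, one_mul] at this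
    calc C⁻¹ = 1 / C := (one_div C).symm
      _ ≤ _ := this
  have hA₁pos : (1:ℝ) ≤ ∫ θ, f₁ θ ^ r * g₁ θ ^ (1 - r) ∂μ₁ := by
    rw [hA₁]
    calc (1:ℝ) = C * C⁻¹ := (mul_inv_cancel₀ (ne_of_gt hCpos)).symm
      _ ≤ _ := mul_le_mul_of_nonneg_left hIlow hCpos.le
  have hAle : ∫ θ, f₁ θ ^ r * g₁ θ ^ (1 - r) ∂μ₁ ≤ ∫ θ, f₂ θ ^ r * g₂ θ ^ (1 - r) ∂μ₂ := by
    rw [hA₁, hA₂]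
    exact mul_le_mul_of_nonneg_left hII hCpos.le
  exact mul_le_mul_of_nonneg_left
    (Real.log_le_log (lt_of_lt_of_le one_pos hA₁pos) hAle)
    (by positivity)
end

section
/- For every ε > 0 and every real q > 1, the Rényi divergence of the (ε,0)-randomized response is dominated by that of the Gaussian pair with κ = ε²/2; concretely, (1/(q−1)) · log( (e^{(1−q)ε} + e^{qε})/(1 + e^ε) ) ≤ q · ε²/2. -/
lemma sinh_le_mul_cosh {x : ℝ} (hx : 0 ≤ x) : Real.sinh x ≤ x * Real.cosh x := by
  have hd : ∀ y : ℝ, HasDerivAt (fun t => t * Real.cosh t - Real.sinh t)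
      (y * Real.sinh y) y := by
    intro y
    have h := ((hasDerivAt_id y).mul (Real.hasDerivAt_cosh y)).sub (Real.hasDerivAt_sinh y)
    exact h.congr_deriv (by simp)
  have mono : MonotoneOn (fun t => t * Real.cosh t - Real.sinh t) (Set.Ici (0:ℝ)) := by
    apply monotoneOn_of_deriv_nonneg (convex_Ici 0)
    · exact Continuous.continuousOn (by continuity)
    · intro y hy
      exact ((hd y).differentiableAt).differentiableWithinAt
    · intro y hy
      rw [interior_Ici] at hy
      rw [(hd y).deriv]
      exact mul_nonneg (le_of_lt hy) (Real.sinh_nonneg_iff.mpr (le_of_lt hy))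
  have h0 := mono (Set.self_mem_Ici) hx hx
  simp only [Real.sinh_zero, Real.cosh_zero, mul_one, zero_mul, sub_zero, zero_sub, neg_zero] at h0
  linarith [h0]

lemma tanh_nonneg {x : ℝ} (hx : 0 ≤ x) : 0 ≤ Real.tanh x := by
  rw [Real.tanh_eq_sinh_div_cosh]
  exact div_nonneg (Real.sinh_nonneg_iff.mpr hx) (Real.cosh_pos _).le

lemma tanh_le_self {x : ℝ} (hx : 0 ≤ x) : Real.tanh x ≤ x := by
  rw [Real.tanh_eq_sinh_div_cosh, div_le_iff₀ (Real.cosh_pos _)]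
  exact sinh_le_mul_cosh hx

theorem rr_renyi_le_gaussian_renyi (ε : ℝ) (hε : 0 < ε) (r : ℝ) (hr : 1 < r) :
    (1 / (r - 1)) * Real.log ((Real.exp ((1 - r) * ε) + Real.exp (r * ε)) / (1 + Real.exp ε))
      ≤ r * ε ^ 2 / 2 := by
  have ht : 0 < r - 1 := by linarith
  set a : ℝ := (r - 1) * ε with ha
  have ha0 : 0 < a := mul_pos ht hε
  have hE2 : (0:ℝ) < 1 + Real.exp ε := by positivity
  -- Step A: identity
  have heq : (Real.exp ((1 - r) * ε) + Real.exp (r * ε)) / (1 + Real.exp ε)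
      = Real.cosh a + Real.tanh (ε / 2) * Real.sinh a := by
    rw [Real.cosh_eq, Real.sinh_eq, Real.tanh_eq_sinh_div_cosh, Real.cosh_eq, Real.sinh_eq]
    have h1 : Real.exp ((1 - r) * ε) = 1 / Real.exp a := by
      rw [eq_div_iff (Real.exp_ne_zero _), ← Real.exp_add]; norm_num [ha]; ring_nf
    have h2 : Real.exp (r * ε) = Real.exp a * Real.exp ε := by
      rw [← Real.exp_add]; congr 1; rw [ha]; ring
    have h3 : Real.exp (-a) = 1 / Real.exp a := by
      rw [Real.exp_neg, one_div]
    have h4 : Real.exp (-(ε/2)) = 1 / Real.exp (ε/2) := by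
      rw [Real.exp_neg, one_div]
    have h5 : Real.exp ε = Real.exp (ε/2) * Real.exp (ε/2) := by
      rw [← Real.exp_add]; congr 1; ring
    have hea : (0:ℝ) < Real.exp a := Real.exp_pos a
    have heh : (0:ℝ) < Real.exp (ε/2) := Real.exp_pos _
    have hden : (0:ℝ) < Real.exp (ε/2) + 1 / Real.exp (ε/2) := by positivity
    rw [h1, h2, h3, h4, h5]
    have h6 : (0:ℝ) < 1 + Real.exp (ε/2) * Real.exp (ε/2) := by positivity
    field_simp
    ring
  rw [heq]
  -- Step B: bound the ratio by an exponential
  have htanh : Real.tanh (ε / 2) ≤ ε / 2 := tanh_le_self (by linarith)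
  have hsinh : 0 ≤ Real.sinh a := Real.sinh_nonneg_iff.mpr ha0.le
  have hchain : Real.cosh a + Real.tanh (ε / 2) * Real.sinh a
      ≤ Real.exp (a ^ 2 / 2 + ε * a / 2) := by
    have s1 : Real.cosh a + Real.tanh (ε / 2) * Real.sinh a
        ≤ Real.cosh a + (ε / 2) * (a * Real.cosh a) := by
      have := sinh_le_mul_cosh ha0.le
      nlinarith [tanh_nonneg ha0.le, tanh_nonneg (le_of_lt (half_pos hε)),
        Real.cosh_pos a]
    have s2 : Real.cosh a + (ε / 2) * (a * Real.cosh a)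
        = Real.cosh a * (1 + ε * a / 2) := by ring
    have s3 : Real.cosh a * (1 + ε * a / 2) ≤ Real.cosh a * Real.exp (ε * a / 2) := by
      apply mul_le_mul_of_nonneg_left _ (Real.cosh_pos a).le
      have := Real.add_one_le_exp (ε * a / 2)
      linarith
    have s4 : Real.cosh a * Real.exp (ε * a / 2)
        ≤ Real.exp (a ^ 2 / 2) * Real.exp (ε * a / 2) :=
      mul_le_mul_of_nonneg_right (Real.cosh_le_exp_half_sq a) (Real.exp_pos _).le
    rw [← Real.exp_add] at s4
    linarith
  -- Step C: take logs
  have hpos : 0 < Real.cosh a + Real.tanh (ε / 2) * Real.sinh a := by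
    have := Real.cosh_pos a
    have h7 := tanh_nonneg (le_of_lt (half_pos hε))
    nlinarith
  have hlog : Real.log (Real.cosh a + Real.tanh (ε / 2) * Real.sinh a)
      ≤ a ^ 2 / 2 + ε * a / 2 := by
    rw [Real.log_le_iff_le_exp hpos]
    exact hchain
  rw [one_div, inv_mul_le_iff₀ ht]
  calc Real.log (Real.cosh a + Real.tanh (ε / 2) * Real.sinh a)
      ≤ a ^ 2 / 2 + ε * a / 2 := hlog
    _ = (r - 1) * (r * ε ^ 2 / 2) := by rw [ha]; ring
end

section
/- Let d ≥ 1, σ > 0, and let μ, μ′ ∈ ℝ^d with μ ≠ μ′. Let P = N(μ, σ²I_d) and Q = N(μ′, σ²I_d) be the corresponding multivariate Gaussian measures, and set κ = ‖μ − μ′‖₂²/(2σ²). Then (a) R_q(P‖Q) = κq for all real q > 1, and (b) for all ε ∈ ℝ, δ_{P|Q}(ε) = Φ̄((ε − κ)/√(2κ)) − e^ε · Φ̄((ε + κ)/√(2κ)), where Φ̄(t) := Pr_{G∼N(0,1)}[G > t] is the standard normal survival function. -/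
open MeasureTheory ProbabilityTheory Real
local notation "⟪" x ", " y "⟫" => @inner ℝ _ _ x y

/-- Density (w.r.t. Lebesgue measure) of the Gaussian `N(μ, σ²I_d)` on `ℝ^d`. -/
noncomputable def gaussDen (d : ℕ) (σ : ℝ) (μ : EuclideanSpace ℝ (Fin d))
    (x : EuclideanSpace ℝ (Fin d)) : ℝ :=
  (2 * Real.pi * σ ^ 2) ^ (-(d : ℝ) / 2) * Real.exp (-‖x - μ‖ ^ 2 / (2 * σ ^ 2))

/-- Standard normal survival function `Φ̄(t) = Pr_{G ∼ N(0,1)}[G > t]`. -/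
noncomputable def stdNormalSurvival (t : ℝ) : ℝ :=
  ((gaussianReal 0 1) (Set.Ioi t)).toReal

namespace GaussAux

noncomputable def Vnn (σ : ℝ) : NNReal := ⟨σ ^ 2, sq_nonneg σ⟩

lemma coe_Vnn (σ : ℝ) : ((Vnn σ : NNReal) : ℝ) = σ ^ 2 := rfl

lemma Vnn_ne_zero {σ : ℝ} (hσ : 0 < σ) : Vnn σ ≠ 0 := by
  intro h
  have h2 : ((Vnn σ : NNReal) : ℝ) = 0 := by rw [h]; simp
  rw [coe_Vnn] at h2
  nlinarith

variable {d : ℕ} {σ : ℝ}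

lemma norm_sq_eq (y : EuclideanSpace ℝ (Fin d)) : ‖y‖ ^ 2 = ∑ i, (y i) ^ 2 := by
  rw [EuclideanSpace.norm_eq, Real.sq_sqrt (by positivity)]
  simp [sq_abs]

lemma const_eq (hσ : 0 < σ) :
    (2 * Real.pi * σ ^ 2) ^ (-(d : ℝ) / 2) = ((Real.sqrt (2 * Real.pi * σ ^ 2))⁻¹) ^ d := by
  have ha : (0:ℝ) < 2 * Real.pi * σ ^ 2 := by positivity
  have h1 : (-(d : ℝ) / 2) = (-(1:ℝ)/2) * d := by ring
  rw [h1, Real.rpow_mul ha.le, Real.rpow_natCast]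
  congr 1
  rw [neg_div, Real.rpow_neg ha.le, Real.sqrt_eq_rpow]

lemma gaussDen_eq_prod (hσ : 0 < σ) (m x : EuclideanSpace ℝ (Fin d)) :
    gaussDen d σ m x = ∏ i, gaussianPDFReal (m i) (Vnn σ) (x i) := by
  unfold gaussDen gaussianPDFReal
  simp only [coe_Vnn]
  rw [Finset.prod_mul_distrib, Finset.prod_const, Finset.card_univ, Fintype.card_fin,
    ← Real.exp_sum, const_eq hσ]
  congr 1
  have : ‖x - m‖ ^ 2 = ∑ i, (x i - m i) ^ 2 := by
    rw [norm_sq_eq]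
    congr 1
  rw [this, ← Finset.sum_neg_distrib, Finset.sum_div]

lemma gaussDen_pos (hσ : 0 < σ) (m x : EuclideanSpace ℝ (Fin d)) :
    0 < gaussDen d σ m x := by
  unfold gaussDen
  have ha : (0:ℝ) < 2 * Real.pi * σ ^ 2 := by positivity
  positivity

lemma continuous_gaussDen (m : EuclideanSpace ℝ (Fin d)) :
    Continuous (gaussDen d σ m) := by
  unfold gaussDen
  fun_prop

lemma integrable_prod_pdf (hσ : 0 < σ) (n : Fin d → ℝ) (h : Fin d → ℝ → ℝ)
    (hh : ∀ i, Integrable (h i)) :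
    Integrable (fun x : EuclideanSpace ℝ (Fin d) => ∏ i, h i (x i)) := by
  have := Integrable.fintype_prod (f := h) hh
  exact ((EuclideanSpace.volume_preserving_symm_measurableEquiv_toLp (ι := Fin d)).integrable_comp_emb
    (MeasurableEquiv.measurableEmbedding _)).mpr this

lemma integral_coords (f : (Fin d → ℝ) → ℝ) :
    ∫ x : EuclideanSpace ℝ (Fin d), f (fun i => x i) = ∫ y : Fin d → ℝ, f y := by
  have h := (EuclideanSpace.volume_preserving_symm_measurableEquiv_toLp (ι := Fin d)).integral_comp' f
  exact h

lemma integrable_gaussDen (hσ : 0 < σ) (m : EuclideanSpace ℝ (Fin d)) :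
    Integrable (gaussDen d σ m) := by
  have : Integrable (fun x : EuclideanSpace ℝ (Fin d) =>
      ∏ i, gaussianPDFReal (m i) (Vnn σ) (x i)) :=
    integrable_prod_pdf hσ m _ (fun i => integrable_gaussianPDFReal _ _)
  exact this.congr (ae_of_all _ fun x => (gaussDen_eq_prod hσ m x).symm)

lemma integral_prod_coord (h : Fin d → ℝ → ℝ) :
    ∫ x : EuclideanSpace ℝ (Fin d), ∏ i, h i (x i) = ∏ i, ∫ z : ℝ, h i z := by
  rw [← MeasureTheory.integral_fintype_prod_eq_prod h]
  exact integral_coords (fun y => ∏ i, h i (y i))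

lemma integral_gaussDen (hσ : 0 < σ) (m : EuclideanSpace ℝ (Fin d)) :
    ∫ x, gaussDen d σ m x = 1 := by
  have h1 : ∫ x : EuclideanSpace ℝ (Fin d), gaussDen d σ m x
      = ∫ x : EuclideanSpace ℝ (Fin d), ∏ i, gaussianPDFReal (m i) (Vnn σ) (x i) :=
    integral_congr_ae (ae_of_all _ fun x => gaussDen_eq_prod hσ m x)
  rw [h1, integral_prod_coord]
  rw [Finset.prod_eq_one]
  intro i _
  exact integral_gaussianPDFReal_eq_one (m i) (Vnn_ne_zero hσ)

lemma gaussianReal_Ioi (hσ : 0 < σ) (u s : ℝ) :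
    ((gaussianReal u (Vnn σ)) (Set.Ioi s)).toReal = stdNormalSurvival ((s - u) / σ) := by
  have hmap : (gaussianReal 0 1).map (fun x => σ * x + u) = gaussianReal u (Vnn σ) := by
    have h1 : (gaussianReal 0 1).map (σ * ·) = gaussianReal 0 (Vnn σ) := by
      rw [gaussianReal_map_const_mul σ]
      congr 1
      · ring
      · ext : 1
        simp [Vnn]
        rfl
    have h2 : ((gaussianReal 0 1).map (σ * ·)).map (· + u) = gaussianReal u (Vnn σ) := by
      rw [h1, gaussianReal_map_add_const]
      congr 1
      ring
    rw [← h2, Measure.map_map (by fun_prop) (by fun_prop)]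
    rfl
  rw [← hmap, Measure.map_apply (by fun_prop) measurableSet_Ioi]
  have hpre : (fun x => σ * x + u) ⁻¹' (Set.Ioi s) = Set.Ioi ((s - u) / σ) := by
    ext z
    simp only [Set.mem_preimage, Set.mem_Ioi]
    rw [div_lt_iff₀ hσ]
    constructor <;> intro hz <;> nlinarith
  rw [hpre]
  rfl

variable [NeZero d]

lemma halfspace_pi (hσ : 0 < σ) (n : EuclideanSpace ℝ (Fin d)) (s : ℝ) :
    ∫ x : EuclideanSpace ℝ (Fin d), (if s < x 0 then gaussDen d σ n x else 0)
      = stdNormalSurvival ((s - n 0) / σ) := by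
  classical
  set h : Fin d → ℝ → ℝ := fun i z =>
    if i = 0 then (if s < z then gaussianPDFReal (n 0) (Vnn σ) z else 0)
    else gaussianPDFReal (n i) (Vnn σ) z with hh
  have hpt : ∀ x : EuclideanSpace ℝ (Fin d),
      (if s < x 0 then gaussDen d σ n x else 0) = ∏ i, h i (x i) := by
    intro x
    by_cases hx : s < x 0
    · rw [if_pos hx, gaussDen_eq_prod hσ]
      refine Finset.prod_congr rfl fun i _ => ?_
      by_cases hi : i = 0
      · subst hi; simp [hh, if_pos hx]
      · simp [hh, hi]
    · rw [if_neg hx]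
      refine (Finset.prod_eq_zero (Finset.mem_univ (0 : Fin d)) ?_).symm
      simp [hh, if_neg hx]
  rw [integral_congr_ae (ae_of_all _ hpt), integral_prod_coord]
  have hint0 : ∫ z : ℝ, h 0 z = stdNormalSurvival ((s - n 0) / σ) := by
    have : (fun z : ℝ => h 0 z)
        = (Set.Ioi s).indicator (gaussianPDFReal (n 0) (Vnn σ)) := by
      funext z
      simp [hh, Set.indicator_apply]
    rw [this, integral_indicator measurableSet_Ioi]
    have happ := gaussianReal_apply_eq_integral (n 0) (Vnn_ne_zero hσ) (Set.Ioi s)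
    rw [← gaussianReal_Ioi hσ, happ, ENNReal.toReal_ofReal]
    exact setIntegral_nonneg measurableSet_Ioi fun z _ => gaussianPDFReal_nonneg _ _ _
  rw [Finset.prod_eq_single (0 : Fin d)]
  · exact hint0
  · intro i _ hi
    have : (fun z : ℝ => h i z) = gaussianPDFReal (n i) (Vnn σ) := by
      funext z; simp [hh, hi]
    rw [this]
    exact integral_gaussianPDFReal_eq_one (n i) (Vnn_ne_zero hσ)
  · intro habs
    exact absurd (Finset.mem_univ _) habs




-- orthonormal basis with prescribed first vector
lemma exists_onb (v : EuclideanSpace ℝ (Fin d)) (hv : v ≠ 0) :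
    ∃ b : OrthonormalBasis (Fin d) ℝ (EuclideanSpace ℝ (Fin d)), b 0 = ‖v‖⁻¹ • v := by
  have hcard : Module.finrank ℝ (EuclideanSpace ℝ (Fin d)) = Fintype.card (Fin d) := by
    simp [finrank_euclideanSpace]
  have hnv : ‖v‖ ≠ 0 := norm_ne_zero_iff.mpr hv
  have hon : Orthonormal ℝ (Set.restrict {(0 : Fin d)} (fun _ : Fin d => ‖v‖⁻¹ • v)) := by
    constructor
    · rintro ⟨i, hi⟩
      show ‖‖v‖⁻¹ • v‖ = 1
      rw [norm_smul, norm_inv, norm_norm, inv_mul_cancel₀ hnv]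
    · intro i j hij
      exact absurd (Subsingleton.elim i j) hij
  obtain ⟨b, hb⟩ := Orthonormal.exists_orthonormalBasis_extension_of_card_eq hcard hon
  exact ⟨b, hb 0 rfl⟩

-- change of variables along an orthonormal basis
lemma integral_onb (b : OrthonormalBasis (Fin d) ℝ (EuclideanSpace ℝ (Fin d)))
    (f : EuclideanSpace ℝ (Fin d) → ℝ) :
    ∫ x, f x = ∫ y, f (b.repr.symm y) := by
  exact ((b.measurePreserving_repr_symm).integral_comp
    (b.measurableEquiv.symm).measurableEmbedding f).symm

lemma key_sq (r : ℝ) (x μ μ' : EuclideanSpace ℝ (Fin d)) :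
    r * ‖x - μ‖ ^ 2 + (1 - r) * ‖x - μ'‖ ^ 2
      = ‖x - (r • μ + (1 - r) • μ')‖ ^ 2 + r * (1 - r) * ‖μ - μ'‖ ^ 2 := by
  have e1 : ∀ a b : EuclideanSpace ℝ (Fin d),
      ‖a - b‖ ^ 2 = ‖a‖ ^ 2 - 2 * ⟪a, b⟫ + ‖b‖ ^ 2 := fun a b => norm_sub_sq_real a b
  rw [e1 x μ, e1 x μ', e1 x _, e1 μ μ']
  have h2 : ⟪x, r • μ + (1 - r) • μ'⟫ = r * ⟪x, μ⟫ + (1 - r) * ⟪x, μ'⟫ := by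
    rw [inner_add_right, real_inner_smul_right, real_inner_smul_right]
  have h3 : ‖r • μ + (1 - r) • μ'‖ ^ 2
      = r ^ 2 * ‖μ‖ ^ 2 + 2 * (r * (1 - r)) * ⟪μ, μ'⟫ + (1 - r) ^ 2 * ‖μ'‖ ^ 2 := by
    rw [← real_inner_self_eq_norm_sq, inner_add_left, inner_add_right, inner_add_right,
      real_inner_smul_left, real_inner_smul_left, real_inner_smul_left, real_inner_smul_left,
      real_inner_smul_right, real_inner_smul_right, real_inner_smul_right, real_inner_smul_right,
      ← real_inner_self_eq_norm_sq, ← real_inner_self_eq_norm_sq, real_inner_comm μ' μ]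
    ring
  rw [h2, h3]
  ring


lemma halfspace_inner (hσ : 0 < σ) (m v : EuclideanSpace ℝ (Fin d)) (hv : v ≠ 0) (c : ℝ) :
    ∫ x, (if c < ⟪x, v⟫ then gaussDen d σ m x else 0)
      = stdNormalSurvival ((c - ⟪v, m⟫) / (σ * ‖v‖)) := by
  obtain ⟨b, hb0⟩ := exists_onb v hv
  have hnv : (0:ℝ) < ‖v‖ := norm_pos_iff.mpr hv
  have hinner : ∀ x, ⟪x, v⟫ = ‖v‖ * b.repr x 0 := by
    intro x
    rw [OrthonormalBasis.repr_apply_apply, hb0, real_inner_smul_left, real_inner_comm v x]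
    field_simp
  rw [integral_onb b]
  have hpt : ∀ y, (if c < ⟪b.repr.symm y, v⟫ then gaussDen d σ m (b.repr.symm y) else 0)
      = (if c / ‖v‖ < y 0 then gaussDen d σ (b.repr m) y else 0) := by
    intro y
    have h1 : ⟪b.repr.symm y, v⟫ = ‖v‖ * y 0 := by
      rw [hinner]; simp
    have h2 : gaussDen d σ m (b.repr.symm y) = gaussDen d σ (b.repr m) y := by
      unfold gaussDen
      have h3 : b.repr.symm y - m = b.repr.symm (y - b.repr m) := by
        simp [map_sub]
      rw [h3]
      rw [LinearIsometryEquiv.norm_map]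
    rw [h1, h2]
    exact if_congr (by rw [div_lt_iff₀ hnv, mul_comm]) rfl rfl
  rw [integral_congr_ae (ae_of_all _ hpt), halfspace_pi hσ]
  have h4 : b.repr m 0 = ‖v‖⁻¹ * ⟪v, m⟫ := by
    rw [OrthonormalBasis.repr_apply_apply, hb0, real_inner_smul_left]
  rw [h4]
  congr 1
  have hσ' : σ ≠ 0 := ne_of_gt hσ
  have hnv' : ‖v‖ ≠ 0 := ne_of_gt hnv
  generalize ⟪v, m⟫ = a
  rw [inv_mul_eq_div, ← sub_div, div_div, mul_comm ‖v‖ σ]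

lemma rpow_gaussDen_mul (hσ : 0 < σ) (r : ℝ) (μ μ' x : EuclideanSpace ℝ (Fin d)) :
    gaussDen d σ μ x ^ r * gaussDen d σ μ' x ^ (1 - r)
      = Real.exp (r * (r - 1) * (‖μ - μ'‖ ^ 2 / (2 * σ ^ 2)))
        * gaussDen d σ (r • μ + (1 - r) • μ') x := by
  have ha : (0:ℝ) < 2 * Real.pi * σ ^ 2 := by positivity
  unfold gaussDen
  have hC : (0:ℝ) < (2 * Real.pi * σ ^ 2) ^ (-(d : ℝ) / 2) := Real.rpow_pos_of_pos ha _
  have hexp : ∀ (w t : ℝ), Real.exp w ^ t = Real.exp (t * w) := by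
    intro w t
    rw [Real.rpow_def_of_pos (Real.exp_pos w), Real.log_exp, mul_comm]
  rw [Real.mul_rpow hC.le (Real.exp_nonneg _), Real.mul_rpow hC.le (Real.exp_nonneg _),
    hexp, hexp]
  have harr : ∀ p₁ q₁ p₂ q₂ : ℝ, (p₁ * q₁) * (p₂ * q₂) = (p₁ * p₂) * (q₁ * q₂) := by
    intros; ring
  rw [harr]
  have e2 : ((2 * Real.pi * σ ^ 2) ^ (-(d : ℝ) / 2)) ^ r
      * ((2 * Real.pi * σ ^ 2) ^ (-(d : ℝ) / 2)) ^ (1 - r)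
      = (2 * Real.pi * σ ^ 2) ^ (-(d : ℝ) / 2) := by
    rw [← Real.rpow_mul ha.le, ← Real.rpow_mul ha.le, ← Real.rpow_add ha,
      show -(d : ℝ) / 2 * r + -(d : ℝ) / 2 * (1 - r) = -(d : ℝ) / 2 by ring]
  rw [e2, ← Real.exp_add, mul_left_comm, ← Real.exp_add]
  congr 1
  have hkey := key_sq r x μ μ'
  have hσ2 : σ ^ 2 ≠ 0 := by positivity
  field_simp
  rw [Real.exp_eq_exp, div_left_inj' (by positivity)]
  linear_combination (-1 : ℝ) * hkey

lemma partA (hσ : 0 < σ) (μ μ' : EuclideanSpace ℝ (Fin d)) (r : ℝ) (hr : 1 < r) :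
    (1 / (r - 1)) * Real.log (∫ x, gaussDen d σ μ x ^ r * gaussDen d σ μ' x ^ (1 - r))
      = (‖μ - μ'‖ ^ 2 / (2 * σ ^ 2)) * r := by
  have hint : ∫ x, gaussDen d σ μ x ^ r * gaussDen d σ μ' x ^ (1 - r)
      = Real.exp (r * (r - 1) * (‖μ - μ'‖ ^ 2 / (2 * σ ^ 2))) := by
    rw [integral_congr_ae (ae_of_all _ (rpow_gaussDen_mul hσ r μ μ')),
      integral_const_mul, integral_gaussDen hσ, mul_one]
  rw [hint, Real.log_exp]
  have hr1 : r - 1 ≠ 0 := sub_ne_zero.mpr (ne_of_gt hr)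
  field_simp

lemma privProfile_eq {α : Type*} [MeasurableSpace α] (ν : Measure α)
    (p q : α → ℝ) (hp : Integrable p ν) (hq : Integrable q ν)
    (hp0 : ∀ x, 0 ≤ p x) (hq0 : ∀ x, 0 ≤ q x) (ε : ℝ)
    (S : Set α) (hS : MeasurableSet S) (hSdef : ∀ x, x ∈ S ↔ Real.exp ε * q x < p x) :
    privProfile (ν.withDensity fun x => ENNReal.ofReal (p x))
      (ν.withDensity fun x => ENNReal.ofReal (q x)) ε
      = (∫ x in S, p x ∂ν) - Real.exp ε * ∫ x in S, q x ∂ν := by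
  have hPT : ∀ (f : α → ℝ), Integrable f ν → (∀ x, 0 ≤ f x) → ∀ T : Set α, MeasurableSet T →
      ((ν.withDensity fun x => ENNReal.ofReal (f x)) T).toReal = ∫ x in T, f x ∂ν := by
    intro f hf hf0 T hT
    rw [withDensity_apply _ hT,
      ← ofReal_integral_eq_lintegral_ofReal hf.restrict (ae_of_all _ hf0),
      ENNReal.toReal_ofReal (integral_nonneg hf0)]
  set g : α → ℝ := fun x => p x - Real.exp ε * q x with hg
  have hgi : Integrable g ν := hp.sub (hq.const_mul _)
  have hgp : Integrable (fun x => max (g x) 0) ν := hgi.pos_part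
  have hind : (fun x => max (g x) 0) = S.indicator g := by
    classical
    funext x
    rw [Set.indicator_apply]
    by_cases hx : x ∈ S
    · rw [if_pos hx]
      exact max_eq_left (sub_nonneg.mpr (le_of_lt ((hSdef x).mp hx)))
    · rw [if_neg hx]
      refine max_eq_right (sub_nonpos.mpr ?_)
      by_contra hcon
      push_neg at hcon
      exact hx ((hSdef x).mpr hcon)
  have hval : ∀ T : Set α, MeasurableSet T →
      ((ν.withDensity fun x => ENNReal.ofReal (p x)) T).toReal
        - Real.exp ε * ((ν.withDensity fun x => ENNReal.ofReal (q x)) T).toReal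
      = ∫ x in T, g x ∂ν := by
    intro T hT
    rw [hPT p hp hp0 T hT, hPT q hq hq0 T hT, hg]
    rw [integral_sub hp.restrict ((hq.restrict).const_mul _), integral_const_mul]
  have hbound : ∀ T : Set α, MeasurableSet T →
      ∫ x in T, g x ∂ν ≤ ∫ x, max (g x) 0 ∂ν := by
    intro T hT
    calc ∫ x in T, g x ∂ν ≤ ∫ x in T, max (g x) 0 ∂ν :=
          integral_mono hgi.restrict hgp.restrict (fun x => le_max_left _ _)
      _ ≤ ∫ x, max (g x) 0 ∂ν :=
          setIntegral_le_integral hgp (ae_of_all _ fun x => le_max_right _ _)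
  have hSmax : ∫ x, max (g x) 0 ∂ν = ∫ x in S, g x ∂ν := by
    rw [hind, integral_indicator hS]
  have hfinal : privProfile (ν.withDensity fun x => ENNReal.ofReal (p x))
      (ν.withDensity fun x => ENNReal.ofReal (q x)) ε = ∫ x in S, g x ∂ν := by
    unfold privProfile
    haveI : Nonempty {T : Set α // MeasurableSet T} := ⟨⟨∅, MeasurableSet.empty⟩⟩
    have hb : BddAbove (Set.range fun T : {T : Set α // MeasurableSet T} =>
        ((ν.withDensity fun x => ENNReal.ofReal (p x)) T.1).toReal
          - Real.exp ε * ((ν.withDensity fun x => ENNReal.ofReal (q x)) T.1).toReal) := by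
      refine ⟨∫ x, max (g x) 0 ∂ν, ?_⟩
      rintro y ⟨⟨T, hT⟩, rfl⟩
      simp only
      rw [hval T hT]
      exact hbound T hT
    apply le_antisymm
    · apply ciSup_le
      rintro ⟨T, hT⟩
      simp only
      rw [hval T hT, ← hSmax]
      exact hbound T hT
    · have h2 := le_ciSup hb ⟨S, hS⟩
      simp only at h2
      rw [hval S hS] at h2
      exact h2
  rw [hfinal, hg, integral_sub hp.restrict ((hq.restrict).const_mul _), integral_const_mul]

end GaussAux




open GaussAux in
theorem gaussian_privacy (d : ℕ) (hd : 1 ≤ d) (σ : ℝ) (hσ : 0 < σ)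
    (μ μ' : EuclideanSpace ℝ (Fin d)) (hμ : μ ≠ μ') :
    (∀ r : ℝ, 1 < r →
      (1 / (r - 1)) * Real.log (∫ x, gaussDen d σ μ x ^ r * gaussDen d σ μ' x ^ (1 - r))
        = (‖μ - μ'‖ ^ 2 / (2 * σ ^ 2)) * r) ∧
    (∀ ε : ℝ,
      privProfile
          (volume.withDensity (fun x => ENNReal.ofReal (gaussDen d σ μ x)))
          (volume.withDensity (fun x => ENNReal.ofReal (gaussDen d σ μ' x))) ε
        = stdNormalSurvival
            ((ε - ‖μ - μ'‖ ^ 2 / (2 * σ ^ 2)) / Real.sqrt (2 * (‖μ - μ'‖ ^ 2 / (2 * σ ^ 2))))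
          - Real.exp ε * stdNormalSurvival
            ((ε + ‖μ - μ'‖ ^ 2 / (2 * σ ^ 2)) / Real.sqrt (2 * (‖μ - μ'‖ ^ 2 / (2 * σ ^ 2))))) := by
  haveI : NeZero d := ⟨Nat.one_le_iff_ne_zero.mp hd⟩
  constructor
  · intro r hr
    exact partA hσ μ μ' r hr
  · intro ε
    have hv : μ - μ' ≠ 0 := sub_ne_zero.mpr hμ
    have hnv : (0:ℝ) < ‖μ - μ'‖ := norm_pos_iff.mpr hv
    have hσ2 : (0:ℝ) < σ ^ 2 := by positivity
    set t : ℝ := σ ^ 2 * ε + (‖μ‖ ^ 2 - ‖μ'‖ ^ 2) / 2 with ht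
    set S : Set (EuclideanSpace ℝ (Fin d)) := {x | t < ⟪x, μ - μ'⟫} with hSdef'
    have hS : MeasurableSet S := by
      apply measurableSet_lt measurable_const
      exact (Continuous.inner continuous_id continuous_const).measurable
    have hmem : ∀ x, x ∈ S ↔
        Real.exp ε * gaussDen d σ μ' x < gaussDen d σ μ x := by
      intro x
      have hC : (0:ℝ) < (2 * Real.pi * σ ^ 2) ^ (-(d : ℝ) / 2) :=
        Real.rpow_pos_of_pos (by positivity) _
      rw [hSdef', Set.mem_setOf_eq]
      unfold gaussDen
      have hmm : Real.exp ε * ((2 * Real.pi * σ ^ 2) ^ (-(d : ℝ) / 2)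
            * Real.exp (-‖x - μ'‖ ^ 2 / (2 * σ ^ 2)))
          = (2 * Real.pi * σ ^ 2) ^ (-(d : ℝ) / 2)
            * Real.exp (ε + -‖x - μ'‖ ^ 2 / (2 * σ ^ 2)) := by
        rw [Real.exp_add]; ring
      rw [hmm, mul_lt_mul_iff_right₀ hC, Real.exp_lt_exp]
      have hAB : -‖x - μ‖ ^ 2 / (2 * σ ^ 2) - (ε + -‖x - μ'‖ ^ 2 / (2 * σ ^ 2))
          = (⟪x, μ - μ'⟫ - t) / σ ^ 2 := by
        have h2 := norm_sub_sq_real x μ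
        have h3 := norm_sub_sq_real x μ'
        have h4 : ⟪x, μ - μ'⟫ = ⟪x, μ⟫ - ⟪x, μ'⟫ := inner_sub_right _ _ _
        rw [h4, ht, h2, h3]
        generalize ⟪x, μ⟫ = a
        generalize ⟪x, μ'⟫ = b
        field_simp
        ring
      constructor
      · intro hx
        have h5 : 0 < (⟪x, μ - μ'⟫ - t) / σ ^ 2 := div_pos (sub_pos.mpr hx) hσ2
        rw [← hAB] at h5
        linarith
      · intro hx
        have h5 : 0 < (⟪x, μ - μ'⟫ - t) / σ ^ 2 := by
          rw [← hAB]; linarith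
        rw [lt_div_iff₀ hσ2, zero_mul] at h5
        linarith
    rw [privProfile_eq volume (gaussDen d σ μ) (gaussDen d σ μ')
      (integrable_gaussDen hσ μ) (integrable_gaussDen hσ μ')
      (fun x => (gaussDen_pos hσ μ x).le) (fun x => (gaussDen_pos hσ μ' x).le)
      ε S hS hmem]
    have hhalf : ∀ m : EuclideanSpace ℝ (Fin d),
        ∫ x in S, gaussDen d σ m x
          = stdNormalSurvival ((t - ⟪μ - μ', m⟫) / (σ * ‖μ - μ'‖)) := by
      intro m
      rw [← integral_indicator hS]
      have hptw : ∀ x, S.indicator (gaussDen d σ m) x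
          = if t < ⟪x, μ - μ'⟫ then gaussDen d σ m x else 0 := by
        intro x
        simp [Set.indicator_apply, hSdef', Set.mem_setOf_eq]
      rw [integral_congr_ae (ae_of_all _ hptw), halfspace_inner hσ m (μ - μ') hv t]
    rw [hhalf μ, hhalf μ']
    have hsqrt : Real.sqrt (2 * (‖μ - μ'‖ ^ 2 / (2 * σ ^ 2))) = ‖μ - μ'‖ / σ := by
      rw [show 2 * (‖μ - μ'‖ ^ 2 / (2 * σ ^ 2)) = (‖μ - μ'‖ / σ) ^ 2 by
        rw [div_pow]; field_simp]
      exact Real.sqrt_sq (by positivity)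
    have hvv := norm_sub_sq_real μ μ'
    have harg1 : (t - ⟪μ - μ', μ⟫) / (σ * ‖μ - μ'‖)
        = (ε - ‖μ - μ'‖ ^ 2 / (2 * σ ^ 2)) / Real.sqrt (2 * (‖μ - μ'‖ ^ 2 / (2 * σ ^ 2))) := by
      rw [hsqrt]
      have h1 : ⟪μ - μ', μ⟫ = ‖μ‖ ^ 2 - ⟪μ, μ'⟫ := by
        rw [inner_sub_left, real_inner_self_eq_norm_sq, real_inner_comm μ' μ]
      have hA : t - ⟪μ - μ', μ⟫ = σ ^ 2 * ε - ‖μ - μ'‖ ^ 2 / 2 := by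
        rw [ht, h1]
        generalize ⟪μ, μ'⟫ = a at hvv ⊢
        linarith
      rw [hA]
      rw [div_eq_div_iff (by positivity) (by positivity)]
      field_simp
    have harg2 : (t - ⟪μ - μ', μ'⟫) / (σ * ‖μ - μ'‖)
        = (ε + ‖μ - μ'‖ ^ 2 / (2 * σ ^ 2)) / Real.sqrt (2 * (‖μ - μ'‖ ^ 2 / (2 * σ ^ 2))) := by
      rw [hsqrt]
      have h1 : ⟪μ - μ', μ'⟫ = ⟪μ, μ'⟫ - ‖μ'‖ ^ 2 := by
        rw [inner_sub_left, real_inner_self_eq_norm_sq]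
      have hA : t - ⟪μ - μ', μ'⟫ = σ ^ 2 * ε + ‖μ - μ'‖ ^ 2 / 2 := by
        rw [ht, h1]
        generalize ⟪μ, μ'⟫ = a at hvv ⊢
        linarith
      rw [hA]
      rw [div_eq_div_iff (by positivity) (by positivity)]
      field_simp
    rw [harg1, harg2]
end

section
/- Let P = P₁ × P₂ and Q = Q₁ × Q₂ be product probability measures on Ω₁ × Ω₂, where each pair (Pᵢ, Qᵢ) is mutually absolutely continuous. Assume that δ_{P₂|Q₂} is twice continuously differentiable on ℝ with first and second derivatives δ̇_{P₂|Q₂} and δ̈_{P₂|Q₂}, and that there exists a real q > 1 such that t ↦ e^{(q−1)t} δ_{Pᵢ|Qᵢ}(t) is integrable on ℝ for i = 1, 2. Then for every ε ∈ ℝ, δ_{P|Q}(ε) = ∫_{−∞}^{∞} δ_{P₁|Q₁}(ε − τ) · ( δ̈_{P₂|Q₂}(τ) − δ̇_{P₂|Q₂}(τ) ) dτ. -/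
open MeasureTheory

section Aux

open Set Filter

variable {Ω : Type*} [MeasurableSpace Ω]

/-- integrability of a probability density -/
lemma privAux_integrable_of_density (μ : Measure Ω) (f : Ω → ℝ) (hf : Measurable f) (hf0 : 0 ≤ f)
    [h1 : IsProbabilityMeasure (μ.withDensity (fun x => ENNReal.ofReal (f x)))] :
    Integrable f μ := by
  have h : ∫⁻ x, ENNReal.ofReal (f x) ∂μ = 1 := by
    have := h1.measure_univ
    rwa [withDensity_apply _ MeasurableSet.univ, Measure.restrict_univ] at this
  refine ⟨hf.aestronglyMeasurable, ?_⟩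
  rw [hasFiniteIntegral_iff_ofReal (Filter.Eventually.of_forall fun x => hf0 x), h]
  exact ENNReal.one_lt_top

/-- measure of a set via density -/
lemma privAux_toReal_density_apply (μ : Measure Ω) (f : Ω → ℝ) (hf0 : 0 ≤ f)
    (hfi : Integrable f μ) {S : Set Ω} (hS : MeasurableSet S) :
    ((μ.withDensity (fun x => ENNReal.ofReal (f x))) S).toReal = ∫ x in S, f x ∂μ := by
  rw [withDensity_apply _ hS,
    ← ofReal_integral_eq_lintegral_ofReal (hfi.restrict)
      (Filter.Eventually.of_forall fun x => hf0 x),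
    ENNReal.toReal_ofReal (integral_nonneg (fun x => hf0 x))]

/-- The privacy profile of two measures given by densities, as an integral. -/
lemma privProfile_eq_integral (μ : Measure Ω) (P Q : Measure Ω)
    [IsProbabilityMeasure P] [IsProbabilityMeasure Q]
    (f g : Ω → ℝ) (hf : Measurable f) (hg : Measurable g) (hf0 : 0 ≤ f) (hg0 : 0 ≤ g)
    (hP : P = μ.withDensity (fun x => ENNReal.ofReal (f x)))
    (hQ : Q = μ.withDensity (fun x => ENNReal.ofReal (g x))) (ε : ℝ) :
    privProfile P Q ε = ∫ x, max (f x - Real.exp ε * g x) 0 ∂μ := by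
  have hPi : IsProbabilityMeasure (μ.withDensity (fun x => ENNReal.ofReal (f x))) :=
    hP ▸ inferInstance
  have hQi : IsProbabilityMeasure (μ.withDensity (fun x => ENNReal.ofReal (g x))) :=
    hQ ▸ inferInstance
  have hfi : Integrable f μ := privAux_integrable_of_density μ f hf hf0
  have hgi : Integrable g μ := privAux_integrable_of_density μ g hg hg0
  have hsub : Integrable (fun x => f x - Real.exp ε * g x) μ := hfi.sub (hgi.const_mul _)
  have hmax : Integrable (fun x => max (f x - Real.exp ε * g x) 0) μ := hsub.pos_part
  have hmax0 : ∀ x, 0 ≤ max (f x - Real.exp ε * g x) 0 := fun x => le_max_right _ _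
  have hbound : ∀ (S : Set Ω), MeasurableSet S →
      (P S).toReal - Real.exp ε * (Q S).toReal ≤ ∫ x, max (f x - Real.exp ε * g x) 0 ∂μ := by
    intro S hS
    rw [hP, hQ, privAux_toReal_density_apply μ f hf0 hfi hS,
      privAux_toReal_density_apply μ g hg0 hgi hS,
      ← integral_const_mul, ← integral_sub hfi.restrict ((hgi.const_mul _).restrict)]
    calc ∫ x in S, (f x - Real.exp ε * g x) ∂μ
        ≤ ∫ x in S, max (f x - Real.exp ε * g x) 0 ∂μ :=
          integral_mono_ae hsub.restrict hmax.restrict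
            (Filter.Eventually.of_forall fun x => le_max_left _ _)
      _ ≤ ∫ x, max (f x - Real.exp ε * g x) 0 ∂μ :=
          setIntegral_le_integral hmax (Filter.Eventually.of_forall hmax0)
  set S₀ : Set Ω := {x | Real.exp ε * g x < f x} with hS₀def
  have hS₀ : MeasurableSet S₀ := measurableSet_lt (hg.const_mul _) hf
  have heq : (P S₀).toReal - Real.exp ε * (Q S₀).toReal
      = ∫ x, max (f x - Real.exp ε * g x) 0 ∂μ := by
    rw [hP, hQ, privAux_toReal_density_apply μ f hf0 hfi hS₀,
      privAux_toReal_density_apply μ g hg0 hgi hS₀,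
      ← integral_const_mul, ← integral_sub hfi.restrict ((hgi.const_mul _).restrict),
      ← integral_indicator hS₀]
    congr 1
    funext x
    by_cases hx : x ∈ S₀
    · rw [Set.indicator_of_mem hx]
      exact (max_eq_left (by simp only [hS₀def, Set.mem_setOf_eq] at hx; linarith)).symm
    · rw [Set.indicator_of_notMem hx]
      simp only [hS₀def, Set.mem_setOf_eq, not_lt] at hx
      exact (max_eq_right (by linarith)).symm
  unfold privProfile
  have hne : Nonempty {S : Set Ω // MeasurableSet S} := ⟨⟨∅, MeasurableSet.empty⟩⟩
  have hbdd : BddAbove (Set.range fun S : {S : Set Ω // MeasurableSet S} =>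
      ((P S.1).toReal - Real.exp ε * (Q S.1).toReal)) := by
    refine ⟨∫ x, max (f x - Real.exp ε * g x) 0 ∂μ, ?_⟩
    rintro y ⟨S, rfl⟩
    exact hbound S.1 S.2
  refine le_antisymm (ciSup_le fun S => hbound S.1 S.2) ?_
  rw [← heq]
  exact le_ciSup hbdd ⟨S₀, hS₀⟩

/-- products of measures given by densities -/
lemma privAux_withDensity_prod {Ω₁ Ω₂ : Type*} [MeasurableSpace Ω₁] [MeasurableSpace Ω₂]
    (μ₁ : Measure Ω₁) [SigmaFinite μ₁] (μ₂ : Measure Ω₂) [SigmaFinite μ₂]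
    (f₁ : Ω₁ → ENNReal) (f₂ : Ω₂ → ENNReal) (hf₁ : Measurable f₁) (hf₂ : Measurable f₂)
    [SigmaFinite (μ₁.withDensity f₁)] [SigmaFinite (μ₂.withDensity f₂)] :
    (μ₁.withDensity f₁).prod (μ₂.withDensity f₂)
      = (μ₁.prod μ₂).withDensity (fun z => f₁ z.1 * f₂ z.2) := by
  refine Measure.prod_eq fun s t hs ht => ?_
  rw [withDensity_apply _ (hs.prod ht), ← Measure.prod_restrict,
    lintegral_prod_mul hf₁.aemeasurable.restrict hf₂.aemeasurable.restrict,
    withDensity_apply _ hs, withDensity_apply _ ht]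

lemma privAux_exp_tail_integrable (τ c : ℝ) :
    IntegrableOn (fun σ => Real.exp (c - σ)) (Ioi τ) := by
  have h := (exp_neg_integrableOn_Ioi τ (b := 1) one_pos).const_mul (Real.exp c)
  simp [Real.exp_sub, mul_comm, div_eq_mul_inv, Real.exp_neg] at h ⊢
  exact h

/-- The key Fubini computation for the tail representation. -/
lemma privAux_fubini_tail (ν : Measure ℝ) [IsFiniteMeasure ν] (τ : ℝ) :
    ∫ l, max (1 - Real.exp (τ - l)) 0 ∂ν
      = ∫ σ in Ioi τ, Real.exp (τ - σ) * (ν (Ioi σ)).toReal := by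
  set T : ℝ → ℝ := fun σ => (ν (Ioi σ)).toReal with hT
  have hTanti : Antitone T := fun a b hab =>
    ENNReal.toReal_mono (measure_ne_top ν _) (measure_mono (Ioi_subset_Ioi hab))
  have hTmeas : Measurable T := hTanti.measurable
  have hT0 : ∀ σ, 0 ≤ T σ := fun σ => ENNReal.toReal_nonneg
  set k : ℝ × ℝ → ENNReal :=
    fun p => if p.2 < p.1 then ENNReal.ofReal (Real.exp (τ - p.2)) else 0 with hk
  have hkmeas : Measurable k := by
    refine Measurable.ite (measurableSet_lt measurable_snd measurable_fst) ?_ measurable_const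
    exact (Real.measurable_exp.comp (measurable_const.sub measurable_snd)).ennreal_ofReal
  have hpt : ∀ l, ENNReal.ofReal (max (1 - Real.exp (τ - l)) 0)
      = ∫⁻ σ in Ioi τ, k (l, σ) ∂volume := by
    intro l
    rcases le_or_gt l τ with hl | hl
    · have h0 : ∀ σ ∈ Ioi τ, k (l, σ) = 0 := by
        intro σ hσ
        have : ¬ σ < l := not_lt.2 (hl.trans (le_of_lt hσ))
        simp [hk, this]
      rw [setLIntegral_congr_fun measurableSet_Ioi h0]
      simp only [lintegral_zero]
      rw [max_eq_right (by simp [Real.one_le_exp_iff]; linarith), ENNReal.ofReal_zero]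
    · have hind : ∀ σ, σ ∈ Ioi τ → k (l, σ)
          = (Ioo τ l).indicator (fun σ => ENNReal.ofReal (Real.exp (τ - σ))) σ := by
        intro σ hσ
        have hσ' : τ < σ := hσ
        by_cases h2 : σ < l
        · simp [hk, Set.indicator_apply, Set.mem_Ioo, hσ', h2]
        · simp [hk, Set.indicator_apply, Set.mem_Ioo, h2]
      rw [setLIntegral_congr_fun measurableSet_Ioi hind,
        lintegral_indicator measurableSet_Ioo _, Measure.restrict_restrict measurableSet_Ioo]
      rw [Set.inter_eq_self_of_subset_left Ioo_subset_Ioi_self]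
      have hcalc : ∫ σ in Ioo τ l, Real.exp (τ - σ) = 1 - Real.exp (τ - l) := by
        rw [← integral_Ioc_eq_integral_Ioo, ← intervalIntegral.integral_of_le hl.le]
        have : ∀ σ ∈ Set.uIcc τ l,
            HasDerivAt (fun σ => -Real.exp (τ - σ)) (Real.exp (τ - σ)) σ := by
          intro σ _
          have h1 : HasDerivAt (fun σ : ℝ => τ - σ) (-1) σ :=
            ((hasDerivAt_id σ).const_sub τ).congr_deriv (by ring)
          exact ((Real.hasDerivAt_exp (τ - σ)).comp σ h1).neg.congr_deriv (by ring)
        rw [intervalIntegral.integral_eq_sub_of_hasDerivAt this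
          ((Real.continuous_exp.comp (continuous_const.sub continuous_id)).intervalIntegrable τ l)]
        ring_nf
        simp [Real.exp_sub]
        ring
      rw [← ofReal_integral_eq_lintegral_ofReal
        ((privAux_exp_tail_integrable τ τ).mono_set Ioo_subset_Ioi_self)
        (Filter.Eventually.of_forall fun σ => (Real.exp_pos _).le), hcalc,
        max_eq_left (by simp [Real.exp_le_one_iff]; linarith)]
  have hmaxint : Integrable (fun l => max (1 - Real.exp (τ - l)) 0) ν := by
    refine Integrable.mono' (integrable_const 1) ?_ ?_
    · exact ((continuous_const.sub (Real.continuous_exp.comp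
        (continuous_const.sub continuous_id))).max continuous_const).aestronglyMeasurable
    · refine Filter.Eventually.of_forall fun l => ?_
      rw [Real.norm_eq_abs, abs_of_nonneg (le_max_right _ _)]
      refine max_le ?_ zero_le_one
      have := (Real.exp_pos (τ - l)).le
      linarith
  have hRint : IntegrableOn (fun σ => Real.exp (τ - σ) * T σ) (Ioi τ) := by
    refine Integrable.mono' ((privAux_exp_tail_integrable τ τ).mul_const (T τ)) ?_ ?_
    · exact ((Real.continuous_exp.comp
        (continuous_const.sub continuous_id)).aestronglyMeasurable.mul
        hTmeas.aestronglyMeasurable).restrict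
    · refine (ae_restrict_iff' measurableSet_Ioi).2 (Filter.Eventually.of_forall fun σ hσ => ?_)
      rw [Real.norm_eq_abs, abs_of_nonneg (mul_nonneg (Real.exp_pos _).le (hT0 σ))]
      exact mul_le_mul_of_nonneg_left (hTanti (le_of_lt hσ)) (Real.exp_pos _).le
  have key : ENNReal.ofReal (∫ l, max (1 - Real.exp (τ - l)) 0 ∂ν)
      = ENNReal.ofReal (∫ σ in Ioi τ, Real.exp (τ - σ) * T σ) := by
    rw [ofReal_integral_eq_lintegral_ofReal hmaxint
        (Filter.Eventually.of_forall fun l => le_max_right _ _),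
      ofReal_integral_eq_lintegral_ofReal hRint
        (Filter.Eventually.of_forall fun σ => mul_nonneg (Real.exp_pos _).le (hT0 σ))]
    calc ∫⁻ l, ENNReal.ofReal (max (1 - Real.exp (τ - l)) 0) ∂ν
        = ∫⁻ l, ∫⁻ σ in Ioi τ, k (l, σ) ∂volume ∂ν := lintegral_congr hpt
      _ = ∫⁻ σ in Ioi τ, ∫⁻ l, k (l, σ) ∂ν ∂volume :=
          lintegral_lintegral_swap hkmeas.aemeasurable
      _ = ∫⁻ σ in Ioi τ, ENNReal.ofReal (Real.exp (τ - σ)) * ν (Ioi σ) ∂volume := by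
          refine setLIntegral_congr_fun measurableSet_Ioi
            (fun σ _ => ?_)
          rw [show (fun l => k (l, σ))
              = (Ioi σ).indicator (fun _ => ENNReal.ofReal (Real.exp (τ - σ)))
            from funext fun l => by simp [hk, Set.indicator_apply, Set.mem_Ioi]]
          rw [lintegral_indicator measurableSet_Ioi, setLIntegral_const]
      _ = ∫⁻ σ in Ioi τ, ENNReal.ofReal (Real.exp (τ - σ) * T σ) ∂volume := by
          refine setLIntegral_congr_fun measurableSet_Ioi
            (fun σ _ => ?_)
          rw [ENNReal.ofReal_mul (Real.exp_pos _).le, hT,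
            ENNReal.ofReal_toReal (measure_ne_top ν _)]
  have h1 : 0 ≤ ∫ l, max (1 - Real.exp (τ - l)) 0 ∂ν :=
    integral_nonneg fun l => le_max_right _ _
  have h2 : 0 ≤ ∫ σ in Ioi τ, Real.exp (τ - σ) * T σ :=
    integral_nonneg fun σ => mul_nonneg (Real.exp_pos _).le (hT0 σ)
  exact (ENNReal.ofReal_eq_ofReal_iff h1 h2).1 key

/-- right-continuity of the tail of a finite measure on `ℝ` -/
lemma privAux_tail_right_continuous (ν : Measure ℝ) [IsFiniteMeasure ν] (τ : ℝ) :
    Tendsto (fun σ => (ν (Ioi σ)).toReal) (nhdsWithin τ (Ioi τ)) (nhds ((ν (Ioi τ)).toReal)) := by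
  set T : ℝ → ℝ := fun σ => (ν (Ioi σ)).toReal with hT
  have hTanti : Antitone T := fun a b hab =>
    ENNReal.toReal_mono (measure_ne_top ν _) (measure_mono (Ioi_subset_Ioi hab))
  have hu : (⋃ n : ℕ, Ioi (τ + 1 / (n + 1))) = Ioi τ := by
    ext x
    simp only [Set.mem_iUnion, Set.mem_Ioi]
    constructor
    · rintro ⟨n, hn⟩
      have : (0:ℝ) < 1 / (n + 1) := by positivity
      linarith
    · intro hx
      obtain ⟨n, hn⟩ := exists_nat_one_div_lt (sub_pos.2 hx)
      exact ⟨n, by linarith⟩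
  have hmono : Monotone fun n : ℕ => Ioi (τ + 1 / ((n : ℝ) + 1)) := by
    intro n m hnm
    refine Ioi_subset_Ioi (add_le_add (le_refl τ) ?_)
    apply one_div_le_one_div_of_le (by positivity)
    exact_mod_cast add_le_add_left (Nat.cast_le.2 hnm) 1
  have hseq : Tendsto (fun n : ℕ => T (τ + 1 / (n + 1))) atTop (nhds (T τ)) := by
    have h1 := tendsto_measure_iUnion_atTop (μ := ν) hmono
    rw [hu] at h1
    exact (ENNReal.tendsto_toReal (measure_ne_top ν _)).comp h1
  rw [Metric.tendsto_nhdsWithin_nhds]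
  intro ε hε
  obtain ⟨n, hn⟩ := (Metric.tendsto_atTop.1 hseq) ε hε
  have hδ : (0:ℝ) < 1 / (n + 1) := by positivity
  refine ⟨1 / (n + 1), hδ, fun {σ} hσ hd => ?_⟩
  have hσ' : τ < σ := hσ
  have hσ'' : σ < τ + 1 / (n + 1) := by
    rw [Real.dist_eq, abs_of_pos (sub_pos.2 hσ')] at hd
    linarith
  have h1 : T σ ≤ T τ := hTanti hσ'.le
  have h2 : T (τ + 1 / (n + 1)) ≤ T σ := hTanti hσ''.le
  have h3 := hn n le_rfl
  rw [Real.dist_eq] at h3 ⊢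
  rw [abs_of_nonpos (by linarith)] at h3 ⊢
  linarith

/-- differentiating the tail representation identifies the tail function. -/
lemma privAux_tail_eq_sub_deriv (ν : Measure ℝ) [IsFiniteMeasure ν] (φ : ℝ → ℝ)
    (hφd : Differentiable ℝ φ)
    (hrep : ∀ τ, Real.exp (-τ) * φ τ
      = ∫ σ in Ioi τ, Real.exp (-σ) * (ν (Ioi σ)).toReal) (τ : ℝ) :
    (ν (Ioi τ)).toReal = φ τ - deriv φ τ := by
  set T : ℝ → ℝ := fun σ => (ν (Ioi σ)).toReal with hT
  have hTanti : Antitone T := fun a b hab =>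
    ENNReal.toReal_mono (measure_ne_top ν _) (measure_mono (Ioi_subset_Ioi hab))
  have hTmeas : Measurable T := hTanti.measurable
  have hT0 : ∀ σ, 0 ≤ T σ := fun σ => ENNReal.toReal_nonneg
  set K : ℝ → ℝ := fun τ => Real.exp (-τ) * φ τ with hK
  have hIint : ∀ a : ℝ, IntegrableOn (fun σ => Real.exp (-σ) * T σ) (Ioi a) := by
    intro a
    have base : IntegrableOn (fun σ => Real.exp (-σ)) (Ioi a) := by
      simpa using privAux_exp_tail_integrable a 0
    refine Integrable.mono' (base.mul_const (T a)) ?_ ?_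
    · exact ((Real.continuous_exp.comp continuous_neg).aestronglyMeasurable.mul
        hTmeas.aestronglyMeasurable).restrict
    · refine (ae_restrict_iff' measurableSet_Ioi).2 (Filter.Eventually.of_forall fun σ hσ => ?_)
      rw [Real.norm_eq_abs, abs_of_nonneg (mul_nonneg (Real.exp_pos _).le (hT0 σ))]
      exact mul_le_mul_of_nonneg_left (hTanti (le_of_lt hσ)) (Real.exp_pos _).le
  have hdiff : ∀ σ, τ < σ → K τ - K σ = ∫ u in Ioc τ σ, Real.exp (-u) * T u := by
    intro σ hσ
    have := setIntegral_union (f := fun u => Real.exp (-u) * T u) (μ := volume)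
      Ioc_disjoint_Ioi_same measurableSet_Ioi
      ((hIint τ).mono_set Ioc_subset_Ioi_self) (hIint σ)
    rw [Ioc_union_Ioi_eq_Ioi hσ.le] at this
    rw [hK]
    simp only []
    rw [hrep τ, hrep σ, this]
    ring
  have hKd : HasDerivAt K (Real.exp (-τ) * deriv φ τ - Real.exp (-τ) * φ τ) τ := by
    have h1 : HasDerivAt (fun t : ℝ => Real.exp (-t)) (-Real.exp (-τ)) τ := by
      simpa using (hasDerivAt_neg τ).exp
    have h2 : HasDerivAt φ (deriv φ τ) τ := (hφd τ).hasDerivAt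
    exact (h1.mul h2).congr_deriv (by ring)
  have hslope1 : Tendsto (slope K τ) (nhdsWithin τ (Ioi τ))
      (nhds (Real.exp (-τ) * deriv φ τ - Real.exp (-τ) * φ τ)) :=
    ((hasDerivAt_iff_tendsto_slope.1 hKd).mono_left
      (nhdsWithin_mono τ fun x hx => ne_of_gt hx))
  have hslope2 : Tendsto (slope K τ) (nhdsWithin τ (Ioi τ))
      (nhds (-(Real.exp (-τ) * T τ))) := by
    have hub : Tendsto (fun σ => -(Real.exp (-σ) * T σ)) (nhdsWithin τ (Ioi τ))
        (nhds (-(Real.exp (-τ) * T τ))) := by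
      refine Tendsto.neg (Tendsto.mul ?_ (privAux_tail_right_continuous ν τ))
      exact ((Real.continuous_exp.comp continuous_neg).continuousAt).continuousWithinAt
    refine tendsto_of_tendsto_of_tendsto_of_le_of_le' tendsto_const_nhds hub ?_ ?_
    · filter_upwards [self_mem_nhdsWithin] with σ hσ
      have hσ' : τ < σ := hσ
      have hle : ∫ u in Ioc τ σ, Real.exp (-u) * T u
          ≤ ∫ u in Ioc τ σ, Real.exp (-τ) * T τ := by
        refine setIntegral_mono_on ((hIint τ).mono_set Ioc_subset_Ioi_self)
          (integrableOn_const measure_Ioc_lt_top.ne) measurableSet_Ioc fun u hu => ?_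
        exact mul_le_mul (Real.exp_le_exp.2 (by linarith [hu.1])) (hTanti hu.1.le)
          (hT0 u) (Real.exp_pos _).le
      rw [setIntegral_const, measureReal_def, Real.volume_Ioc, ENNReal.toReal_ofReal (by linarith),
        smul_eq_mul] at hle
      rw [slope_def_field, le_div_iff₀ (by linarith : (0:ℝ) < σ - τ)]
      have hd := hdiff σ hσ'
      nlinarith
    · filter_upwards [self_mem_nhdsWithin] with σ hσ
      have hσ' : τ < σ := hσ
      have hge : ∫ u in Ioc τ σ, Real.exp (-σ) * T σ
          ≤ ∫ u in Ioc τ σ, Real.exp (-u) * T u := by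
        refine setIntegral_mono_on (integrableOn_const measure_Ioc_lt_top.ne)
          ((hIint τ).mono_set Ioc_subset_Ioi_self) measurableSet_Ioc fun u hu => ?_
        exact mul_le_mul (Real.exp_le_exp.2 (by linarith [hu.2])) (hTanti hu.2)
          (hT0 σ) (Real.exp_pos _).le
      rw [setIntegral_const, measureReal_def, Real.volume_Ioc, ENNReal.toReal_ofReal (by linarith),
        smul_eq_mul] at hge
      rw [slope_def_field, div_le_iff₀ (by linarith : (0:ℝ) < σ - τ)]
      have hd := hdiff σ hσ'
      nlinarith
  have huniq := tendsto_nhds_unique hslope1 hslope2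
  have hexp := Real.exp_pos (-τ)
  have : Real.exp (-τ) * (deriv φ τ - φ τ + T τ) = 0 := by ring_nf; ring_nf at huniq; linarith
  rcases mul_eq_zero.1 this with h | h
  · exact absurd h (ne_of_gt hexp)
  · linarith

lemma privAux_antitone_deriv_nonpos {W : ℝ → ℝ} {τ : ℝ} (hW : Antitone W)
    (hd : DifferentiableAt ℝ W τ) : deriv W τ ≤ 0 := by
  have h1 : Tendsto (slope W τ) (nhdsWithin τ (Ioi τ)) (nhds (deriv W τ)) :=
    (hasDerivAt_iff_tendsto_slope.1 hd.hasDerivAt).mono_left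
      (nhdsWithin_mono τ fun x hx => ne_of_gt hx)
  refine le_of_tendsto h1 ?_
  filter_upwards [self_mem_nhdsWithin] with σ hσ
  have hσ' : τ < σ := hσ
  rw [slope_def_field]
  apply div_nonpos_of_nonpos_of_nonneg
  · linarith [hW hσ'.le]
  · linarith

/-- a finite measure on `ℝ` with differentiable tail function is given by a density. -/
lemma privAux_measure_eq_withDensity (ν : Measure ℝ) [IsFiniteMeasure ν] (W : ℝ → ℝ)
    (hW : ∀ τ, W τ = (ν (Ioi τ)).toReal)
    (hWd : Differentiable ℝ W) (hW'cont : Continuous (deriv W)) :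
    ν = volume.withDensity (fun τ => ENNReal.ofReal (-(deriv W τ))) := by
  have hWanti : Antitone W := by
    intro a b hab
    rw [hW a, hW b]
    exact ENNReal.toReal_mono (measure_ne_top ν _) (measure_mono (Ioi_subset_Ioi hab))
  refine Measure.ext_of_Ioc' ν _ (fun a b _ => measure_ne_top ν _) fun a b hab => ?_
  have hsplit : ν (Ioi a) = ν (Ioc a b) + ν (Ioi b) := by
    rw [← measure_union Ioc_disjoint_Ioi_same measurableSet_Ioi, Ioc_union_Ioi_eq_Ioi hab.le]
  have h1 : (ν (Ioc a b)).toReal = W a - W b := by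
    rw [hW a, hW b, hsplit, ENNReal.toReal_add (measure_ne_top ν _) (measure_ne_top ν _)]
    ring
  have h2 : ν (Ioc a b) = ENNReal.ofReal (W a - W b) := by
    rw [← h1, ENNReal.ofReal_toReal (measure_ne_top ν _)]
  rw [h2, withDensity_apply _ measurableSet_Ioc]
  have hnn : ∀ τ : ℝ, 0 ≤ -(deriv W τ) :=
    fun τ => neg_nonneg.2 (privAux_antitone_deriv_nonpos hWanti (hWd τ))
  have hint : IntegrableOn (fun τ => -(deriv W τ)) (Ioc a b) :=
    hW'cont.neg.integrableOn_Ioc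
  rw [← ofReal_integral_eq_lintegral_ofReal hint
    (Filter.Eventually.of_forall fun τ => hnn τ)]
  congr 1
  rw [← intervalIntegral.integral_of_le hab.le, intervalIntegral.integral_neg,
    intervalIntegral.integral_deriv_eq_sub (fun x _ => hWd x)
      (hW'cont.intervalIntegrable a b)]
  ring

end Aux

theorem compose_privacy_profiles
    {Ω₁ Ω₂ : Type*} [MeasurableSpace Ω₁] [MeasurableSpace Ω₂]
    (μ₁ : Measure Ω₁) [SigmaFinite μ₁] (μ₂ : Measure Ω₂) [SigmaFinite μ₂]
    (P₁ Q₁ : Measure Ω₁) [IsProbabilityMeasure P₁] [IsProbabilityMeasure Q₁]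
    (P₂ Q₂ : Measure Ω₂) [IsProbabilityMeasure P₂] [IsProbabilityMeasure Q₂]
    (f₁ g₁ : Ω₁ → ℝ) (f₂ g₂ : Ω₂ → ℝ)
    (hf₁ : Measurable f₁) (hg₁ : Measurable g₁)
    (hf₂ : Measurable f₂) (hg₂ : Measurable g₂)
    (hf₁0 : 0 ≤ f₁) (hg₁0 : 0 ≤ g₁) (hf₂0 : 0 ≤ f₂) (hg₂0 : 0 ≤ g₂)
    (hP₁ : P₁ = μ₁.withDensity (fun θ => ENNReal.ofReal (f₁ θ)))
    (hQ₁ : Q₁ = μ₁.withDensity (fun θ => ENNReal.ofReal (g₁ θ)))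
    (hP₂ : P₂ = μ₂.withDensity (fun θ => ENNReal.ofReal (f₂ θ)))
    (hQ₂ : Q₂ = μ₂.withDensity (fun θ => ENNReal.ofReal (g₂ θ)))
    (hac₁ : ∀ᵐ θ ∂μ₁, (0 < f₁ θ ↔ 0 < g₁ θ))
    (hac₂ : ∀ᵐ θ ∂μ₂, (0 < f₂ θ ↔ 0 < g₂ θ))
    (hsmooth : ContDiff ℝ 2 (privProfile P₂ Q₂))
    (hint : ∃ r : ℝ, 1 < r ∧
      Integrable (fun t => Real.exp ((r - 1) * t) * privProfile P₁ Q₁ t) ∧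
      Integrable (fun t => Real.exp ((r - 1) * t) * privProfile P₂ Q₂ t))
    (ε : ℝ) :
    privProfile (P₁.prod P₂) (Q₁.prod Q₂) ε
      = ∫ τ : ℝ, privProfile P₁ Q₁ (ε - τ) *
          (deriv (deriv (privProfile P₂ Q₂)) τ - deriv (privProfile P₂ Q₂) τ) := by
  classical
  haveI hP₁i : IsProbabilityMeasure (μ₁.withDensity fun θ => ENNReal.ofReal (f₁ θ)) :=
    hP₁ ▸ inferInstance
  haveI hQ₁i : IsProbabilityMeasure (μ₁.withDensity fun θ => ENNReal.ofReal (g₁ θ)) :=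
    hQ₁ ▸ inferInstance
  haveI hP₂i : IsProbabilityMeasure (μ₂.withDensity fun θ => ENNReal.ofReal (f₂ θ)) :=
    hP₂ ▸ inferInstance
  haveI hQ₂i : IsProbabilityMeasure (μ₂.withDensity fun θ => ENNReal.ofReal (g₂ θ)) :=
    hQ₂ ▸ inferInstance
  haveI i1 : SigmaFinite (μ₁.withDensity fun θ => ENNReal.ofReal (f₁ θ)) := inferInstance
  haveI i2 : SigmaFinite (μ₂.withDensity fun θ => ENNReal.ofReal (f₂ θ)) := inferInstance
  haveI i3 : SigmaFinite (μ₁.withDensity fun θ => ENNReal.ofReal (g₁ θ)) := inferInstance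
  haveI i4 : SigmaFinite (μ₂.withDensity fun θ => ENNReal.ofReal (g₂ θ)) := inferInstance
  have hf₁i : Integrable f₁ μ₁ := privAux_integrable_of_density μ₁ f₁ hf₁ hf₁0
  have hf₂i : Integrable f₂ μ₂ := privAux_integrable_of_density μ₂ f₂ hf₂ hf₂0
  set D1 : ℝ → ℝ := fun t => ∫ x, max (f₁ x - Real.exp t * g₁ x) 0 ∂μ₁ with hD1def
  set D2 : ℝ → ℝ := fun t => ∫ y, max (f₂ y - Real.exp t * g₂ y) 0 ∂μ₂ with hD2def
  have hD1 : ∀ t, privProfile P₁ Q₁ t = D1 t := fun t =>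
    privProfile_eq_integral μ₁ P₁ Q₁ f₁ g₁ hf₁ hg₁ hf₁0 hg₁0 hP₁ hQ₁ t
  have hD2 : ∀ t, privProfile P₂ Q₂ t = D2 t := fun t =>
    privProfile_eq_integral μ₂ P₂ Q₂ f₂ g₂ hf₂ hg₂ hf₂0 hg₂0 hP₂ hQ₂ t
  have hφ : privProfile P₂ Q₂ = D2 := funext hD2
  -- continuity of D1
  have hD1cont : Continuous D1 := by
    rw [hD1def]
    refine continuous_iff_continuousAt.2 fun t₀ => ?_
    refine continuousAt_of_dominated ?_ ?_ hf₁i ?_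
    · exact Filter.Eventually.of_forall fun t =>
        ((hf₁.sub (hg₁.const_mul _)).max measurable_const).aestronglyMeasurable
    · refine Filter.Eventually.of_forall fun t => Filter.Eventually.of_forall fun x => ?_
      rw [Real.norm_eq_abs, abs_of_nonneg (le_max_right _ _)]
      refine max_le ?_ (hf₁0 x)
      have : 0 ≤ Real.exp t * g₁ x := mul_nonneg (Real.exp_pos _).le (hg₁0 x)
      linarith
    · exact Filter.Eventually.of_forall fun x =>
        ((continuous_const.sub ((Real.continuous_exp.mul continuous_const))).max
          continuous_const).continuousAt
  -- the privacy loss map and its pushforward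
  set L : Ω₂ → ℝ := fun y => Real.log (f₂ y / g₂ y) with hLdef
  have hLmeas : Measurable L := (hf₂.div hg₂).log
  set ν : Measure ℝ := P₂.map L with hνdef
  haveI hνP : IsProbabilityMeasure ν := Measure.isProbabilityMeasure_map hLmeas.aemeasurable
  -- step (ii) : D2 as an integral against ν
  have hstep2 : ∀ τ, (∫ l, max (1 - Real.exp (τ - l)) 0 ∂ν) = D2 τ := by
    intro τ
    have hcont : Continuous fun l : ℝ => max (1 - Real.exp (τ - l)) 0 :=
      (continuous_const.sub (Real.continuous_exp.comp
        (continuous_const.sub continuous_id))).max continuous_const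
    rw [hνdef, integral_map hLmeas.aemeasurable hcont.aestronglyMeasurable, hP₂,
      show (fun θ => ENNReal.ofReal (f₂ θ)) = (fun θ => ((f₂ θ).toNNReal : ENNReal)) from rfl,
      integral_withDensity_eq_integral_smul hf₂.real_toNNReal _, hD2def]
    refine integral_congr_ae ?_
    filter_upwards [hac₂] with y hy
    rcases lt_or_eq_of_le (hf₂0 y) with hpos | hzero
    · have hgpos : 0 < g₂ y := hy.1 hpos
      have hexp : Real.exp (τ - L y) = Real.exp τ * g₂ y / f₂ y := by
        rw [Real.exp_sub, hLdef]
        simp only []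
        rw [Real.exp_log (div_pos hpos hgpos)]
        field_simp
      rw [NNReal.smul_def, Real.coe_toNNReal _ (hf₂0 y), smul_eq_mul, hexp,
        mul_max_of_nonneg _ _ (hf₂0 y)]
      congr 1
      · have hne : f₂ y ≠ 0 := hpos.ne'
        field_simp
      · ring
    · have hg0 : g₂ y = 0 := by
        by_contra hne
        have : 0 < g₂ y := lt_of_le_of_ne (hg₂0 y) (Ne.symm hne)
        have := hy.2 this
        rw [← hzero] at this
        exact lt_irrefl _ this
      rw [NNReal.smul_def, Real.coe_toNNReal _ (hf₂0 y), smul_eq_mul, ← hzero, hg0]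
      simp
  -- step (i) : the product profile as an integral against ν
  have hstep1 : privProfile (P₁.prod P₂) (Q₁.prod Q₂) ε = ∫ l, D1 (ε - l) ∂ν := by
    have hPprod : P₁.prod P₂
        = (μ₁.prod μ₂).withDensity (fun z => ENNReal.ofReal (f₁ z.1 * f₂ z.2)) := by
      rw [hP₁, hP₂, privAux_withDensity_prod μ₁ μ₂ _ _ hf₁.ennreal_ofReal hf₂.ennreal_ofReal]
      congr 1
      funext z
      exact (ENNReal.ofReal_mul (hf₁0 z.1)).symm
    have hQprod : Q₁.prod Q₂
        = (μ₁.prod μ₂).withDensity (fun z => ENNReal.ofReal (g₁ z.1 * g₂ z.2)) := by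
      rw [hQ₁, hQ₂, privAux_withDensity_prod μ₁ μ₂ _ _ hg₁.ennreal_ofReal hg₂.ennreal_ofReal]
      congr 1
      funext z
      exact (ENNReal.ofReal_mul (hg₁0 z.1)).symm
    have hmf : Measurable fun z : Ω₁ × Ω₂ => f₁ z.1 * f₂ z.2 :=
      (hf₁.comp measurable_fst).mul (hf₂.comp measurable_snd)
    have hmg : Measurable fun z : Ω₁ × Ω₂ => g₁ z.1 * g₂ z.2 :=
      (hg₁.comp measurable_fst).mul (hg₂.comp measurable_snd)
    have h0f : (0 : (Ω₁ × Ω₂) → ℝ) ≤ fun z => f₁ z.1 * f₂ z.2 :=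
      fun z => mul_nonneg (hf₁0 _) (hf₂0 _)
    have h0g : (0 : (Ω₁ × Ω₂) → ℝ) ≤ fun z => g₁ z.1 * g₂ z.2 :=
      fun z => mul_nonneg (hg₁0 _) (hg₂0 _)
    rw [privProfile_eq_integral (μ₁.prod μ₂) (P₁.prod P₂) (Q₁.prod Q₂) _ _ hmf hmg h0f h0g
      hPprod hQprod ε]
    have hintprod : Integrable
        (fun z : Ω₁ × Ω₂ => max (f₁ z.1 * f₂ z.2 - Real.exp ε * (g₁ z.1 * g₂ z.2)) 0)
        (μ₁.prod μ₂) := by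
      refine Integrable.mono' (hf₁i.mul_prod hf₂i) ?_ ?_
      · exact ((hmf.sub (hmg.const_mul _)).max measurable_const).aestronglyMeasurable
      · refine Filter.Eventually.of_forall fun z => ?_
        rw [Real.norm_eq_abs, abs_of_nonneg (le_max_right _ _)]
        refine max_le ?_ (mul_nonneg (hf₁0 _) (hf₂0 _))
        have : 0 ≤ Real.exp ε * (g₁ z.1 * g₂ z.2) :=
          mul_nonneg (Real.exp_pos _).le (mul_nonneg (hg₁0 _) (hg₂0 _))
        linarith
    rw [integral_prod_symm _ hintprod]
    have hinner : ∀ᵐ y ∂μ₂,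
        (∫ x, max (f₁ x * f₂ y - Real.exp ε * (g₁ x * g₂ y)) 0 ∂μ₁)
          = f₂ y * D1 (ε - L y) := by
      filter_upwards [hac₂] with y hy
      rcases lt_or_eq_of_le (hf₂0 y) with hpos | hzero
      · have hgpos : 0 < g₂ y := hy.1 hpos
        have hexp : Real.exp (ε - L y) = Real.exp ε * g₂ y / f₂ y := by
          rw [Real.exp_sub, hLdef]
          simp only []
          rw [Real.exp_log (div_pos hpos hgpos)]
          field_simp
        rw [hD1def]
        simp only []
        rw [← integral_const_mul]
        refine integral_congr_ae (Filter.Eventually.of_forall fun x => ?_)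
        beta_reduce
        rw [mul_max_of_nonneg _ _ (hf₂0 y), hexp]
        congr 1
        · have hne : f₂ y ≠ 0 := hpos.ne'
          field_simp
        · ring
      · have hg0 : g₂ y = 0 := by
          by_contra hne
          have : 0 < g₂ y := lt_of_le_of_ne (hg₂0 y) (Ne.symm hne)
          have := hy.2 this
          rw [← hzero] at this
          exact lt_irrefl _ this
        rw [← hzero, hg0]
        simp
    rw [integral_congr_ae hinner, hνdef,
      integral_map hLmeas.aemeasurable
        ((show Continuous fun l : ℝ => D1 (ε - l) from
          hD1cont.comp (continuous_const.sub continuous_id)).aestronglyMeasurable), hP₂,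
      show (fun θ => ENNReal.ofReal (f₂ θ)) = (fun θ => ((f₂ θ).toNNReal : ENNReal)) from rfl,
      integral_withDensity_eq_integral_smul hf₂.real_toNNReal _]
    refine integral_congr_ae (Filter.Eventually.of_forall fun y => ?_)
    beta_reduce
    rw [NNReal.smul_def, Real.coe_toNNReal _ (hf₂0 y), smul_eq_mul]
  -- smoothness facts
  have hsm : ContDiff ℝ 2 D2 := by rw [← hφ]; exact hsmooth
  have hsm' : ContDiff ℝ ((1 : WithTop ℕ∞) + 1) D2 := by
    rw [show ((1 : WithTop ℕ∞) + 1) = 2 by norm_num]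
    exact hsm
  obtain ⟨hdiffD2, -, h21⟩ := contDiff_succ_iff_deriv.1 hsm'
  have hcont1 : Continuous (deriv D2) := h21.continuous
  have h21' : ContDiff ℝ ((0 : WithTop ℕ∞) + 1) (deriv D2) := by
    rw [show ((0 : WithTop ℕ∞) + 1) = 1 by norm_num]
    exact h21
  obtain ⟨hdd, -, h10⟩ := contDiff_succ_iff_deriv.1 h21'
  have hcont2 : Continuous (deriv (deriv D2)) := h10.continuous
  -- the tail representation
  have hrep : ∀ τ, Real.exp (-τ) * D2 τ
      = ∫ σ in Set.Ioi τ, Real.exp (-σ) * (ν (Set.Ioi σ)).toReal := by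
    intro τ
    have h1 : D2 τ = ∫ σ in Set.Ioi τ, Real.exp (τ - σ) * (ν (Set.Ioi σ)).toReal := by
      rw [← hstep2 τ, privAux_fubini_tail]
    rw [h1, ← integral_const_mul]
    refine setIntegral_congr_fun measurableSet_Ioi fun σ _ => ?_
    rw [← mul_assoc, ← Real.exp_add]
    ring_nf
  have htail : ∀ τ, (ν (Set.Ioi τ)).toReal = D2 τ - deriv D2 τ :=
    privAux_tail_eq_sub_deriv ν D2 hdiffD2 hrep
  -- identify ν as a measure with density
  set W : ℝ → ℝ := fun τ => D2 τ - deriv D2 τ with hWdef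
  have hWd : Differentiable ℝ W := hdiffD2.sub hdd
  have hderivW : ∀ τ, deriv W τ = deriv D2 τ - deriv (deriv D2) τ := by
    intro τ
    rw [hWdef]
    exact deriv_sub (hdiffD2 τ) (hdd τ)
  have hW'cont : Continuous (deriv W) := by
    have : deriv W = fun τ => deriv D2 τ - deriv (deriv D2) τ := funext hderivW
    rw [this]
    exact hcont1.sub hcont2
  have hν : ν = volume.withDensity (fun τ => ENNReal.ofReal (-(deriv W τ))) :=
    privAux_measure_eq_withDensity ν W (fun τ => (htail τ).symm) hWd hW'cont
  have hWanti : Antitone W := by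
    intro a b hab
    have ha := htail a
    have hb := htail b
    rw [hWdef]
    beta_reduce
    rw [← ha, ← hb]
    exact ENNReal.toReal_mono (measure_ne_top ν _)
      (measure_mono (Set.Ioi_subset_Ioi hab))
  have hnn : ∀ τ, 0 ≤ -(deriv W τ) :=
    fun τ => neg_nonneg.2 (privAux_antitone_deriv_nonpos hWanti (hWd τ))
  -- conclusion
  rw [hstep1, hν,
    show (fun τ => ENNReal.ofReal (-(deriv W τ)))
      = (fun τ => (((-(deriv W τ))).toNNReal : ENNReal)) from rfl,
    integral_withDensity_eq_integral_smul
      (show Measurable fun τ => -(deriv W τ) from hW'cont.neg.measurable).real_toNNReal _]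
  refine integral_congr_ae (Filter.Eventually.of_forall fun τ => ?_)
  beta_reduce
  rw [NNReal.smul_def, Real.coe_toNNReal _ (hnn τ), smul_eq_mul, hD1 (ε - τ), hφ, hderivW τ]
  ring
end

section
/- Let P₁, Q₁ be probability measures on Ω₁, let x ↦ P₂^x and x ↦ Q₂^x be Markov kernels from Ω₁ to Ω₂, and let P and Q be the joint measures on Ω₁ × Ω₂ with P(A) = ∫∫ 1_A(x,y) P₂^x(dy) P₁(dx) and Q(A) = ∫∫ 1_A(x,y) Q₂^x(dy) Q₁(dx). If there exist probability measures P₂, Q₂ on Ω₂ such that δ_{P₂^x|Q₂^x}(ε) ≤ δ_{P₂|Q₂}(ε) for all ε ∈ ℝ and all x ∈ Ω₁, then δ_{P|Q}(ε) ≤ δ_{P₁×P₂ | Q₁×Q₂}(ε) for all ε ∈ ℝ. -/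
open MeasureTheory ProbabilityTheory
open scoped ENNReal

section Aux

variable {Ω : Type*} [MeasurableSpace Ω]

instance : Nonempty {S : Set Ω // MeasurableSet S} := ⟨⟨∅, MeasurableSet.empty⟩⟩

lemma privProfile_bddAbove (P Q : Measure Ω) [IsProbabilityMeasure P] (ε : ℝ) :
    BddAbove (Set.range fun S : {S : Set Ω // MeasurableSet S} =>
      ((P S.1).toReal - Real.exp ε * (Q S.1).toReal)) := by
  refine ⟨1, ?_⟩
  rintro x ⟨S, rfl⟩
  have h1 : (P S.1).toReal ≤ 1 := by
    have h := ENNReal.toReal_mono ENNReal.one_ne_top (prob_le_one (μ := P) (s := S.1))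
    simpa using h
  have h2 : 0 ≤ Real.exp ε * (Q S.1).toReal :=
    mul_nonneg (Real.exp_pos ε).le ENNReal.toReal_nonneg
  simp only
  linarith

lemma le_privProfile (P Q : Measure Ω) [IsProbabilityMeasure P] (ε : ℝ) {S : Set Ω}
    (hS : MeasurableSet S) :
    (P S).toReal - Real.exp ε * (Q S).toReal ≤ privProfile P Q ε :=
  le_ciSup (privProfile_bddAbove P Q ε) (⟨S, hS⟩ : {S : Set Ω // MeasurableSet S})

lemma privProfile_le (P Q : Measure Ω) (ε : ℝ) {r : ℝ}
    (h : ∀ S : Set Ω, MeasurableSet S → (P S).toReal - Real.exp ε * (Q S).toReal ≤ r) :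
    privProfile P Q ε ≤ r :=
  ciSup_le fun S => h S.1 S.2

/-- Neyman–Pearson style optimality of the likelihood-ratio set, in `ℝ≥0∞` form. -/
lemma np_aux (P Q : Measure Ω) [IsFiniteMeasure P] [IsFiniteMeasure Q]
    (a b : ℝ≥0∞) {A : Set Ω} (hA : MeasurableSet A) :
    a * P A + b * Q {y | b * Q.rnDeriv (P + Q) y < a * P.rnDeriv (P + Q) y}
      ≤ a * P {y | b * Q.rnDeriv (P + Q) y < a * P.rnDeriv (P + Q) y} + b * Q A := by
  set ν := P + Q with hν
  set p := P.rnDeriv ν with hp'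
  set q := Q.rnDeriv ν with hq'
  have hp : Measurable p := Measure.measurable_rnDeriv _ _
  have hq : Measurable q := Measure.measurable_rnDeriv _ _
  set A' : Set Ω := {y | b * q y < a * p y} with hA'def
  have hA' : MeasurableSet A' := measurableSet_lt (hq.const_mul b) (hp.const_mul a)
  have hPac : P ≪ ν := Measure.absolutelyContinuous_of_le (Measure.le_add_right le_rfl)
  have hQac : Q ≪ ν := Measure.absolutelyContinuous_of_le (Measure.le_add_left le_rfl)
  have hPs : ∀ s : Set Ω, a * P s = ∫⁻ y in s, a * p y ∂ν := fun s => by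
    rw [lintegral_const_mul _ hp, Measure.setLIntegral_rnDeriv hPac]
  have hQs : ∀ s : Set Ω, b * Q s = ∫⁻ y in s, b * q y ∂ν := fun s => by
    rw [lintegral_const_mul _ hq, Measure.setLIntegral_rnDeriv hQac]
  rw [hPs A, hPs A', hQs A, hQs A']
  rw [← lintegral_inter_add_diff (fun y => a * p y) A hA',
      ← lintegral_inter_add_diff (fun y => b * q y) A' hA,
      ← lintegral_inter_add_diff (fun y => a * p y) A' hA,
      ← lintegral_inter_add_diff (fun y => b * q y) A hA']
  have e1 : ∫⁻ y in A ∩ A', a * p y ∂ν = ∫⁻ y in A' ∩ A, a * p y ∂ν := by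
    rw [Set.inter_comm]
  have e2 : ∫⁻ y in A' ∩ A, b * q y ∂ν = ∫⁻ y in A ∩ A', b * q y ∂ν := by
    rw [Set.inter_comm]
  have le1 : ∫⁻ y in A \ A', a * p y ∂ν ≤ ∫⁻ y in A \ A', b * q y ∂ν :=
    setLIntegral_mono (hq.const_mul b) fun y hy => le_of_not_gt hy.2
  have le2 : ∫⁻ y in A' \ A, b * q y ∂ν ≤ ∫⁻ y in A' \ A, a * p y ∂ν :=
    setLIntegral_mono (hp.const_mul a) fun y hy => (hy.1 : b * q y < a * p y).le
  rw [e1, e2, add_add_add_comm, add_add_add_comm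
    (∫⁻ y in A' ∩ A, a * p y ∂ν) (∫⁻ y in A' \ A, a * p y ∂ν)]
  exact add_le_add le_rfl ((add_le_add le1 le2).trans_eq (add_comm _ _))

/-- The key slice inequality. -/
lemma slice_ineq (μ ν P₂ Q₂ : Measure Ω)
    [IsProbabilityMeasure μ] [IsProbabilityMeasure ν]
    [IsProbabilityMeasure P₂] [IsProbabilityMeasure Q₂]
    (hdom : ∀ ε' : ℝ, privProfile μ ν ε' ≤ privProfile P₂ Q₂ ε')
    (a b : ℝ≥0∞) (ha : a ≠ ⊤) (hb : b ≠ ⊤) {S : Set Ω} (hS : MeasurableSet S) :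
    a * μ S + b * Q₂ {y | b * Q₂.rnDeriv (P₂ + Q₂) y < a * P₂.rnDeriv (P₂ + Q₂) y}
      ≤ a * P₂ {y | b * Q₂.rnDeriv (P₂ + Q₂) y < a * P₂.rnDeriv (P₂ + Q₂) y} + b * ν S := by
  set p := P₂.rnDeriv (P₂ + Q₂) with hp'
  set q := Q₂.rnDeriv (P₂ + Q₂) with hq'
  have hp : Measurable p := Measure.measurable_rnDeriv _ _
  have hq : Measurable q := Measure.measurable_rnDeriv _ _
  set A' : Set Ω := {y | b * q y < a * p y} with hA'def
  have hA' : MeasurableSet A' := measurableSet_lt (hq.const_mul b) (hp.const_mul a)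
  rcases eq_or_ne a 0 with ha0 | ha0
  · have hempty : A' = ∅ := by
      ext y
      simp [hA'def, ha0]
    simp [hempty, ha0]
  rcases eq_or_ne b 0 with hb0 | hb0
  · -- need μ S ≤ P₂ A'
    have hPac : P₂ ≪ (P₂ + Q₂) :=
      Measure.absolutelyContinuous_of_le (Measure.le_add_right le_rfl)
    have hcompl : P₂ A'ᶜ = 0 := by
      rw [← Measure.setLIntegral_rnDeriv hPac A'ᶜ]
      have hzero : ∀ y ∈ A'ᶜ, p y ≤ 0 := by
        intro y hy
        simp only [hA'def, Set.mem_compl_iff, Set.mem_setOf_eq, hb0, zero_mul, not_lt,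
          nonpos_iff_eq_zero, mul_eq_zero] at hy
        rcases hy with h | h
        · exact absurd h ha0
        · exact h.le
      refine le_antisymm ?_ zero_le
      calc ∫⁻ y in A'ᶜ, p y ∂(P₂ + Q₂) ≤ ∫⁻ y in A'ᶜ, 0 ∂(P₂ + Q₂) :=
            setLIntegral_mono measurable_const hzero
        _ = 0 := lintegral_zero
    have hone : (1 : ℝ≥0∞) ≤ P₂ A' := by
      calc (1 : ℝ≥0∞) = P₂ Set.univ := (measure_univ).symm
        _ = P₂ (A' ∪ A'ᶜ) := by rw [Set.union_compl_self]
        _ ≤ P₂ A' + P₂ A'ᶜ := measure_union_le _ _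
        _ = P₂ A' := by rw [hcompl, add_zero]
    have hμS : μ S ≤ P₂ A' := le_trans prob_le_one hone
    simp only [hb0, zero_mul, add_zero]
    exact mul_le_mul_right hμS a
  -- main case : a ≠ 0, b ≠ 0
  have ha' : 0 < a.toReal := ENNReal.toReal_pos ha0 ha
  have hb' : 0 < b.toReal := ENNReal.toReal_pos hb0 hb
  set ε' : ℝ := Real.log (b.toReal / a.toReal) with hε'
  have hexp : Real.exp ε' = b.toReal / a.toReal := Real.exp_log (div_pos hb' ha')
  have h1 : (μ S).toReal - Real.exp ε' * (ν S).toReal ≤ privProfile μ ν ε' :=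
    le_privProfile μ ν ε' hS
  have h2 : privProfile P₂ Q₂ ε' ≤ (P₂ A').toReal - Real.exp ε' * (Q₂ A').toReal := by
    refine privProfile_le P₂ Q₂ ε' fun A hA => ?_
    have hnp := np_aux P₂ Q₂ a b hA
    have hfin : ∀ (c : ℝ≥0∞) (m : Measure Ω) [IsFiniteMeasure m], c ≠ ⊤ → ∀ s : Set Ω,
        c * m s ≠ ⊤ := fun c m _ hc s => ENNReal.mul_ne_top hc (measure_ne_top m s)
    have hr : a.toReal * (P₂ A).toReal + b.toReal * (Q₂ A').toReal
        ≤ a.toReal * (P₂ A').toReal + b.toReal * (Q₂ A).toReal := by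
      rw [← ENNReal.toReal_mul, ← ENNReal.toReal_mul, ← ENNReal.toReal_mul,
        ← ENNReal.toReal_mul,
        ← ENNReal.toReal_add (hfin a P₂ ha A) (hfin b Q₂ hb A'),
        ← ENNReal.toReal_add (hfin a P₂ ha A') (hfin b Q₂ hb A)]
      exact ENNReal.toReal_mono
        (by exact ENNReal.add_ne_top.2 ⟨hfin a P₂ ha A', hfin b Q₂ hb A⟩) hnp
    rw [hexp]
    rw [div_mul_eq_mul_div, div_mul_eq_mul_div, sub_div' ha'.ne',
      sub_div' ha'.ne', div_le_div_iff₀ ha' ha']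
    nlinarith [hr, ha', hb']
  have hchain := le_trans h1 (le_trans (hdom ε') h2)
  -- multiply through by a.toReal
  have hreal : a.toReal * (μ S).toReal + b.toReal * (Q₂ A').toReal
      ≤ a.toReal * (P₂ A').toReal + b.toReal * (ν S).toReal := by
    rw [hexp] at hchain
    have h3 := mul_le_mul_of_nonneg_left hchain ha'.le
    have e : ∀ x y : ℝ, a.toReal * (x - b.toReal / a.toReal * y)
        = a.toReal * x - b.toReal * y := by
      intro x y
      field_simp
    rw [e, e] at h3
    linarith
  have hfin : ∀ (c : ℝ≥0∞) (m : Measure Ω) [IsFiniteMeasure m], c ≠ ⊤ → ∀ s : Set Ω,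
      c * m s ≠ ⊤ := fun c m _ hc s => ENNReal.mul_ne_top hc (measure_ne_top m s)
  rw [← ENNReal.toReal_le_toReal
    (ENNReal.add_ne_top.2 ⟨hfin a μ ha S, hfin b Q₂ hb A'⟩)
    (ENNReal.add_ne_top.2 ⟨hfin a P₂ ha A', hfin b ν hb S⟩),
    ENNReal.toReal_add (hfin a μ ha S) (hfin b Q₂ hb A'),
    ENNReal.toReal_add (hfin a P₂ ha A') (hfin b ν hb S),
    ENNReal.toReal_mul, ENNReal.toReal_mul, ENNReal.toReal_mul, ENNReal.toReal_mul]
  exact hreal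

end Aux

theorem adaptive_profile_domination
    {Ω₁ Ω₂ : Type*} [MeasurableSpace Ω₁] [MeasurableSpace Ω₂]
    (P₁ Q₁ : Measure Ω₁) [IsProbabilityMeasure P₁] [IsProbabilityMeasure Q₁]
    (κP κQ : Kernel Ω₁ Ω₂) [IsMarkovKernel κP] [IsMarkovKernel κQ]
    (P₂ Q₂ : Measure Ω₂) [IsProbabilityMeasure P₂] [IsProbabilityMeasure Q₂]
    (hdom : ∀ (ε : ℝ) (x : Ω₁), privProfile (κP x) (κQ x) ε ≤ privProfile P₂ Q₂ ε)
    (ε : ℝ) :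
    privProfile (P₁ ⊗ₘ κP) (Q₁ ⊗ₘ κQ) ε ≤ privProfile (P₁.prod P₂) (Q₁.prod Q₂) ε := by
  set c := Real.exp ε with hc
  set C : ℝ≥0∞ := ENNReal.ofReal c with hC
  have hCne : C ≠ ⊤ := ENNReal.ofReal_ne_top
  have hCtoReal : C.toReal = c := ENNReal.toReal_ofReal (Real.exp_pos ε).le
  set lam := P₁ + Q₁ with hlam
  set p₁ := P₁.rnDeriv lam with hp₁'
  set q₁ := Q₁.rnDeriv lam with hq₁'
  have hp₁ : Measurable p₁ := Measure.measurable_rnDeriv _ _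
  have hq₁ : Measurable q₁ := Measure.measurable_rnDeriv _ _
  set p₂ := P₂.rnDeriv (P₂ + Q₂) with hp₂'
  set q₂ := Q₂.rnDeriv (P₂ + Q₂) with hq₂'
  have hp₂ : Measurable p₂ := Measure.measurable_rnDeriv _ _
  have hq₂ : Measurable q₂ := Measure.measurable_rnDeriv _ _
  have hP₁ac : P₁ ≪ lam := Measure.absolutelyContinuous_of_le (Measure.le_add_right le_rfl)
  have hQ₁ac : Q₁ ≪ lam := Measure.absolutelyContinuous_of_le (Measure.le_add_left le_rfl)
  set T : Set (Ω₁ × Ω₂) := {z | (C * q₁ z.1) * q₂ z.2 < p₁ z.1 * p₂ z.2} with hTdef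
  have hT : MeasurableSet T :=
    measurableSet_lt
      (((hq₁.comp measurable_fst).const_mul C).mul (hq₂.comp measurable_snd))
      ((hp₁.comp measurable_fst).mul (hp₂.comp measurable_snd))
  -- the key inequality, for each measurable S
  have key : ∀ S : Set (Ω₁ × Ω₂), MeasurableSet S →
      (P₁ ⊗ₘ κP) S + C * (Q₁.prod Q₂) T ≤ (P₁.prod P₂) T + C * (Q₁ ⊗ₘ κQ) S := by
    intro S hS
    have m1 : Measurable fun x => p₁ x * κP x (Prod.mk x ⁻¹' S) :=
      hp₁.mul (Kernel.measurable_kernel_prodMk_left hS)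
    have m2 : Measurable fun x => q₁ x * Q₂ (Prod.mk x ⁻¹' T) :=
      hq₁.mul (measurable_measure_prodMk_left hT)
    have m3 : Measurable fun x => p₁ x * P₂ (Prod.mk x ⁻¹' T) :=
      hp₁.mul (measurable_measure_prodMk_left hT)
    have m4 : Measurable fun x => q₁ x * κQ x (Prod.mk x ⁻¹' S) :=
      hq₁.mul (Kernel.measurable_kernel_prodMk_left hS)
    have h1 : (P₁ ⊗ₘ κP) S = ∫⁻ x, p₁ x * κP x (Prod.mk x ⁻¹' S) ∂lam := by
      rw [Measure.compProd_apply hS,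
        ← lintegral_rnDeriv_mul hP₁ac (Kernel.measurable_kernel_prodMk_left hS).aemeasurable]
    have h2 : (Q₁.prod Q₂) T = ∫⁻ x, q₁ x * Q₂ (Prod.mk x ⁻¹' T) ∂lam := by
      rw [Measure.prod_apply hT,
        ← lintegral_rnDeriv_mul hQ₁ac (measurable_measure_prodMk_left hT).aemeasurable]
    have h3 : (P₁.prod P₂) T = ∫⁻ x, p₁ x * P₂ (Prod.mk x ⁻¹' T) ∂lam := by
      rw [Measure.prod_apply hT,
        ← lintegral_rnDeriv_mul hP₁ac (measurable_measure_prodMk_left hT).aemeasurable]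
    have h4 : (Q₁ ⊗ₘ κQ) S = ∫⁻ x, q₁ x * κQ x (Prod.mk x ⁻¹' S) ∂lam := by
      rw [Measure.compProd_apply hS,
        ← lintegral_rnDeriv_mul hQ₁ac (Kernel.measurable_kernel_prodMk_left hS).aemeasurable]
    rw [h1, h2, h3, h4, ← lintegral_const_mul C m2, ← lintegral_const_mul C m4,
      ← lintegral_add_left m1, ← lintegral_add_left m3]
    refine lintegral_mono_ae ?_
    filter_upwards [Measure.rnDeriv_lt_top P₁ lam, Measure.rnDeriv_lt_top Q₁ lam]
      with x hax hbx
    have hslice := slice_ineq (κP x) (κQ x) P₂ Q₂ (fun ε' => hdom ε' x)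
      (p₁ x) (C * q₁ x) hax.ne (ENNReal.mul_ne_top hCne hbx.ne)
      (S := Prod.mk x ⁻¹' S) (hS.preimage measurable_prodMk_left)
    have hTslice : Prod.mk x ⁻¹' T
        = {y | (C * q₁ x) * q₂ y < p₁ x * p₂ y} := rfl
    rw [← mul_assoc, ← mul_assoc, hTslice]
    exact hslice
  -- conclude
  refine privProfile_le _ _ ε fun S hS => ?_
  have hkey := key S hS
  have hfin : ∀ {m : Measure (Ω₁ × Ω₂)} [IsFiniteMeasure m] (s : Set (Ω₁ × Ω₂)),
      C * m s ≠ ⊤ := fun {m} _ s => ENNReal.mul_ne_top hCne (measure_ne_top m s)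
  have hreal : ((P₁ ⊗ₘ κP) S).toReal + c * ((Q₁.prod Q₂) T).toReal
      ≤ ((P₁.prod P₂) T).toReal + c * ((Q₁ ⊗ₘ κQ) S).toReal := by
    have := ENNReal.toReal_mono
      (ENNReal.add_ne_top.2 ⟨measure_ne_top _ T, hfin S⟩) hkey
    rw [ENNReal.toReal_add (measure_ne_top _ S) (hfin T),
      ENNReal.toReal_add (measure_ne_top _ T) (hfin S),
      ENNReal.toReal_mul, ENNReal.toReal_mul, hCtoReal] at this
    exact this
  have hstep : ((P₁ ⊗ₘ κP) S).toReal - c * ((Q₁ ⊗ₘ κQ) S).toReal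
      ≤ ((P₁.prod P₂) T).toReal - c * ((Q₁.prod Q₂) T).toReal := by linarith
  exact le_trans hstep (le_privProfile _ _ ε hT)
end

section
/- Fix ε ≥ 0 and δ ∈ [0,1]. Suppose probability measures P and Q on Ω satisfy (ε, δ)-differential privacy in both directions, i.e. δ_{P|Q}(ε) ≤ δ and δ_{Q|P}(ε) ≤ δ. Then for every t ∈ ℝ, both δ_{P|Q}(t) and δ_{Q|P}(t) are bounded above by δ_RR(t), the privacy profile of the randomized response mechanism M_RR^{ε,δ}, namely: δ if t > ε; 1 − (1−δ)(e^t + 1)/(e^ε + 1) if −ε < t ≤ ε; and 1 − e^t(1−δ) if t ≤ −ε. -/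
open MeasureTheory

lemma toReal_prob_le_one {Ω : Type*} [MeasurableSpace Ω] (P : Measure Ω)
    [IsProbabilityMeasure P] (S : Set Ω) : (P S).toReal ≤ 1 := by
  have h : P S ≤ 1 := prob_le_one
  have := ENNReal.toReal_mono (by simp) h
  simpa using this

lemma profile_ge {Ω : Type*} [MeasurableSpace Ω] (P Q : Measure Ω)
    [IsProbabilityMeasure P] (ε : ℝ) {S : Set Ω} (hS : MeasurableSet S) :
    (P S).toReal - Real.exp ε * (Q S).toReal ≤ privProfile P Q ε := by
  refine le_ciSup (f := fun S : {S : Set Ω // MeasurableSet S} =>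
    (P S.1).toReal - Real.exp ε * (Q S.1).toReal) ?_ ⟨S, hS⟩
  refine ⟨1, ?_⟩
  rintro x ⟨T, rfl⟩
  have h1 : (P T.1).toReal ≤ 1 := toReal_prob_le_one P T.1
  have h2 : 0 ≤ Real.exp ε * (Q T.1).toReal := by positivity
  simp only
  linarith

lemma compl_sum {Ω : Type*} [MeasurableSpace Ω] (P : Measure Ω)
    [IsProbabilityMeasure P] {S : Set Ω} (hS : MeasurableSet S) :
    (P S).toReal + (P Sᶜ).toReal = 1 := by
  rw [← ENNReal.toReal_add (measure_ne_top P S) (measure_ne_top P Sᶜ),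
    measure_add_measure_compl hS]
  simp

lemma key (ε δ t p q p' q' : ℝ) (hε : 0 ≤ ε)
    (hp' : 0 ≤ p') (hq : 0 ≤ q)
    (hpp : p + p' = 1) (hqq : q + q' = 1)
    (hA : p - Real.exp ε * q ≤ δ) (hB : q' - Real.exp ε * p' ≤ δ) :
    p - Real.exp t * q ≤
      (if ε < t then δ
       else if -ε < t then 1 - (1 - δ) * (Real.exp t + 1) / (Real.exp ε + 1)
       else 1 - Real.exp t * (1 - δ)) := by
  have hE1 : 1 ≤ Real.exp ε := Real.one_le_exp hε
  have hT : 0 < Real.exp t := Real.exp_pos t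
  have hET : Real.exp t * Real.exp ε = Real.exp (t + ε) := (Real.exp_add t ε).symm
  split_ifs with h1 h2
  · -- ε < t
    have hle : Real.exp ε ≤ Real.exp t := Real.exp_le_exp.2 h1.le
    nlinarith [mul_nonneg (sub_nonneg.2 hle) hq]
  · -- -ε < t ≤ ε
    have hεpos : 0 < ε := by linarith
    have hE : 1 < Real.exp ε := by
      have := Real.exp_lt_exp.2 hεpos
      simpa [Real.exp_zero] using this
    have hTE : 1 < Real.exp t * Real.exp ε := by
      rw [hET]
      have : (0:ℝ) < t + ε := by linarith
      have := Real.exp_lt_exp.2 this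
      simpa [Real.exp_zero] using this
    have hTleE : Real.exp t ≤ Real.exp ε := Real.exp_le_exp.2 (not_lt.1 h1)
    have hq' : q' = 1 - q := by linarith
    have hp2 : p' = 1 - p := by linarith
    subst hq' hp2
    set E := Real.exp ε with hEdef
    set T := Real.exp t with hTdef
    have h1' : 0 ≤ (T * E - 1) * (δ - (p - E * q)) :=
      mul_nonneg (by linarith) (by linarith)
    have h2' : 0 ≤ (E - T) * (δ - ((1 - q) - E * (1 - p))) :=
      mul_nonneg (by linarith) (by linarith)
    have hEp : 0 < E + 1 := by linarith
    have hD : (1 - δ) * (T + 1) / (E + 1) * (E + 1) = (1 - δ) * (T + 1) :=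
      div_mul_cancel₀ _ (ne_of_gt hEp)
    have hpos : 0 < (E - 1) * (E + 1) := by nlinarith
    rw [← sub_nonneg]
    have key2 : 0 ≤ (1 - (1 - δ) * (T + 1) / (E + 1) - (p - T * q)) * ((E - 1) * (E + 1)) := by
      nlinarith [h1', h2', hD]
    exact (mul_nonneg_iff_of_pos_right hpos).1 key2
  · -- t ≤ -ε
    have hTE : Real.exp t * Real.exp ε ≤ 1 := by
      rw [hET]
      have : t + ε ≤ 0 := by linarith
      have := Real.exp_le_exp.2 this
      simpa [Real.exp_zero] using this
    have hq' : q' = 1 - q := by linarith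
    have hp2 : p' = 1 - p := by linarith
    subst hq' hp2
    nlinarith [mul_nonneg hT.le (sub_nonneg.2 hB),
      mul_nonneg (sub_nonneg.2 hTE) hp']

lemma main_half {Ω : Type*} [MeasurableSpace Ω]
    (P Q : Measure Ω) [IsProbabilityMeasure P] [IsProbabilityMeasure Q]
    (ε δ : ℝ) (hε : 0 ≤ ε)
    (hPQ : privProfile P Q ε ≤ δ) (hQP : privProfile Q P ε ≤ δ) (t : ℝ) :
    privProfile P Q t ≤
      (if ε < t then δ
       else if -ε < t then 1 - (1 - δ) * (Real.exp t + 1) / (Real.exp ε + 1)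
       else 1 - Real.exp t * (1 - δ)) := by
  haveI : Nonempty {S : Set Ω // MeasurableSet S} := ⟨⟨∅, MeasurableSet.empty⟩⟩
  refine ciSup_le fun S => ?_
  have hA : (P S.1).toReal - Real.exp ε * (Q S.1).toReal ≤ δ :=
    (profile_ge P Q ε S.2).trans hPQ
  have hB : (Q S.1ᶜ).toReal - Real.exp ε * (P S.1ᶜ).toReal ≤ δ :=
    (profile_ge Q P ε S.2.compl).trans hQP
  exact key ε δ t (P S.1).toReal (Q S.1).toReal (P S.1ᶜ).toReal (Q S.1ᶜ).toReal hε
    ENNReal.toReal_nonneg ENNReal.toReal_nonneg (compl_sum P S.2) (compl_sum Q S.2) hA hB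

theorem rr_dominates_approx_dp {Ω : Type*} [MeasurableSpace Ω]
    (P Q : Measure Ω) [IsProbabilityMeasure P] [IsProbabilityMeasure Q]
    (ε δ : ℝ) (hε : 0 ≤ ε) (hδ : δ ∈ Set.Icc (0 : ℝ) 1)
    (hPQ : privProfile P Q ε ≤ δ) (hQP : privProfile Q P ε ≤ δ) (t : ℝ) :
    privProfile P Q t ≤
      (if ε < t then δ
       else if -ε < t then 1 - (1 - δ) * (Real.exp t + 1) / (Real.exp ε + 1)
       else 1 - Real.exp t * (1 - δ)) ∧
    privProfile Q P t ≤
      (if ε < t then δ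
       else if -ε < t then 1 - (1 - δ) * (Real.exp t + 1) / (Real.exp ε + 1)
       else 1 - Real.exp t * (1 - δ)) := by
  exact ⟨main_half P Q ε δ hε hPQ hQP t, main_half Q P ε δ hε hQP hPQ t⟩
end

section
/- Fix ε ≥ 0, δ ∈ [0,1], and k ≥ 1. Let δ^{⊗0}(t) := max(0, 1 − e^t) and recursively δ^{⊗l}(t) := δ + ((1−δ)/(e^{ε}+1)) · [ e^{ε} · δ^{⊗(l−1)}(t − ε) + δ^{⊗(l−1)}(t + ε) ]. Then for every t ∈ ℝ, δ^{⊗k}(t) = 1 − (1−δ)^k · ( 1 − E_{Y ∼ Binomial(k, e^ε/(1+e^ε))}[ max(0, 1 − e^{t − ε(2Y − k)}) ] ). -/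
/-- The recursively composed privacy-profile bound `δ^{⊗l}`, where the `l`-fold bound
uses the parameters `ε (l-1), δ (l-1)` of the last mechanism (0-indexed). -/
noncomputable def composedBound (ε δ : ℕ → ℝ) : ℕ → ℝ → ℝ
  | 0, t => max 0 (1 - Real.exp t)
  | l + 1, t =>
      δ l + ((1 - δ l) / (Real.exp (ε l) + 1)) *
        (Real.exp (ε l) * composedBound ε δ l (t - ε l) + composedBound ε δ l (t + ε l))

lemma conv_sum (p q : ℝ) (k : ℕ) (f : ℕ → ℝ) :
    p * ∑ y ∈ Finset.range (k+1), (k.choose y : ℝ) * p^y * q^(k-y) * f (y+1)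
  + q * ∑ y ∈ Finset.range (k+1), (k.choose y : ℝ) * p^y * q^(k-y) * f y
  = ∑ y ∈ Finset.range (k+2), ((k+1).choose y : ℝ) * p^y * q^(k+1-y) * f y := by
  rw [Finset.mul_sum, Finset.mul_sum,
      Finset.sum_range_succ' (fun y => ((k+1).choose y : ℝ) * p^y * q^(k+1-y) * f y) (k+1)]
  have h1 : ∀ y ∈ Finset.range (k+1),
      ((k+1).choose (y+1) : ℝ) * p^(y+1) * q^(k+1-(y+1)) * f (y+1)
      = (k.choose y : ℝ) * p^(y+1) * q^(k-y) * f (y+1)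
        + (k.choose (y+1) : ℝ) * p^(y+1) * q^(k-y) * f (y+1) := by
    intro y _
    rw [Nat.choose_succ_succ, Nat.succ_sub_succ]
    push_cast; ring
  rw [Finset.sum_congr rfl h1, Finset.sum_add_distrib]
  have h2 : ∑ y ∈ Finset.range (k+1), q * ((k.choose y : ℝ) * p^y * q^(k-y) * f y)
      = (∑ y ∈ Finset.range (k+1), (k.choose (y+1) : ℝ) * p^(y+1) * q^(k-y) * f (y+1))
        + ((k+1).choose 0 : ℝ) * p^0 * q^(k+1-0) * f 0 := by
    rw [Finset.sum_range_succ
        (fun y => (k.choose (y+1) : ℝ) * p^(y+1) * q^(k-y) * f (y+1)) k,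
        Finset.sum_range_succ' (fun y => q * ((k.choose y : ℝ) * p^y * q^(k-y) * f y)) k]
    have h3 : ∀ y ∈ Finset.range k,
        q * ((k.choose (y+1) : ℝ) * p^(y+1) * q^(k-(y+1)) * f (y+1))
        = (k.choose (y+1) : ℝ) * p^(y+1) * q^(k-y) * f (y+1) := by
      intro y hy
      have hy' : y < k := Finset.mem_range.mp hy
      have : k - y = (k - (y+1)) + 1 := by omega
      rw [this, pow_succ]; ring
    rw [Finset.sum_congr rfl h3]
    simp [Nat.choose_succ_self, pow_succ]
    ring
  rw [h2]
  have h4 : ∀ y ∈ Finset.range (k+1),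
      p * ((k.choose y : ℝ) * p^y * q^(k-y) * f (y+1))
      = (k.choose y : ℝ) * p^(y+1) * q^(k-y) * f (y+1) := by
    intro y _; rw [pow_succ]; ring
  rw [Finset.sum_congr rfl h4]
  ring

lemma composed_aux (ε δ : ℝ) (k : ℕ) (t : ℝ) :
    composedBound (fun _ => ε) (fun _ => δ) k t
      = 1 - (1 - δ) ^ k *
          (1 - ∑ y ∈ Finset.range (k + 1),
            (k.choose y : ℝ) * (Real.exp ε / (1 + Real.exp ε)) ^ y
              * (1 - Real.exp ε / (1 + Real.exp ε)) ^ (k - y)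
              * max 0 (1 - Real.exp (t - ε * (2 * (y : ℝ) - (k : ℝ))))) := by
  induction k generalizing t with
  | zero => simp [composedBound]
  | succ k ih =>
    have hE : (1 : ℝ) + Real.exp ε ≠ 0 := by positivity
    have hE' : Real.exp ε + 1 ≠ 0 := by positivity
    set p : ℝ := Real.exp ε / (1 + Real.exp ε) with hp
    set q : ℝ := 1 - p with hq
    have hSa : ∑ y ∈ Finset.range (k + 1),
        (k.choose y : ℝ) * p ^ y * q ^ (k - y)
          * max 0 (1 - Real.exp ((t - ε) - ε * (2 * (y : ℝ) - (k : ℝ))))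
        = ∑ y ∈ Finset.range (k + 1), (k.choose y : ℝ) * p ^ y * q ^ (k - y)
          * max 0 (1 - Real.exp (t - ε * (2 * ((y+1 : ℕ) : ℝ) - ((k+1 : ℕ) : ℝ)))) := by
      apply Finset.sum_congr rfl
      intro y _
      congr 2
      push_cast
      ring_nf
    have hSb : ∑ y ∈ Finset.range (k + 1),
        (k.choose y : ℝ) * p ^ y * q ^ (k - y)
          * max 0 (1 - Real.exp ((t + ε) - ε * (2 * (y : ℝ) - (k : ℝ))))
        = ∑ y ∈ Finset.range (k + 1), (k.choose y : ℝ) * p ^ y * q ^ (k - y)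
          * max 0 (1 - Real.exp (t - ε * (2 * (y : ℝ) - ((k+1 : ℕ) : ℝ)))) := by
      apply Finset.sum_congr rfl
      intro y _
      congr 2
      push_cast
      ring_nf
    have hconv := conv_sum p q k
      (fun y => max 0 (1 - Real.exp (t - ε * (2 * (y : ℝ) - ((k+1 : ℕ) : ℝ)))))
    simp only [composedBound, ih]
    rw [hSa, hSb]
    rw [show k + 1 + 1 = k + 2 from rfl]
    rw [← hconv]
    have hpmul : Real.exp ε = p * (1 + Real.exp ε) := by
      rw [hp, div_mul_cancel₀ _ hE]
    have hqmul : (1 : ℝ) = q * (1 + Real.exp ε) := by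
      rw [hq, hp]; field_simp; ring
    set Sa := ∑ y ∈ Finset.range (k + 1), (k.choose y : ℝ) * p ^ y * q ^ (k - y)
          * max 0 (1 - Real.exp (t - ε * (2 * ((y+1 : ℕ) : ℝ) - ((k+1 : ℕ) : ℝ))))
    set Sb := ∑ y ∈ Finset.range (k + 1), (k.choose y : ℝ) * p ^ y * q ^ (k - y)
          * max 0 (1 - Real.exp (t - ε * (2 * (y : ℝ) - ((k+1 : ℕ) : ℝ))))
    have hpq : p + q = 1 := by rw [hq]; ring
    have hfac : ∀ A B : ℝ, (1 - δ) / (Real.exp ε + 1) * (Real.exp ε * A + B)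
        = (1 - δ) * (p * A + q * B) := by
      intro A B; rw [hq, hp]; field_simp; ring
    rw [hfac]
    linear_combination ((1 - δ) - (1 - δ) ^ (k + 1)) * hpq

theorem composed_bound_closed_form (ε δ : ℝ) (hε : 0 ≤ ε) (hδ : δ ∈ Set.Icc (0 : ℝ) 1)
    (k : ℕ) (hk : 1 ≤ k) (t : ℝ) :
    composedBound (fun _ => ε) (fun _ => δ) k t
      = 1 - (1 - δ) ^ k *
          (1 - ∑ y ∈ Finset.range (k + 1),
            (k.choose y : ℝ) * (Real.exp ε / (1 + Real.exp ε)) ^ y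
              * (1 - Real.exp ε / (1 + Real.exp ε)) ^ (k - y)
              * max 0 (1 - Real.exp (t - ε * (2 * (y : ℝ) - (k : ℝ))))) := by
  exact composed_aux ε δ k t
end
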